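/- arXiv:1309.4826 — 5 statements merged into one kernel-verified Lean document; each statement's English description precedes it below -/
import Mathlib

section
/- Let f = A_2 x^2 + A_1 x + A_0 be an integer polynomial with A_0 A_1 A_2 ≠ 0 that satisfies Dumas's criterion for some prime p (i.e., the Newton diagram of f with respect to p is a single segment with no interior lattice points). Then the coefficients A_0, A_1, A_2 are not pairwise coprime: gcd(A_j, A_k) ≠ 1 for some distinct j, k ∈ {0,1,2}. -/
open Filter Polynomial Topology

/-- The `p`-adic valuation of an integer, as an integer. -/
noncomputable def vp (p : ℕ) (m : ℤ) : ℤ := (padicValInt p m : ℤ)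

/-- Dumas's criterion for `∑ A i * X^i` (degree `n`) with respect to `p`: the Newton diagram
is a single segment from `(0, v_p(A 0))` to `(n, v_p(A n))` containing no lattice points other
than its endpoints; i.e. all middle points `(i, v_p(A i))` lie on or above the line through the
endpoints, and the open segment contains no lattice point. -/
def DumasAt (p n : ℕ) (A : ℕ → ℤ) : Prop :=
  A 0 ≠ 0 ∧ A n ≠ 0 ∧
  (∀ i : ℕ, 0 < i → i < n → A i ≠ 0 →
    (n : ℤ) * vp p (A i) ≥ ((n : ℤ) - (i : ℤ)) * vp p (A 0) + (i : ℤ) * vp p (A n)) ∧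
  ¬ ∃ x y : ℤ, 0 < x ∧ x < (n : ℤ) ∧
    (n : ℤ) * y = ((n : ℤ) - x) * vp p (A 0) + x * vp p (A n)

/-- The Riemann zeta function at a natural number argument, `ζ(k) = ∑_{m ≥ 1} 1/m^k`. -/
noncomputable def zetaR (k : ℕ) : ℝ := ∑' m : ℕ, (1 : ℝ) / ((m : ℝ) + 1) ^ k

/-- The product `∏_p (1 - 1/p)^2 (1 + 2/p)` over all primes. -/
noncomputable def primeProd : ℝ :=
  ∏' p : Nat.Primes, (1 - 1 / ((p : ℕ) : ℝ)) ^ 2 * (1 + 2 / ((p : ℕ) : ℝ))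

/-- `Dcount n H`: number of degree-`n` integer polynomials of height at most `H`
satisfying Dumas's criterion with respect to some prime. -/
noncomputable def Dcount (n H : ℕ) : ℕ :=
  Set.ncard {A : ℕ → ℤ | A n ≠ 0 ∧ (∀ i, (A i).natAbs ≤ H) ∧ (∀ i, n < i → A i = 0) ∧
    ∃ p : ℕ, p.Prime ∧ DumasAt p n A}

/-- `Pcount n H`: number of degree-`n` integer polynomials of height at most `H`. -/
noncomputable def Pcount (n H : ℕ) : ℕ :=
  Set.ncard {A : ℕ → ℤ | A n ≠ 0 ∧ (∀ i, (A i).natAbs ≤ H) ∧ (∀ i, n < i → A i = 0)}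
theorem stmt_1 (A : ℕ → ℤ) (h : A 0 * A 1 * A 2 ≠ 0) (p : ℕ) (hp : p.Prime)
    (hd : DumasAt p 2 A) :
    ¬ (Int.gcd (A 0) (A 1) = 1 ∧ Int.gcd (A 0) (A 2) = 1 ∧ Int.gcd (A 1) (A 2) = 1) := by
  haveI : Fact p.Prime := ⟨hp⟩
  obtain ⟨h0, h2, hmid, hlat⟩ := hd
  have hA1 : A 1 ≠ 0 := fun e => h (by rw [e]; ring)
  have hodd : ¬ (2 : ℤ) ∣ (vp p (A 0) + vp p (A 2)) := by
    rintro ⟨y, hy⟩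
    exact hlat ⟨1, y, one_pos, by norm_num, by push_cast; linarith⟩
  have h0n : 0 ≤ vp p (A 0) := Int.natCast_nonneg _
  have h2n : 0 ≤ vp p (A 2) := Int.natCast_nonneg _
  have hsum : 1 ≤ vp p (A 0) + vp p (A 2) := by
    rcases lt_or_eq_of_le (by linarith : (0:ℤ) ≤ vp p (A 0) + vp p (A 2)) with hlt | heq
    · linarith
    · exact absurd ⟨0, by linarith⟩ hodd
  have hm := hmid 1 one_pos one_lt_two hA1
  have hv1 : 1 ≤ vp p (A 1) := by push_cast at hm; linarith
  have hdvd1 : (p : ℤ) ∣ A 1 := by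
    by_contra hnd
    have := padicValInt.eq_zero_of_not_dvd hnd
    simp only [vp, this] at hv1; norm_num at hv1
  have key : ∀ m : ℤ, 1 ≤ vp p m → (p : ℤ) ∣ m := by
    intro m hm'
    by_contra hnd
    have := padicValInt.eq_zero_of_not_dvd hnd
    simp only [vp, this] at hm'; norm_num at hm'
  rintro ⟨g01, g02, g12⟩
  rcases (by rcases lt_or_eq_of_le h0n with h | h
             · exact Or.inl (key _ h)
             · rcases lt_or_eq_of_le h2n with h' | h'
               · exact Or.inr (key _ h')
               · exact absurd ⟨0, by linarith⟩ hodd : (p:ℤ) ∣ A 0 ∨ (p:ℤ) ∣ A 2) with hd0 | hd2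
  · have : (p : ℤ) ∣ Int.gcd (A 0) (A 1) := Int.dvd_coe_gcd hd0 hdvd1
    rw [g01] at this
    exact hp.one_lt.ne' (by exact_mod_cast Int.eq_one_of_dvd_one (by positivity) this)
  · have : (p : ℤ) ∣ Int.gcd (A 1) (A 2) := Int.dvd_coe_gcd hdvd1 hd2
    rw [g12] at this
    exact hp.one_lt.ne' (by exact_mod_cast Int.eq_one_of_dvd_one (by positivity) this)
end

section
/- The number of triples (A_0, A_1, A_2) of integers with 1 ≤ A_0, A_1, A_2 ≤ H that are pairwise coprime equals H^3 · ∏_p (1 − 1/p)^2 (1 + 2/p) + O(H^2 (log H)^2), where the product runs over all primes. -/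
open Filter Polynomial Topology

namespace SA
open Filter Topology Finset ArithmeticFunction

noncomputable def mu' (e : ℕ) : ℝ := (ArithmeticFunction.moebius e : ℝ)

@[simp] lemma mu'_zero : mu' 0 = 0 := by simp [mu']
@[simp] lemma mu'_one : mu' 1 = 1 := by simp [mu']
lemma mu'_abs_le (e : ℕ) : |mu' e| ≤ 1 := by
  simp only [mu', ← Int.cast_abs]
  exact_mod_cast abs_moebius_le_one

lemma mu'_mul {m n : ℕ} (h : Nat.Coprime m n) : mu' (m * n) = mu' m * mu' n := by
  simp only [mu']
  rw [isMultiplicative_moebius.map_mul_of_coprime h]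
  push_cast; ring

lemma mu'_prime {p : ℕ} (hp : p.Prime) : mu' p = -1 := by
  simp [mu', moebius_apply_prime hp]

lemma mu'_prime_pow {p k : ℕ} (hp : p.Prime) (hk : 2 ≤ k) : mu' (p ^ k) = 0 := by
  simp only [mu', moebius_apply_prime_pow hp (by omega : k ≠ 0)]
  rw [if_neg (by omega)]; simp

noncomputable def gg (m : ℕ) : ℝ := ∏ p ∈ m.primeFactors, (1 - (p : ℝ)⁻¹)
noncomputable def hh (m : ℕ) : ℝ := ∏ p ∈ m.primeFactors, (1 - ((p : ℝ) ^ 2)⁻¹)⁻¹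

lemma two_le_cast_of_mem_primeFactors {m p : ℕ} (hp : p ∈ m.primeFactors) : (2:ℝ) ≤ p := by
  exact_mod_cast (Nat.prime_of_mem_primeFactors hp).two_le

lemma gg_nonneg (m : ℕ) : 0 ≤ gg m := by
  refine Finset.prod_nonneg fun p hp => ?_
  have h2 := two_le_cast_of_mem_primeFactors hp
  have : (p:ℝ)⁻¹ ≤ 1 := by
    rw [inv_le_one_iff₀]; right; linarith
  linarith

lemma gg_le_one (m : ℕ) : gg m ≤ 1 := by
  refine Finset.prod_le_one (fun p hp => ?_) (fun p hp => ?_)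
  · have h2 := two_le_cast_of_mem_primeFactors hp
    have : (p:ℝ)⁻¹ ≤ 1 := by rw [inv_le_one_iff₀]; right; linarith
    linarith
  · have h2 := two_le_cast_of_mem_primeFactors hp
    have : 0 < (p:ℝ)⁻¹ := by positivity
    linarith

lemma sq_factor_lt_one {p : ℕ} (h2 : (2:ℝ) ≤ p) : ((p:ℝ)^2)⁻¹ < 1 := by
  rw [inv_lt_one_iff₀]; right; nlinarith

lemma sq_factor_pos {p : ℕ} (h2 : (2:ℝ) ≤ p) : 0 < 1 - ((p:ℝ)^2)⁻¹ :=
  sub_pos.mpr (sq_factor_lt_one h2)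

lemma hh_nonneg (m : ℕ) : 0 ≤ hh m := by
  refine Finset.prod_nonneg fun p hp => ?_
  have := sq_factor_pos (two_le_cast_of_mem_primeFactors hp)
  positivity

lemma inv_le_one_of_two_le {p : ℕ} (h2 : (2:ℝ) ≤ p) : (p:ℝ)⁻¹ ≤ 1 := by
  rw [inv_le_one_iff₀]; right; linarith

lemma sq_inv_le_inv {p : ℕ} (h2 : (2:ℝ) ≤ p) : ((p:ℝ)^2)⁻¹ ≤ (p:ℝ)⁻¹ := by
  have hp0 : (0:ℝ) < p := by linarith
  rw [inv_le_inv₀ (by positivity) hp0]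
  nlinarith

lemma gg_hh_le_one (m : ℕ) : gg m * hh m ≤ 1 := by
  rw [gg, hh, ← Finset.prod_mul_distrib]
  refine Finset.prod_le_one (fun p hp => ?_) (fun p hp => ?_)
  · have h2 := two_le_cast_of_mem_primeFactors hp
    have h1 := inv_le_one_of_two_le h2
    have hs := sq_factor_pos h2
    have : (0:ℝ) ≤ 1 - (p:ℝ)⁻¹ := by linarith
    positivity
  · have h2 := two_le_cast_of_mem_primeFactors hp
    have hs := sq_factor_pos h2
    rw [← div_eq_mul_inv, div_le_one hs]
    have := sq_inv_le_inv h2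
    linarith

lemma gg_mul_coprime {a b : ℕ} (ha : a ≠ 0) (hb : b ≠ 0) (h : Nat.Coprime a b) :
    gg (a * b) = gg a * gg b := by
  rw [gg, gg, gg, Nat.primeFactors_mul ha hb,
    Finset.prod_union (Nat.Coprime.disjoint_primeFactors h)]

lemma hh_mul_coprime {a b : ℕ} (ha : a ≠ 0) (hb : b ≠ 0) (h : Nat.Coprime a b) :
    hh (a * b) = hh a * hh b := by
  rw [hh, hh, hh, Nat.primeFactors_mul ha hb,
    Finset.prod_union (Nat.Coprime.disjoint_primeFactors h)]

/-- Workhorse: divisor sum of a multiplicative function vanishing at higher prime powers. -/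
lemma divisor_sum_eq_prod (f : ArithmeticFunction ℝ) (hf : f.IsMultiplicative)
    (hsq : ∀ p k, p.Prime → 2 ≤ k → f (p ^ k) = 0) {m : ℕ} (hm : m ≠ 0) :
    ∑ e ∈ m.divisors, f e = ∏ p ∈ m.primeFactors, (1 + f p) := by
  have h2 : (f * ArithmeticFunction.zeta).IsMultiplicative := hf.mul isMultiplicative_zeta.natCast
  have key : (f * (ArithmeticFunction.zeta : ArithmeticFunction ℕ)) m = ∑ e ∈ m.divisors, f e :=
    coe_mul_zeta_apply
  rw [← key, h2.multiplicative_factorization _ hm, Finsupp.prod]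
  rw [show (m.factorization).support = m.primeFactors from Nat.support_factorization m]
  refine Finset.prod_congr rfl fun p hp => ?_
  have hp' : p.Prime := Nat.prime_of_mem_primeFactors hp
  have hk : m.factorization p ≠ 0 := by
    have := (Nat.mem_primeFactors.mp hp)
    have hpos : 0 < m.factorization p := hp'.factorization_pos_of_dvd hm this.2.1
    omega
  set k := m.factorization p with hkdef
  have : (f * (ArithmeticFunction.zeta : ArithmeticFunction ℕ)) (p ^ k) = ∑ e ∈ (p ^ k).divisors, f e :=
    coe_mul_zeta_apply
  rw [this, Nat.sum_divisors_prime_pow hp']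
  have hsub : ({0, 1} : Finset ℕ) ⊆ Finset.range (k + 1) := by
    intro x hx; simp at hx; rcases hx with rfl | rfl <;> simp <;> omega
  rw [← Finset.sum_subset hsub (fun x hx hx2 => ?_)]
  · rw [Finset.sum_pair (by norm_num : (0:ℕ) ≠ 1), pow_zero, pow_one, hf.map_one]
  · have : 2 ≤ x := by simp at hx2; omega
    exact hsq p x hp' this

noncomputable def fdA (d : ℕ) : ArithmeticFunction ℝ :=
  ⟨fun e => if Nat.gcd e d = 1 then mu' e / e else 0, by simp⟩

lemma fdA_apply (d e : ℕ) : fdA d e = if Nat.gcd e d = 1 then mu' e / e else 0 := rfl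

lemma fdA_mult (d : ℕ) : (fdA d).IsMultiplicative := by
  constructor
  · simp [fdA_apply]
  · intro m n hmn
    simp only [fdA_apply]
    have hiff : (m * n).gcd d = 1 ↔ (m.gcd d = 1 ∧ n.gcd d = 1) := Nat.coprime_mul_iff_left
    by_cases h1 : m.gcd d = 1 <;> by_cases h2 : n.gcd d = 1
    · rw [if_pos (hiff.mpr ⟨h1, h2⟩), if_pos h1, if_pos h2, mu'_mul hmn]
      push_cast; field_simp
    · rw [if_neg fun h => h2 (hiff.mp h).2, if_pos h1, if_neg h2, mul_zero]
    · rw [if_neg fun h => h1 (hiff.mp h).1, if_neg h1, zero_mul]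
    · rw [if_neg fun h => h1 (hiff.mp h).1, if_neg h1, zero_mul]

lemma fdA_prime_pow (d p k : ℕ) (hp : p.Prime) (hk : 2 ≤ k) : fdA d (p ^ k) = 0 := by
  rw [fdA_apply, mu'_prime_pow hp hk]
  simp

lemma sum_fd (d : ℕ) {m : ℕ} (hm : m ≠ 0) :
    ∑ e ∈ m.divisors, (if Nat.gcd e d = 1 then mu' e / e else 0)
      = ∏ p ∈ m.primeFactors, (if p ∣ d then 1 else (1 - (p:ℝ)⁻¹)) := by
  have := divisor_sum_eq_prod (fdA d) (fdA_mult d) (fun p k hp hk => fdA_prime_pow d p k hp hk) hm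
  simp only [fdA_apply] at this
  rw [this]
  refine Finset.prod_congr rfl fun p hp => ?_
  have hp' : p.Prime := Nat.prime_of_mem_primeFactors hp
  by_cases hpd : p ∣ d
  · rw [if_pos hpd, if_neg, add_zero]
    rw [Nat.gcd_eq_left hpd]
    exact hp'.ne_one
  · rw [if_neg hpd, if_pos (hp'.coprime_iff_not_dvd.mpr hpd), mu'_prime hp']
    ring

lemma gg_eq_sum {m : ℕ} (hm : m ≠ 0) : ∑ e ∈ m.divisors, mu' e / e = gg m := by
  have h := sum_fd 1 hm
  rw [show (∑ e ∈ m.divisors, (if Nat.gcd e 1 = 1 then mu' e / e else 0))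
      = ∑ e ∈ m.divisors, mu' e / e from
    Finset.sum_congr rfl fun e he => by rw [if_pos (Nat.gcd_one_right e)]] at h
  rw [h, gg]
  refine Finset.prod_congr rfl fun p hp => ?_
  rw [if_neg fun hd => (Nat.prime_of_mem_primeFactors hp).ne_one (Nat.dvd_one.mp hd)]

noncomputable def dwA : ArithmeticFunction ℝ := ⟨fun e => |mu' e|, by simp⟩

lemma dwA_mult : dwA.IsMultiplicative := by
  constructor
  · show |mu' 1| = 1; simp
  · intro m n hmn
    show |mu' (m*n)| = |mu' m| * |mu' n|
    rw [mu'_mul hmn, abs_mul]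

noncomputable def Dw (m : ℕ) : ℝ := ∑ e ∈ m.divisors, |mu' e|

lemma Dw_eq {m : ℕ} (hm : m ≠ 0) : Dw m = 2 ^ m.primeFactors.card := by
  have := divisor_sum_eq_prod dwA dwA_mult (fun p k hp hk => by
    show |mu' (p ^ k)| = 0; rw [mu'_prime_pow hp hk, abs_zero]) hm
  rw [Dw, show (∑ e ∈ m.divisors, |mu' e|) = ∑ e ∈ m.divisors, dwA e from rfl, this]
  rw [Finset.prod_congr rfl (fun p hp => by
    show 1 + |mu' p| = 2
    rw [mu'_prime (Nat.prime_of_mem_primeFactors hp)]; norm_num), Finset.prod_const]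

lemma Dw_nonneg (m : ℕ) : 0 ≤ Dw m := Finset.sum_nonneg fun e _ => abs_nonneg _

lemma Dw_mul_le {a b : ℕ} (ha : a ≠ 0) (hb : b ≠ 0) : Dw (a * b) ≤ Dw a * Dw b := by
  rw [Dw_eq (Nat.mul_ne_zero ha hb), Dw_eq ha, Dw_eq hb, ← pow_add]
  refine pow_le_pow_right₀ one_le_two ?_
  rw [Nat.primeFactors_mul ha hb]
  exact Finset.card_union_le _ _

noncomputable def wdv (d e : ℕ) : ℝ := if Nat.gcd e d = 1 then mu' e / (e:ℝ)^2 else 0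

@[simp] lemma wdv_zero (d : ℕ) : wdv d 0 = 0 := by simp [wdv]
@[simp] lemma wdv_one (d : ℕ) : wdv d 1 = 1 := by simp [wdv]

lemma wdv_mul (d : ℕ) {m n : ℕ} (hmn : Nat.Coprime m n) :
    wdv d (m * n) = wdv d m * wdv d n := by
  simp only [wdv]
  have hiff : (m * n).gcd d = 1 ↔ (m.gcd d = 1 ∧ n.gcd d = 1) := Nat.coprime_mul_iff_left
  by_cases h1 : m.gcd d = 1 <;> by_cases h2 : n.gcd d = 1
  · rw [if_pos (hiff.mpr ⟨h1, h2⟩), if_pos h1, if_pos h2, mu'_mul hmn]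
    push_cast; field_simp
  · rw [if_neg fun h => h2 (hiff.mp h).2, if_pos h1, if_neg h2, mul_zero]
  · rw [if_neg fun h => h1 (hiff.mp h).1, if_neg h1, zero_mul]
  · rw [if_neg fun h => h1 (hiff.mp h).1, if_neg h1, zero_mul]

lemma wdv_abs_le (d e : ℕ) : ‖wdv d e‖ ≤ ((e:ℝ)^2)⁻¹ := by
  rcases Nat.eq_zero_or_pos e with rfl | he
  · simp
  · have he' : (0:ℝ) < (e:ℝ)^2 := by positivity
    rw [Real.norm_eq_abs, wdv]
    split_ifs with h
    · rw [abs_div, abs_of_nonneg he'.le, div_le_iff₀ he', inv_mul_cancel₀ he'.ne']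
      exact mu'_abs_le e
    · rw [abs_zero]; positivity

lemma summable_sq_inv : Summable (fun e : ℕ => ((e:ℝ)^2)⁻¹) := by
  have := Real.summable_one_div_nat_pow.mpr (by norm_num : 1 < 2)
  simpa [one_div] using this

lemma wdv_summable (d : ℕ) : Summable (fun e => ‖wdv d e‖) :=
  Summable.of_nonneg_of_le (fun e => norm_nonneg _) (wdv_abs_le d) summable_sq_inv

noncomputable def cc (d : ℕ) : ℝ := ∑' e, wdv d e
noncomputable def Zc : ℝ := cc 1

lemma wdv_prime_pow_high (d p b : ℕ) (hp : p.Prime) (hb : 2 ≤ b) : wdv d (p ^ b) = 0 := by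
  rw [wdv, mu'_prime_pow hp hb]
  split_ifs <;> simp

lemma cc_hasProd (d : ℕ) :
    HasProd (fun p : Nat.Primes => if (p:ℕ) ∣ d then 1 else 1 - (((p:ℕ):ℝ)^2)⁻¹) (cc d) := by
  have h := EulerProduct.eulerProduct_hasProd (f := wdv d) (wdv_one d)
    (fun {m n} hc => wdv_mul d hc) (wdv_summable d) (wdv_zero d)
  have heq : (fun p : Nat.Primes => ∑' e : ℕ, wdv d ((p:ℕ) ^ e))
      = fun p : Nat.Primes => if (p:ℕ) ∣ d then 1 else 1 - (((p:ℕ):ℝ)^2)⁻¹ := by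
    funext p
    have hp : ((p:ℕ)).Prime := p.prop
    rw [tsum_eq_sum (s := ({0, 1} : Finset ℕ))
      (fun b hb => wdv_prime_pow_high d (p:ℕ) b hp (by simp only [Finset.mem_insert, Finset.mem_singleton] at hb; omega))]
    · rw [Finset.sum_pair (by norm_num : (0:ℕ) ≠ 1), pow_zero, wdv_one, pow_one, wdv]
      by_cases hpd : (p:ℕ) ∣ d
      · rw [if_pos hpd, if_neg (by rw [Nat.gcd_eq_left hpd]; exact hp.ne_one), add_zero]
      · rw [if_neg hpd, if_pos (hp.coprime_iff_not_dvd.mpr hpd), mu'_prime hp]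
        ring
  rw [heq] at h
  exact h

lemma cc_eq {d : ℕ} (hd : d ≠ 0) : cc d = Zc * hh d := by
  classical
  have hZ : HasProd (fun p : Nat.Primes => 1 - (((p:ℕ):ℝ)^2)⁻¹) Zc := by
    have h := cc_hasProd 1
    have heq : (fun p : Nat.Primes => if (p:ℕ) ∣ 1 then 1 else 1 - (((p:ℕ):ℝ)^2)⁻¹)
        = fun p : Nat.Primes => 1 - (((p:ℕ):ℝ)^2)⁻¹ := by
      funext p
      rw [if_neg fun hdvd => p.prop.ne_one (Nat.dvd_one.mp hdvd)]
    rwa [heq] at h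
  set emb : {p // p ∈ d.primeFactors} ↪ Nat.Primes :=
    ⟨fun q => ⟨q.1, Nat.prime_of_mem_primeFactors q.2⟩,
     fun a b h => Subtype.ext (Subtype.mk_eq_mk.mp h)⟩ with hemb
  set s : Finset Nat.Primes := d.primeFactors.attach.map emb with hs
  have hmem : ∀ p : Nat.Primes, p ∈ s ↔ (p:ℕ) ∣ d := by
    intro p
    constructor
    · intro hp
      rw [hs, Finset.mem_map] at hp
      obtain ⟨q, _, hq⟩ := hp
      have : (q : ℕ) ∣ d := Nat.dvd_of_mem_primeFactors q.2
      rw [← hq] at *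
      exact this
    · intro hpd
      rw [hs, Finset.mem_map]
      refine ⟨⟨(p:ℕ), Nat.mem_primeFactors.mpr ⟨p.prop, hpd, hd⟩⟩, Finset.mem_attach _ _, ?_⟩
      rfl
  have hfin : HasProd (fun p : Nat.Primes => if (p:ℕ) ∣ d then (1 - (((p:ℕ):ℝ)^2)⁻¹)⁻¹ else 1)
      (∏ p ∈ s, if (p:ℕ) ∣ d then (1 - (((p:ℕ):ℝ)^2)⁻¹)⁻¹ else 1) :=
    hasProd_prod_of_ne_finset_one (fun p hp => if_neg (fun h => hp ((hmem p).mpr h)))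
  have hmul := hZ.mul hfin
  have hpt : (fun p : Nat.Primes => (1 - (((p:ℕ):ℝ)^2)⁻¹) *
        (if (p:ℕ) ∣ d then (1 - (((p:ℕ):ℝ)^2)⁻¹)⁻¹ else 1))
      = fun p : Nat.Primes => if (p:ℕ) ∣ d then 1 else 1 - (((p:ℕ):ℝ)^2)⁻¹ := by
    funext p
    have h2 : (2:ℝ) ≤ ((p:ℕ):ℝ) := by exact_mod_cast p.prop.two_le
    by_cases hpd : (p:ℕ) ∣ d
    · rw [if_pos hpd, if_pos hpd, mul_inv_cancel₀ (sq_factor_pos h2).ne']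
    · rw [if_neg hpd, if_neg hpd, mul_one]
  rw [hpt] at hmul
  rw [(cc_hasProd d).unique hmul]
  have hsprod : (∏ p ∈ s, (if (p:ℕ) ∣ d then (1 - (((p:ℕ):ℝ)^2)⁻¹)⁻¹ else 1)) = hh d := by
    rw [hs, Finset.prod_map, hh,
      ← Finset.prod_attach d.primeFactors (fun p => (1 - ((p:ℝ)^2)⁻¹)⁻¹)]
    refine Finset.prod_congr rfl fun q _ => ?_
    simp only [hemb, Function.Embedding.coeFn_mk]
    exact if_pos (Nat.dvd_of_mem_primeFactors q.2)
  rw [hsprod]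

noncomputable def vv (d : ℕ) : ℝ := mu' d * gg d ^ 2 * hh d ^ 2 / (d:ℝ)^2

@[simp] lemma vv_zero : vv 0 = 0 := by simp [vv]
@[simp] lemma vv_one : vv 1 = 1 := by simp [vv, gg, hh, Nat.primeFactors_one]

lemma vv_mul {m n : ℕ} (hmn : Nat.Coprime m n) : vv (m * n) = vv m * vv n := by
  rcases Nat.eq_zero_or_pos m with rfl | hm
  · simp
  rcases Nat.eq_zero_or_pos n with rfl | hn
  · simp
  have hm' : m ≠ 0 := hm.ne'
  have hn' : n ≠ 0 := hn.ne'
  rw [vv, vv, vv, mu'_mul hmn, gg_mul_coprime hm' hn' hmn, hh_mul_coprime hm' hn' hmn]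
  have hmc : ((m:ℝ)) ≠ 0 := Nat.cast_ne_zero.mpr hm'
  have hnc : ((n:ℝ)) ≠ 0 := Nat.cast_ne_zero.mpr hn'
  push_cast
  field_simp

lemma vv_abs_le (d : ℕ) : ‖vv d‖ ≤ ((d:ℝ)^2)⁻¹ := by
  rcases Nat.eq_zero_or_pos d with rfl | hd
  · simp
  have hd2 : (0:ℝ) < (d:ℝ)^2 := by positivity
  have h1 : |mu' d| ≤ 1 := mu'_abs_le d
  have h2 : 0 ≤ gg d := gg_nonneg d
  have h3 : 0 ≤ hh d := hh_nonneg d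
  have h4 : gg d * hh d ≤ 1 := gg_hh_le_one d
  rw [Real.norm_eq_abs, vv, abs_div, abs_of_nonneg hd2.le, div_le_iff₀ hd2,
    inv_mul_cancel₀ hd2.ne']
  rw [abs_mul, abs_mul, abs_of_nonneg (by positivity : (0:ℝ) ≤ gg d ^ 2),
    abs_of_nonneg (by positivity : (0:ℝ) ≤ hh d ^ 2)]
  have h5 : 0 ≤ gg d * hh d := mul_nonneg h2 h3
  calc |mu' d| * gg d ^ 2 * hh d ^ 2 ≤ 1 * gg d ^ 2 * hh d ^ 2 := by gcongr
  _ = (gg d * hh d) ^ 2 := by ring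
  _ ≤ 1 := by nlinarith

lemma vv_summable : Summable (fun d => ‖vv d‖) :=
  Summable.of_nonneg_of_le (fun e => norm_nonneg _) vv_abs_le summable_sq_inv

noncomputable def Kc : ℝ := ∑' d, vv d

lemma vv_prime_pow_high (p b : ℕ) (hp : p.Prime) (hb : 2 ≤ b) : vv (p ^ b) = 0 := by
  rw [vv, mu'_prime_pow hp hb]; simp

lemma Kc_hasProd : HasProd (fun p : Nat.Primes => 1 + vv (p:ℕ)) Kc := by
  have h := EulerProduct.eulerProduct_hasProd (f := vv) vv_one
    (fun {m n} hc => vv_mul hc) vv_summable vv_zero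
  have heq : (fun p : Nat.Primes => ∑' e : ℕ, vv ((p:ℕ) ^ e))
      = fun p : Nat.Primes => 1 + vv (p:ℕ) := by
    funext p
    rw [tsum_eq_sum (s := ({0, 1} : Finset ℕ))
      (fun b hb => vv_prime_pow_high (p:ℕ) b p.prop
        (by simp only [Finset.mem_insert, Finset.mem_singleton] at hb; omega))]
    rw [Finset.sum_pair (by norm_num : (0:ℕ) ≠ 1), pow_zero, vv_one, pow_one]
  rw [heq] at h
  exact h

lemma gg_prime {p : ℕ} (hp : p.Prime) : gg p = 1 - (p:ℝ)⁻¹ := by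
  rw [gg, hp.primeFactors, Finset.prod_singleton]

lemma hh_prime {p : ℕ} (hp : p.Prime) : hh p = (1 - ((p:ℝ)^2)⁻¹)⁻¹ := by
  rw [hh, hp.primeFactors, Finset.prod_singleton]

lemma prod_eq : (∏' p : Nat.Primes, (1 - 1 / ((p:ℕ):ℝ)) ^ 2 * (1 + 2 / ((p:ℕ):ℝ)))
    = Zc ^ 2 * Kc := by
  have hZ : HasProd (fun p : Nat.Primes => 1 - (((p:ℕ):ℝ)^2)⁻¹) Zc := by
    have h := cc_hasProd 1
    have heq : (fun p : Nat.Primes => if (p:ℕ) ∣ 1 then 1 else 1 - (((p:ℕ):ℝ)^2)⁻¹)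
        = fun p : Nat.Primes => 1 - (((p:ℕ):ℝ)^2)⁻¹ := by
      funext p
      rw [if_neg fun hdvd => p.prop.ne_one (Nat.dvd_one.mp hdvd)]
    rwa [heq] at h
  have hmul := hZ.mul (hZ.mul Kc_hasProd)
  have hpt : (fun p : Nat.Primes => (1 - (((p:ℕ):ℝ)^2)⁻¹) *
        ((1 - (((p:ℕ):ℝ)^2)⁻¹) * (1 + vv (p:ℕ))))
      = fun p : Nat.Primes => (1 - 1 / ((p:ℕ):ℝ)) ^ 2 * (1 + 2 / ((p:ℕ):ℝ)) := by
    funext p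
    have hp : ((p:ℕ)).Prime := p.prop
    have h2 : (2:ℝ) ≤ ((p:ℕ):ℝ) := by exact_mod_cast hp.two_le
    have hx : ((p:ℕ):ℝ) ≠ 0 := by linarith
    have hsq : (1 - (((p:ℕ):ℝ)^2)⁻¹) ≠ 0 := (sq_factor_pos h2).ne'
    rw [vv, mu'_prime hp, gg_prime hp, hh_prime hp]
    set x : ℝ := ((p:ℕ):ℝ) with hxdef
    have ha : (1 - (x^2)⁻¹) ≠ 0 := hsq
    have hx0 : x ≠ 0 := hx
    calc (1 - (x^2)⁻¹) * ((1 - (x^2)⁻¹) *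
          (1 + -1 * (1 - x⁻¹) ^ 2 * ((1 - (x^2)⁻¹)⁻¹) ^ 2 / x ^ 2))
        = (1 - (x^2)⁻¹)^2 + ((1 - (x^2)⁻¹) * (1 - (x^2)⁻¹)⁻¹)^2 * (-1) * (1 - x⁻¹)^2 / x^2 := by
          ring
      _ = (1 - (x^2)⁻¹)^2 - (1 - x⁻¹)^2 / x^2 := by rw [mul_inv_cancel₀ ha]; ring
      _ = (1 - 1 / x) ^ 2 * (1 + 2 / x) := by field_simp; ring
  rw [hpt] at hmul
  rw [hmul.tprod_eq]
  ring

lemma tail_bound {f : ℕ → ℝ} (hs : Summable f) (hb : ∀ e, |f e| ≤ ((e:ℝ)^2)⁻¹)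
    (h0 : f 0 = 0) {M : ℕ} (hM : 1 ≤ M) :
    |(∑' e, f e) - ∑ e ∈ Finset.Icc 1 M, f e| ≤ 2 / M := by
  have hIcc : ∀ n : ℕ, ∑ e ∈ Finset.range n, f e = ∑ e ∈ Finset.Ico 1 n, f e := by
    intro n
    rw [Finset.range_eq_Ico]
    refine (Finset.sum_subset (Finset.Ico_subset_Ico (by norm_num) le_rfl) ?_).symm
    intro x hx1 hx2
    simp only [Finset.mem_Ico] at hx1 hx2
    have : x = 0 := by omega
    rw [this, h0]
  have hkey : ∀ n : ℕ, M + 1 ≤ n →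
      |∑ e ∈ Finset.range n, f e - ∑ e ∈ Finset.Icc 1 M, f e| ≤ 2 / (M + 1 : ℝ) := by
    intro n hn
    have h1 : ∑ e ∈ Finset.range n, f e - ∑ e ∈ Finset.Icc 1 M, f e
        = ∑ e ∈ Finset.Ico (M+1) n, f e := by
      rw [hIcc n, ← Finset.Ico_add_one_right_eq_Icc]
      rw [← Finset.sum_Ico_consecutive f (by omega : 1 ≤ M + 1) hn]
      ring
    rw [h1]
    calc |∑ e ∈ Finset.Ico (M+1) n, f e| ≤ ∑ e ∈ Finset.Ico (M+1) n, |f e| :=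
          Finset.abs_sum_le_sum_abs _ _
      _ ≤ ∑ e ∈ Finset.Ico (M+1) n, ((e:ℝ)^2)⁻¹ := Finset.sum_le_sum fun e _ => hb e
      _ ≤ 2 / (M + 1 : ℝ) := by
          have := sum_Ioo_inv_sq_le (α := ℝ) M n
          rw [← Finset.Ico_add_one_left_eq_Ioo] at this
          convert this using 2 <;> push_cast <;> ring
  have htend : Tendsto (fun n => |∑ e ∈ Finset.range n, f e - ∑ e ∈ Finset.Icc 1 M, f e|)
      atTop (𝓝 |(∑' e, f e) - ∑ e ∈ Finset.Icc 1 M, f e|) :=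
    ((hs.hasSum.tendsto_sum_nat).sub tendsto_const_nhds).abs
  have hle : |(∑' e, f e) - ∑ e ∈ Finset.Icc 1 M, f e| ≤ 2 / (M + 1 : ℝ) :=
    le_of_tendsto htend (Filter.eventually_atTop.mpr ⟨M + 1, hkey⟩)
  refine hle.trans ?_
  have hM' : (0:ℝ) < M := by exact_mod_cast hM
  rw [div_le_div_iff₀ (by linarith) hM']
  linarith

lemma cc_sub_partial {d M : ℕ} (hM : 1 ≤ M) :
    |cc d - ∑ e ∈ Finset.Icc 1 M, wdv d e| ≤ 2 / M := by
  refine tail_bound ((wdv_summable d).of_norm) (fun e => ?_) (wdv_zero d) hM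
  have := wdv_abs_le d e; rwa [Real.norm_eq_abs] at this

lemma cc_abs_le (d : ℕ) : |cc d| ≤ 3 := by
  have h := cc_sub_partial (d := d) (M := 1)
  simp only [Nat.cast_one, Finset.Icc_self, Finset.sum_singleton, wdv_one] at h
  have := h le_rfl
  have habs := abs_sub_abs_le_abs_sub (cc d) 1
  have h1 : |(1:ℝ)| = 1 := abs_one
  nlinarith [this]

lemma Kc_sub_partial {M : ℕ} (hM : 1 ≤ M) :
    |Kc - ∑ d ∈ Finset.Icc 1 M, vv d| ≤ 2 / M := by
  refine tail_bound (vv_summable.of_norm) (fun e => ?_) vv_zero hM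
  have := vv_abs_le e; rwa [Real.norm_eq_abs] at this

lemma Zc_abs_le : |Zc| ≤ 3 := cc_abs_le 1

def box (H : ℕ) : Finset ℕ := Finset.Icc 1 H

lemma box_eq_Ioc (H : ℕ) : box H = Finset.Ioc 0 H := by
  ext x; simp [box]; omega

lemma card_box_filter_dvd (H e : ℕ) : ((box H).filter (fun a => e ∣ a)).card = H / e := by
  rw [box_eq_Ioc]
  exact Nat.Ioc_filter_dvd_card_eq_div H e

lemma natdiv_le (H e : ℕ) : ((H / e : ℕ) : ℝ) ≤ (H:ℝ) / e := Nat.cast_div_le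

lemma natdiv_gt (H : ℕ) {e : ℕ} (he : 1 ≤ e) : (H:ℝ)/e - 1 ≤ ((H / e : ℕ):ℝ) := by
  have h1 : H < e * (H/e) + e := by
    have h2 := Nat.div_add_mod H e
    have h3 := Nat.mod_lt H (show 0 < e by omega)
    omega
  have h2 : (H:ℝ) < e * ((H/e:ℕ):ℝ) + e := by exact_mod_cast h1
  have he' : (0:ℝ) < e := by exact_mod_cast he
  rw [sub_le_iff_le_add, div_le_iff₀ he']
  nlinarith

lemma sum_inv_le (M : ℕ) : ∑ e ∈ box M, ((e:ℝ))⁻¹ ≤ 1 + Real.log M := by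
  have h := harmonic_le_one_add_log M
  have heq : ((harmonic M : ℚ) : ℝ) = ∑ e ∈ box M, ((e:ℝ))⁻¹ := by
    rw [harmonic_eq_sum_Icc]; push_cast; rfl
  rw [← heq]; exact h

lemma sum_moebius_ind {n : ℕ} (hn : n ≠ 0) :
    ∑ e ∈ n.divisors, mu' e = if n = 1 then (1:ℝ) else 0 := by
  have h := congrArg (fun f : ArithmeticFunction ℝ => f n) (coe_moebius_mul_coe_zeta (R := ℝ))
  rw [coe_mul_zeta_apply] at h
  rw [show (∑ e ∈ n.divisors, mu' e) = ∑ e ∈ n.divisors, ((moebius : ArithmeticFunction ℤ) :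
    ArithmeticFunction ℝ) e from Finset.sum_congr rfl fun e _ => by rw [mu', intCoe_apply], h,
    ArithmeticFunction.one_apply]

lemma divisors_gcd_filter {m c : ℕ} (hm : m ≠ 0) (hc : c ≠ 0) :
    (Nat.gcd m c).divisors = m.divisors.filter (fun e => e ∣ c) := by
  ext e
  simp only [Nat.mem_divisors, Finset.mem_filter]
  constructor
  · rintro ⟨hd, -⟩
    exact ⟨⟨(Nat.dvd_gcd_iff.mp hd).1, hm⟩, (Nat.dvd_gcd_iff.mp hd).2⟩
  · rintro ⟨⟨h1, -⟩, h2⟩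
    exact ⟨Nat.dvd_gcd h1 h2, fun h => hm (by simpa using Nat.eq_zero_of_gcd_eq_zero_left h)⟩

noncomputable def Phi (H m : ℕ) : ℕ := ((box H).filter (fun c => Nat.gcd m c = 1)).card

lemma Phi_eq (H : ℕ) {m : ℕ} (hm : m ≠ 0) :
    (Phi H m : ℝ) = ∑ e ∈ m.divisors, mu' e * ((H / e : ℕ) : ℝ) := by
  have h1 : (Phi H m : ℝ) = ∑ c ∈ box H, (if Nat.gcd m c = 1 then (1:ℝ) else 0) := by
    rw [Phi, Finset.card_filter]
    push_cast
    rfl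
  rw [h1]
  have h2 : ∀ c ∈ box H, (if Nat.gcd m c = 1 then (1:ℝ) else 0)
      = ∑ e ∈ m.divisors, (if e ∣ c then mu' e else 0) := by
    intro c hc
    have hc' : c ≠ 0 := by simp [box] at hc; omega
    rw [← Finset.sum_filter, ← divisors_gcd_filter hm hc',
      sum_moebius_ind (Nat.gcd_ne_zero_left hm)]
  rw [Finset.sum_congr rfl h2, Finset.sum_comm]
  refine Finset.sum_congr rfl fun e _ => ?_
  rw [← Finset.sum_filter, Finset.sum_const, card_box_filter_dvd, nsmul_eq_mul, mul_comm]

lemma Phi_approx (H : ℕ) {m : ℕ} (hm : m ≠ 0) :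
    |(Phi H m : ℝ) - (H:ℝ) * gg m| ≤ Dw m := by
  have h1 : (H:ℝ) * gg m = ∑ e ∈ m.divisors, mu' e * ((H:ℝ) / e) := by
    rw [← gg_eq_sum hm, Finset.mul_sum]
    exact Finset.sum_congr rfl fun e _ => by ring
  rw [Phi_eq H hm, h1, ← Finset.sum_sub_distrib]
  calc |∑ e ∈ m.divisors, (mu' e * ((H / e : ℕ) : ℝ) - mu' e * ((H:ℝ)/e))|
      ≤ ∑ e ∈ m.divisors, |mu' e * ((H / e : ℕ) : ℝ) - mu' e * ((H:ℝ)/e)| :=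
        Finset.abs_sum_le_sum_abs _ _
    _ ≤ ∑ e ∈ m.divisors, |mu' e| := Finset.sum_le_sum fun e he => ?_
    _ = Dw m := rfl
  have he1 : 1 ≤ e := (Nat.pos_of_mem_divisors he)
  have hd1 := natdiv_le H e
  have hd2 := natdiv_gt H he1
  rw [← mul_sub, abs_mul]
  calc |mu' e| * |((H / e : ℕ) : ℝ) - (H:ℝ)/e| ≤ |mu' e| * 1 := by
        refine mul_le_mul_of_nonneg_left ?_ (abs_nonneg _)
        rw [abs_le]; constructor <;> linarith
    _ = |mu' e| := mul_one _

lemma divisors_eq_box_filter {a H : ℕ} (ha : a ∈ box H) :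
    a.divisors = (box H).filter (fun e => e ∣ a) := by
  simp only [box, Finset.mem_Icc] at ha
  ext e
  simp only [Nat.mem_divisors, Finset.mem_filter, box, Finset.mem_Icc]
  constructor
  · rintro ⟨hd, h0⟩
    exact ⟨⟨Nat.pos_of_dvd_of_pos hd (by omega), le_trans (Nat.le_of_dvd (by omega) hd) ha.2⟩, hd⟩
  · rintro ⟨-, hd⟩
    exact ⟨hd, by omega⟩

lemma Dw_sum_le (H : ℕ) : ∑ a ∈ box H, Dw a ≤ (H:ℝ) * (1 + Real.log H) := by
  have h1 : ∀ a ∈ box H, Dw a = ∑ e ∈ box H, (if e ∣ a then |mu' e| else 0) := by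
    intro a ha
    rw [Dw, divisors_eq_box_filter ha, Finset.sum_filter]
  rw [Finset.sum_congr rfl h1, Finset.sum_comm]
  have h2 : ∀ e ∈ box H, ∑ a ∈ box H, (if e ∣ a then |mu' e| else 0)
      ≤ (H:ℝ) * (e:ℝ)⁻¹ := by
    intro e he
    have he1 : 1 ≤ e := by simp [box] at he; omega
    rw [← Finset.sum_filter, Finset.sum_const, card_box_filter_dvd, nsmul_eq_mul]
    have he' : (0:ℝ) < e := by exact_mod_cast he1
    calc ((H/e : ℕ):ℝ) * |mu' e| ≤ ((H/e : ℕ):ℝ) * 1 := by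
          refine mul_le_mul_of_nonneg_left (mu'_abs_le e) (by positivity)
      _ = ((H/e : ℕ):ℝ) := mul_one _
      _ ≤ (H:ℝ)/e := natdiv_le H e
      _ = (H:ℝ) * (e:ℝ)⁻¹ := by ring
  calc ∑ e ∈ box H, ∑ a ∈ box H, (if e ∣ a then |mu' e| else 0)
      ≤ ∑ e ∈ box H, (H:ℝ) * (e:ℝ)⁻¹ := Finset.sum_le_sum h2
    _ = (H:ℝ) * ∑ e ∈ box H, (e:ℝ)⁻¹ := by rw [Finset.mul_sum]
    _ ≤ (H:ℝ) * (1 + Real.log H) := by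
        refine mul_le_mul_of_nonneg_left (sum_inv_le H) (by positivity)

noncomputable def Ucount (d H : ℕ) : ℝ := ∑ a ∈ (box H).filter (fun a => d ∣ a), gg a

noncomputable def S1 (H : ℕ) : ℝ :=
  ∑ a ∈ box H, ∑ b ∈ box H, (if Nat.gcd a b = 1 then gg a * gg b else 0)

lemma mem_box {H x : ℕ} : x ∈ box H ↔ 1 ≤ x ∧ x ≤ H := by simp [box]

lemma divisors_gcd_box {H a b : ℕ} (ha : a ∈ box H) (hb : b ∈ box H) :
    (Nat.gcd a b).divisors = (box H).filter (fun e => e ∣ a ∧ e ∣ b) := by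
  rw [mem_box] at ha hb
  ext e
  simp only [Nat.mem_divisors, Finset.mem_filter, mem_box, Nat.dvd_gcd_iff]
  constructor
  · rintro ⟨⟨h1, h2⟩, -⟩
    have he1 : 1 ≤ e := Nat.pos_of_dvd_of_pos h1 (by omega)
    have he2 : e ≤ H := le_trans (Nat.le_of_dvd (by omega) h1) ha.2
    exact ⟨⟨he1, he2⟩, h1, h2⟩
  · rintro ⟨-, h1, h2⟩
    refine ⟨⟨h1, h2⟩, ?_⟩
    have := Nat.gcd_ne_zero_left (show a ≠ 0 by omega) (n := b)
    exact this

lemma coprime_ind {H a b : ℕ} (ha : a ∈ box H) (hb : b ∈ box H) :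
    (if Nat.gcd a b = 1 then (1:ℝ) else 0)
      = ∑ e ∈ box H, (if e ∣ a ∧ e ∣ b then mu' e else 0) := by
  rw [← Finset.sum_filter, ← divisors_gcd_box ha hb,
    sum_moebius_ind (Nat.gcd_ne_zero_left (show a ≠ 0 by rw [mem_box] at ha; omega))]

lemma N_eq (H : ℕ) :
    ((((box H) ×ˢ (box H) ×ˢ (box H)).filter
      (fun t : ℕ × ℕ × ℕ =>
        Nat.gcd t.1 t.2.1 = 1 ∧ Nat.gcd t.1 t.2.2 = 1 ∧ Nat.gcd t.2.1 t.2.2 = 1)).card : ℝ)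
    = ∑ a ∈ box H, ∑ b ∈ box H, (if Nat.gcd a b = 1 then (Phi H (a*b) : ℝ) else 0) := by
  rw [Finset.card_filter]
  push_cast
  rw [Finset.sum_product]
  refine Finset.sum_congr rfl fun a _ => ?_
  rw [Finset.sum_product]
  refine Finset.sum_congr rfl fun b _ => ?_
  by_cases hab : Nat.gcd a b = 1
  · rw [if_pos hab, Phi, Finset.card_filter]
    push_cast
    refine Finset.sum_congr rfl fun c _ => ?_
    have : (Nat.gcd a b = 1 ∧ Nat.gcd a c = 1 ∧ Nat.gcd b c = 1) ↔ Nat.gcd (a*b) c = 1 := by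
      constructor
      · rintro ⟨-, h2, h3⟩
        exact Nat.Coprime.mul h2 h3
      · intro h
        exact ⟨hab, Nat.Coprime.coprime_dvd_left (dvd_mul_right a b) h,
          Nat.Coprime.coprime_dvd_left (dvd_mul_left b a) h⟩
    rw [if_congr this rfl rfl]
  · rw [if_neg hab]
    refine Finset.sum_eq_zero fun c _ => ?_
    rw [if_neg (by tauto)]

lemma S1_eq (H : ℕ) : S1 H = ∑ e ∈ box H, mu' e * (Ucount e H)^2 := by
  have hab : ∀ a ∈ box H, ∀ b ∈ box H, (if Nat.gcd a b = 1 then gg a * gg b else 0)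
      = ∑ e ∈ box H, (if e ∣ a then gg a else 0) * (if e ∣ b then gg b else 0) * mu' e := by
    intro a ha b hb
    have h1 : (if Nat.gcd a b = 1 then gg a * gg b else 0)
        = gg a * gg b * (if Nat.gcd a b = 1 then (1:ℝ) else 0) := by
      split_ifs <;> ring
    rw [h1, coprime_ind ha hb, Finset.mul_sum]
    refine Finset.sum_congr rfl fun e _ => ?_
    by_cases h1 : e ∣ a <;> by_cases h2 : e ∣ b <;>
      simp only [if_pos, if_neg, h1, h2, and_true, and_false, true_and, false_and, if_true,
        if_false, ite_true, ite_false] <;> ring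
  rw [S1, Finset.sum_congr rfl (fun a ha => Finset.sum_congr rfl (fun b hb => hab a ha b hb))]
  rw [Finset.sum_congr rfl (fun a _ => Finset.sum_comm), Finset.sum_comm]
  refine Finset.sum_congr rfl fun e _ => ?_
  have : ∑ a ∈ box H, ∑ b ∈ box H,
      (if e ∣ a then gg a else 0) * (if e ∣ b then gg b else 0) * mu' e
      = (∑ a ∈ box H, (if e ∣ a then gg a else 0)) * (∑ b ∈ box H, (if e ∣ b then gg b else 0))
        * mu' e := by
    rw [Finset.sum_mul_sum, Finset.sum_mul]
    refine Finset.sum_congr rfl fun a _ => ?_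
    rw [Finset.sum_mul]
  rw [this]
  have hU : (∑ a ∈ box H, if e ∣ a then gg a else 0) = Ucount e H := by
    rw [Ucount, Finset.sum_filter]
  rw [hU]
  ring

lemma U_reindex {d H : ℕ} (hd : 1 ≤ d) :
    Ucount d H = ∑ m ∈ box (H / d), gg (d * m) := by
  refine Finset.sum_bij' (fun a _ => a / d) (fun m _ => d * m) ?_ ?_ ?_ ?_ ?_
  · intro a ha
    simp only [Finset.mem_filter, mem_box] at ha ⊢
    obtain ⟨⟨h1, h2⟩, hdvd⟩ := ha
    exact ⟨Nat.one_le_div_iff (by omega) |>.mpr (Nat.le_of_dvd (by omega) hdvd),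
      Nat.div_le_div_right h2⟩
  · intro m hm
    simp only [Finset.mem_filter, mem_box] at hm ⊢
    obtain ⟨h1, h2⟩ := hm
    refine ⟨⟨by nlinarith, ?_⟩, Dvd.intro m rfl⟩
    calc d * m ≤ d * (H / d) := Nat.mul_le_mul_left d h2
      _ ≤ H := Nat.mul_div_le H d
  · intro a ha
    simp only [Finset.mem_filter] at ha
    exact Nat.mul_div_cancel' ha.2
  · intro m _
    exact Nat.mul_div_cancel_left m (by omega)
  · intro a ha
    simp only [Finset.mem_filter] at ha
    rw [Nat.mul_div_cancel' ha.2]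

lemma gg_mul_split {d m : ℕ} (hd : d ≠ 0) (hm : m ≠ 0) :
    gg (d * m) = gg d * ∏ p ∈ m.primeFactors, (if p ∣ d then 1 else (1 - (p:ℝ)⁻¹)) := by
  rw [gg, Nat.primeFactors_mul hd hm,
    show d.primeFactors ∪ m.primeFactors = d.primeFactors ∪ (m.primeFactors \ d.primeFactors) from
      (Finset.union_sdiff_self_eq_union).symm,
    Finset.prod_union Finset.disjoint_sdiff]
  congr 1
  rw [show (∏ p ∈ m.primeFactors, (if p ∣ d then (1:ℝ) else (1 - (p:ℝ)⁻¹)))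
      = ∏ p ∈ m.primeFactors, (if ¬ p ∣ d then (1 - (p:ℝ)⁻¹) else 1) from
    Finset.prod_congr rfl fun p _ => by rw [ite_not], ← Finset.prod_filter]
  refine (Finset.prod_congr ?_ fun _ _ => rfl)
  ext p
  simp only [Finset.mem_sdiff, Finset.mem_filter, Nat.mem_primeFactors]
  constructor
  · rintro ⟨hp, hnd⟩
    exact ⟨hp, fun hdvd => hnd ⟨hp.1, hdvd, hd⟩⟩
  · rintro ⟨hp, hnd⟩
    exact ⟨hp, fun hmem => hnd hmem.2.1⟩

lemma inner_sum_eq (d M : ℕ) :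
    ∑ m ∈ box M, (∏ p ∈ m.primeFactors, (if p ∣ d then (1:ℝ) else (1 - (p:ℝ)⁻¹)))
      = ∑ e ∈ box M, (if Nat.gcd e d = 1 then mu' e / e else 0) * ((M / e : ℕ) : ℝ) := by
  have h1 : ∀ m ∈ box M, (∏ p ∈ m.primeFactors, (if p ∣ d then (1:ℝ) else (1 - (p:ℝ)⁻¹)))
      = ∑ e ∈ box M, (if e ∣ m then (if Nat.gcd e d = 1 then mu' e / e else 0) else 0) := by
    intro m hm
    rw [← Finset.sum_filter, ← divisors_eq_box_filter hm,
      sum_fd d (show m ≠ 0 by rw [mem_box] at hm; omega)]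
  rw [Finset.sum_congr rfl h1, Finset.sum_comm]
  refine Finset.sum_congr rfl fun e _ => ?_
  rw [← Finset.sum_filter, Finset.sum_const, card_box_filter_dvd, nsmul_eq_mul, mul_comm]

lemma U_approx {d H : ℕ} (hd : d ∈ box H) :
    |Ucount d H - gg d * cc d * ((H:ℝ)/d)| ≤ 6 + Real.log H := by
  rw [mem_box] at hd
  obtain ⟨hd1, hdH⟩ := hd
  set M := H / d with hM
  have hM1 : 1 ≤ M := (Nat.one_le_div_iff (by omega)).mpr hdH
  have hd0 : d ≠ 0 := by omega
  have hMH : M ≤ H := Nat.div_le_self H d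
  have hMr : (0:ℝ) < (M:ℝ) := by exact_mod_cast hM1
  have h1 : Ucount d H = gg d *
      ∑ e ∈ box M, (if Nat.gcd e d = 1 then mu' e / e else 0) * ((M / e : ℕ) : ℝ) := by
    rw [U_reindex hd1, ← hM,
      Finset.sum_congr rfl (fun m hm => gg_mul_split hd0
        (show m ≠ 0 by rw [mem_box] at hm; omega)),
      ← Finset.mul_sum, inner_sum_eq]
  have hA : |(∑ e ∈ box M, (if Nat.gcd e d = 1 then mu' e / e else 0) * ((M / e : ℕ) : ℝ))
      - (M:ℝ) * ∑ e ∈ box M, wdv d e| ≤ 1 + Real.log M := by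
    rw [Finset.mul_sum, ← Finset.sum_sub_distrib]
    refine (Finset.abs_sum_le_sum_abs _ _).trans ((Finset.sum_le_sum ?_).trans (sum_inv_le M))
    intro e he
    rw [mem_box] at he
    have he1 : (0:ℝ) < (e:ℝ) := by exact_mod_cast he.1
    rw [wdv]
    split_ifs with h
    · have heq : mu' e / e * ((M / e : ℕ) : ℝ) - (M:ℝ) * (mu' e / (e:ℝ)^2)
          = (mu' e / e) * (((M / e : ℕ) : ℝ) - (M:ℝ)/e) := by
        field_simp
      rw [heq, abs_mul, abs_div, abs_of_nonneg he1.le]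
      have h3 : |((M / e : ℕ) : ℝ) - (M:ℝ)/e| ≤ 1 := by
        rw [abs_le]
        constructor <;> linarith [natdiv_le M e, natdiv_gt M he.1]
      calc |mu' e| / (e:ℝ) * |((M / e : ℕ) : ℝ) - (M:ℝ)/e| ≤ 1 / (e:ℝ) * 1 := by
            gcongr
            all_goals first
            | exact mu'_abs_le e
            | exact h3
        _ = ((e:ℝ))⁻¹ := by rw [one_div, mul_one]
    · simp only [zero_mul, mul_zero, sub_zero, zero_sub, abs_neg, abs_zero]
      positivity
  have hB : |(M:ℝ) * (∑ e ∈ box M, wdv d e) - (M:ℝ) * cc d| ≤ 2 := by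
    rw [← mul_sub, abs_mul, abs_of_nonneg hMr.le]
    have h4 := cc_sub_partial (d := d) hM1
    rw [abs_sub_comm] at h4
    calc (M:ℝ) * |(∑ e ∈ box M, wdv d e) - cc d| ≤ (M:ℝ) * (2 / M) := by gcongr; exact h4
      _ = 2 := by field_simp
  have hC : |Ucount d H - gg d * (cc d * (M:ℝ))| ≤ 3 + Real.log M := by
    rw [h1, ← mul_sub]
    calc |gg d * ((∑ e ∈ box M, (if Nat.gcd e d = 1 then mu' e / e else 0) * ((M / e : ℕ) : ℝ))
          - cc d * (M:ℝ))|
        = |gg d| * |(∑ e ∈ box M, (if Nat.gcd e d = 1 then mu' e / e else 0) * ((M / e : ℕ) : ℝ))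
          - cc d * (M:ℝ)| := abs_mul _ _
      _ ≤ 1 * (3 + Real.log M) := by
          refine mul_le_mul ?_ ?_ (abs_nonneg _) (by norm_num)
          · rw [abs_of_nonneg (gg_nonneg d)]; exact gg_le_one d
          · have := abs_sub_le
              ((∑ e ∈ box M, (if Nat.gcd e d = 1 then mu' e / e else 0) * ((M / e : ℕ) : ℝ)))
              ((M:ℝ) * ∑ e ∈ box M, wdv d e) (cc d * (M:ℝ))
            have h5 : |(M:ℝ) * (∑ e ∈ box M, wdv d e) - cc d * (M:ℝ)| ≤ 2 := by
              rw [show cc d * (M:ℝ) = (M:ℝ) * cc d from mul_comm _ _]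
              exact hB
            linarith [hA]
      _ = 3 + Real.log M := one_mul _
  have hdr : (0:ℝ) < (d:ℝ) := by exact_mod_cast hd1
  have hD : |gg d * (cc d * (M:ℝ)) - gg d * cc d * ((H:ℝ)/d)| ≤ 3 := by
    have heq : gg d * (cc d * (M:ℝ)) - gg d * cc d * ((H:ℝ)/d)
        = gg d * cc d * ((M:ℝ) - (H:ℝ)/d) := by ring
    rw [heq, abs_mul, abs_mul]
    have h6 : |(M:ℝ) - (H:ℝ)/d| ≤ 1 := by
      rw [abs_le]
      constructor <;> linarith [natdiv_le H d, natdiv_gt H hd1]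
    calc |gg d| * |cc d| * |(M:ℝ) - (H:ℝ)/d| ≤ 1 * 3 * 1 := by
          refine mul_le_mul (mul_le_mul ?_ (cc_abs_le d) (abs_nonneg _) (by norm_num)) h6
            (abs_nonneg _) (by norm_num)
          rw [abs_of_nonneg (gg_nonneg d)]; exact gg_le_one d
      _ = 3 := by norm_num
  have hlog : Real.log M ≤ Real.log H := by
    refine Real.log_le_log hMr ?_
    exact_mod_cast hMH
  calc |Ucount d H - gg d * cc d * ((H:ℝ)/d)|
      ≤ |Ucount d H - gg d * (cc d * (M:ℝ))|
        + |gg d * (cc d * (M:ℝ)) - gg d * cc d * ((H:ℝ)/d)| := abs_sub_le _ _ _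
    _ ≤ (3 + Real.log M) + 3 := add_le_add hC hD
    _ ≤ 6 + Real.log H := by linarith

lemma log_nonneg' {H : ℕ} (hH : 1 ≤ H) : 0 ≤ Real.log H :=
  Real.log_nonneg (by exact_mod_cast hH)

lemma N_approx {H : ℕ} (hH : 1 ≤ H) :
    |((((box H) ×ˢ (box H) ×ˢ (box H)).filter
      (fun t : ℕ × ℕ × ℕ =>
        Nat.gcd t.1 t.2.1 = 1 ∧ Nat.gcd t.1 t.2.2 = 1 ∧ Nat.gcd t.2.1 t.2.2 = 1)).card : ℝ)
      - (H:ℝ) * S1 H| ≤ ((H:ℝ) * (1 + Real.log H))^2 := by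
  have h0 : (H:ℝ) * S1 H = ∑ a ∈ box H, ∑ b ∈ box H,
      (if Nat.gcd a b = 1 then (H:ℝ) * (gg a * gg b) else 0) := by
    rw [S1, Finset.mul_sum]
    refine Finset.sum_congr rfl fun a _ => ?_
    rw [Finset.mul_sum]
    refine Finset.sum_congr rfl fun b _ => ?_
    rw [mul_ite, mul_zero]
  rw [N_eq, h0, ← Finset.sum_sub_distrib]
  have hterm : ∀ a ∈ box H, ∀ b ∈ box H,
      |(if Nat.gcd a b = 1 then (Phi H (a*b) : ℝ) else 0)
        - (if Nat.gcd a b = 1 then (H:ℝ) * (gg a * gg b) else 0)| ≤ Dw a * Dw b := by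
    intro a ha b hb
    rw [mem_box] at ha hb
    have ha0 : a ≠ 0 := by omega
    have hb0 : b ≠ 0 := by omega
    by_cases hab : Nat.gcd a b = 1
    · rw [if_pos hab, if_pos hab, ← gg_mul_coprime ha0 hb0 hab]
      exact (Phi_approx H (Nat.mul_ne_zero ha0 hb0)).trans (Dw_mul_le ha0 hb0)
    · rw [if_neg hab, if_neg hab, sub_zero, abs_zero]
      exact mul_nonneg (Dw_nonneg a) (Dw_nonneg b)
  calc |∑ a ∈ box H, ((∑ b ∈ box H, (if Nat.gcd a b = 1 then (Phi H (a*b) : ℝ) else 0))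
        - ∑ b ∈ box H, (if Nat.gcd a b = 1 then (H:ℝ) * (gg a * gg b) else 0))|
      ≤ ∑ a ∈ box H, |(∑ b ∈ box H, (if Nat.gcd a b = 1 then (Phi H (a*b) : ℝ) else 0))
        - ∑ b ∈ box H, (if Nat.gcd a b = 1 then (H:ℝ) * (gg a * gg b) else 0)| :=
        Finset.abs_sum_le_sum_abs _ _
    _ ≤ ∑ a ∈ box H, ∑ b ∈ box H, Dw a * Dw b := by
        refine Finset.sum_le_sum fun a ha => ?_
        rw [← Finset.sum_sub_distrib]
        exact (Finset.abs_sum_le_sum_abs _ _).trans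
          (Finset.sum_le_sum fun b hb => hterm a ha b hb)
    _ = (∑ a ∈ box H, Dw a) * (∑ b ∈ box H, Dw b) := (Finset.sum_mul_sum _ _ _ _).symm
    _ ≤ ((H:ℝ) * (1 + Real.log H)) * ((H:ℝ) * (1 + Real.log H)) := by
        have h1 := Dw_sum_le H
        have h2 : 0 ≤ ∑ a ∈ box H, Dw a := Finset.sum_nonneg fun a _ => Dw_nonneg a
        exact mul_le_mul h1 h1 h2 (by positivity)
    _ = ((H:ℝ) * (1 + Real.log H))^2 := (sq _).symm

lemma S1_approx {H : ℕ} (hH : 1 ≤ H) :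
    |S1 H - (H:ℝ)^2 * Zc^2 * (∑ d ∈ box H, vv d)| ≤ 72 * (H:ℝ) * (1 + Real.log H)^2 := by
  set L := 6 + Real.log H with hLdef
  have hlog := log_nonneg' hH
  have hL : 0 ≤ L := by rw [hLdef]; linarith
  have hmain : ∀ d ∈ box H,
      |mu' d * (Ucount d H)^2 - mu' d * (gg d * cc d * ((H:ℝ)/d))^2|
        ≤ 2 * (3 * (H:ℝ) / d) * L + L^2 := by
    intro d hd
    have hd1 : 1 ≤ d := (mem_box.mp hd).1
    have hdr : (0:ℝ) < d := by exact_mod_cast hd1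
    set A := gg d * cc d * ((H:ℝ)/d) with hA
    set U := Ucount d H with hU
    have hUA : |U - A| ≤ L := U_approx hd
    have hAbd : |A| ≤ 3 * (H:ℝ) / d := by
      rw [hA, abs_mul, abs_mul]
      have hHd : |(H:ℝ)/d| = (H:ℝ)/d := abs_of_nonneg (by positivity)
      rw [hHd]
      calc |gg d| * |cc d| * ((H:ℝ)/d) ≤ 1 * 3 * ((H:ℝ)/d) := by
            refine mul_le_mul_of_nonneg_right
              (mul_le_mul ?_ (cc_abs_le d) (abs_nonneg _) (by norm_num)) (by positivity)
            rw [abs_of_nonneg (gg_nonneg d)]; exact gg_le_one d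
        _ = 3 * (H:ℝ) / d := by ring
    have habs : |mu' d * (U^2) - mu' d * (A^2)| ≤ |U^2 - A^2| := by
      rw [← mul_sub, abs_mul]
      calc |mu' d| * |U^2 - A^2| ≤ 1 * |U^2 - A^2| :=
            mul_le_mul_of_nonneg_right (mu'_abs_le d) (abs_nonneg _)
        _ = |U^2 - A^2| := one_mul _
    refine habs.trans ?_
    have h2 : U^2 - A^2 = (U - A) * ((U - A) + 2*A) := by ring
    rw [h2, abs_mul]
    calc |U - A| * |(U - A) + 2*A| ≤ L * (L + 2 * (3 * (H:ℝ)/d)) := by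
          refine mul_le_mul hUA ?_ (abs_nonneg _) hL
          refine (abs_add_le _ _).trans ?_
          rw [abs_mul]
          have : |(2:ℝ)| = 2 := by norm_num
          rw [this]
          linarith [hUA, hAbd]
      _ = 2 * (3 * (H:ℝ) / d) * L + L^2 := by ring
  have hsum1 : |S1 H - ∑ d ∈ box H, mu' d * (gg d * cc d * ((H:ℝ)/d))^2|
      ≤ ∑ d ∈ box H, (2 * (3 * (H:ℝ) / d) * L + L^2) := by
    rw [S1_eq, ← Finset.sum_sub_distrib]
    exact (Finset.abs_sum_le_sum_abs _ _).trans (Finset.sum_le_sum hmain)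
  have hsum2 : ∑ d ∈ box H, (2 * (3 * (H:ℝ) / d) * L + L^2)
      ≤ 6 * L * ((H:ℝ) * (1 + Real.log H)) + (H:ℝ) * L^2 := by
    rw [Finset.sum_add_distrib, Finset.sum_const, nsmul_eq_mul]
    have hcard : ((box H).card : ℝ) ≤ (H:ℝ) := by
      rw [box, Nat.card_Icc]
      push_cast
      norm_num
    have h3 : ∑ d ∈ box H, 2 * (3 * (H:ℝ) / d) * L = 6 * L * ∑ d ∈ box H, (H:ℝ) * (d:ℝ)⁻¹ := by
      rw [Finset.mul_sum]
      refine Finset.sum_congr rfl fun d _ => ?_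
      ring
    rw [h3]
    have h4 : ∑ d ∈ box H, (H:ℝ) * (d:ℝ)⁻¹ ≤ (H:ℝ) * (1 + Real.log H) := by
      rw [← Finset.mul_sum]
      exact mul_le_mul_of_nonneg_left (sum_inv_le H) (by positivity)
    have h5 : 0 ≤ L^2 := sq_nonneg L
    refine add_le_add (mul_le_mul_of_nonneg_left h4 (by positivity)) ?_
    exact mul_le_mul_of_nonneg_right hcard h5
  have heq : ∑ d ∈ box H, mu' d * (gg d * cc d * ((H:ℝ)/d))^2
      = (H:ℝ)^2 * Zc^2 * (∑ d ∈ box H, vv d) := by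
    rw [Finset.mul_sum]
    refine Finset.sum_congr rfl fun d hd => ?_
    have hd1 : 1 ≤ d := (mem_box.mp hd).1
    have hd0 : d ≠ 0 := by omega
    have hdr : ((d:ℝ)) ≠ 0 := Nat.cast_ne_zero.mpr hd0
    rw [cc_eq hd0, vv]
    field_simp
  have hLle : L ≤ 6 * (1 + Real.log H) := by rw [hLdef]; linarith
  have hfin : 6 * L * ((H:ℝ) * (1 + Real.log H)) + (H:ℝ) * L^2
      ≤ 72 * (H:ℝ) * (1 + Real.log H)^2 := by
    have hH0 : (0:ℝ) ≤ H := by positivity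
    have h1 : 6 * L * ((H:ℝ) * (1 + Real.log H)) ≤ 36 * (H:ℝ) * (1 + Real.log H)^2 := by
      have := mul_le_mul_of_nonneg_right hLle
        (mul_nonneg hH0 (by linarith : (0:ℝ) ≤ 1 + Real.log H))
      nlinarith
    have h2 : (H:ℝ) * L^2 ≤ 36 * (H:ℝ) * (1 + Real.log H)^2 := by
      have hL6 : L^2 ≤ 36 * (1 + Real.log H)^2 := by nlinarith
      nlinarith
    linarith
  calc |S1 H - (H:ℝ)^2 * Zc^2 * (∑ d ∈ box H, vv d)|
      = |S1 H - ∑ d ∈ box H, mu' d * (gg d * cc d * ((H:ℝ)/d))^2| := by rw [heq]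
    _ ≤ 6 * L * ((H:ℝ) * (1 + Real.log H)) + (H:ℝ) * L^2 := hsum1.trans hsum2
    _ ≤ 72 * (H:ℝ) * (1 + Real.log H)^2 := hfin

lemma one_le_log {H : ℕ} (hH : 3 ≤ H) : 1 ≤ Real.log H := by
  have h3 : (3:ℝ) ≤ (H:ℝ) := by exact_mod_cast hH
  have : Real.exp 1 ≤ 3 := by
    have := Real.exp_one_lt_d9
    linarith
  calc 1 ≤ Real.log 3 := by
        rw [Real.le_log_iff_exp_le (by norm_num)]
        exact this
    _ ≤ Real.log H := Real.log_le_log (by norm_num) h3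

lemma Zc_sq_le : Zc^2 ≤ 9 := by
  have h := Zc_abs_le
  rw [← sq_abs]
  nlinarith [abs_nonneg Zc]

lemma main_est {H : ℕ} (hH : 3 ≤ H) :
    |((((box H) ×ˢ (box H) ×ˢ (box H)).filter
      (fun t : ℕ × ℕ × ℕ =>
        Nat.gcd t.1 t.2.1 = 1 ∧ Nat.gcd t.1 t.2.2 = 1 ∧ Nat.gcd t.2.1 t.2.2 = 1)).card : ℝ)
      - (H:ℝ)^3 * (Zc^2 * Kc)| ≤ 364 * ((H:ℝ)^2 * (Real.log H)^2) := by
  have hH1 : 1 ≤ H := by omega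
  have hHr : (1:ℝ) ≤ (H:ℝ) := by exact_mod_cast hH1
  have hHpos : (0:ℝ) < (H:ℝ) := by linarith
  have hlog1 := one_le_log hH
  set ℓ := 1 + Real.log H with hl
  have hℓ1 : 1 ≤ ℓ := by rw [hl]; linarith [log_nonneg' hH1]
  have h1 := N_approx hH1
  have h2 := S1_approx hH1
  have hTK0 : |(∑ d ∈ box H, vv d) - Kc| ≤ 2 / H := by
    rw [abs_sub_comm]
    exact Kc_sub_partial hH1
  obtain ⟨N, hN⟩ : ∃ x : ℝ, x = (((((box H) ×ˢ (box H) ×ˢ (box H)).filter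
      (fun t : ℕ × ℕ × ℕ =>
        Nat.gcd t.1 t.2.1 = 1 ∧ Nat.gcd t.1 t.2.2 = 1 ∧ Nat.gcd t.2.1 t.2.2 = 1)).card : ℕ) : ℝ)
    := ⟨_, rfl⟩
  obtain ⟨T, hT⟩ : ∃ x : ℝ, x = ∑ d ∈ box H, vv d := ⟨_, rfl⟩
  rw [← hN] at h1 ⊢
  rw [← hT] at h2 hTK0
  rw [← hl] at h1 h2
  have h3 : |(H:ℝ)^3 * Zc^2 * (T - Kc)| ≤ 18 * (H:ℝ)^2 := by
    rw [abs_mul, abs_mul]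
    have e1 : |(H:ℝ)^3| = (H:ℝ)^3 := abs_of_nonneg (by positivity)
    have e2 : |Zc^2| = Zc^2 := abs_of_nonneg (sq_nonneg _)
    rw [e1, e2]
    calc (H:ℝ)^3 * Zc^2 * |T - Kc| ≤ (H:ℝ)^3 * 9 * (2 / H) := by
          refine mul_le_mul (mul_le_mul_of_nonneg_left Zc_sq_le (by positivity)) hTK0
            (abs_nonneg _) (by positivity)
      _ = 18 * (H:ℝ)^2 := by field_simp; ring
  have hdecomp : N - (H:ℝ)^3 * (Zc^2 * Kc)
      = (N - (H:ℝ) * S1 H) + (H:ℝ) * (S1 H - (H:ℝ)^2 * Zc^2 * T)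
        + (H:ℝ)^3 * Zc^2 * (T - Kc) := by ring
  have habs2 : |(H:ℝ) * (S1 H - (H:ℝ)^2 * Zc^2 * T)| ≤ (H:ℝ) * (72 * (H:ℝ) * ℓ^2) := by
    rw [abs_mul, abs_of_nonneg hHpos.le]
    exact mul_le_mul_of_nonneg_left h2 hHpos.le
  have htot : |N - (H:ℝ)^3 * (Zc^2 * Kc)|
      ≤ ((H:ℝ) * ℓ)^2 + (H:ℝ) * (72 * (H:ℝ) * ℓ^2) + 18 * (H:ℝ)^2 := by
    rw [hdecomp]
    refine (abs_add_three _ _ _).trans ?_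
    linarith [h1, habs2, h3]
  have hfin : ((H:ℝ) * ℓ)^2 + (H:ℝ) * (72 * (H:ℝ) * ℓ^2) + 18 * (H:ℝ)^2
      ≤ 364 * ((H:ℝ)^2 * (Real.log H)^2) := by
    have hll : ℓ ≤ 2 * Real.log H := by rw [hl]; linarith
    have hl0 : 0 ≤ ℓ := by linarith
    have hℓsq : ℓ^2 ≤ 4 * (Real.log H)^2 := by nlinarith
    have hlogsq : 1 ≤ (Real.log H)^2 := by nlinarith
    have hH2 : (0:ℝ) ≤ (H:ℝ)^2 := by positivity
    nlinarith [mul_le_mul_of_nonneg_left hℓsq hH2, mul_le_mul_of_nonneg_left hlogsq hH2]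
  exact htot.trans hfin

end SA


theorem stmt_4 :
    (fun H : ℕ =>
      (((((Finset.Icc 1 H) ×ˢ (Finset.Icc 1 H) ×ˢ (Finset.Icc 1 H)).filter
        (fun t : ℕ × ℕ × ℕ =>
          Nat.gcd t.1 t.2.1 = 1 ∧ Nat.gcd t.1 t.2.2 = 1 ∧ Nat.gcd t.2.1 t.2.2 = 1)).card : ℝ)
        - (H : ℝ) ^ 3 * primeProd))
      =O[atTop] (fun H : ℕ => (H : ℝ) ^ 2 * (Real.log H) ^ 2) := by
  rw [Asymptotics.isBigO_iff]
  refine ⟨364, ?_⟩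
  filter_upwards [Filter.eventually_ge_atTop 3] with H hH
  have hmain := SA.main_est hH
  have hP : primeProd = SA.Zc ^ 2 * SA.Kc := SA.prod_eq
  rw [Real.norm_eq_abs, Real.norm_eq_abs, hP]
  have habs : |(H:ℝ)^2 * (Real.log H)^2| = (H:ℝ)^2 * (Real.log H)^2 :=
    abs_of_nonneg (by positivity)
  rw [habs]
  exact hmain
end

section
/- Fix n ≥ 3. Let D_n(H) be the number of integer polynomials f = Σ_{i=0}^n A_i x^i with A_n ≠ 0, height max_i |A_i| ≤ H, and satisfying Dumas's criterion with respect to some prime. Then D_n(H) ≤ (2H)^{n+1} (1 − 1/ζ(n−1)) + O(H^n) as H → ∞. -/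
open Filter Polynomial Topology

open Finset

noncomputable local instance : ∀ (P : ℤ → Prop), DecidablePred P := fun _ => Classical.decPred _
noncomputable local instance : DecidableEq (ℕ → ℤ) := fun _ _ => Classical.dec _

lemma vp_nonneg (p : ℕ) (m : ℤ) : 0 ≤ vp p m := by
  simp [vp]

lemma dvd_of_vp_pos {p : ℕ} {m : ℤ} (h : 0 < vp p m) : (p : ℤ) ∣ m := by
  by_contra hd
  rw [vp, padicValInt.eq_zero_of_not_dvd hd] at h
  simp at h

lemma dumas_dvd {p n : ℕ} {A : ℕ → ℤ} (hn : 3 ≤ n) (h : DumasAt p n A) :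
    (∀ i, 0 < i → i < n → (p : ℤ) ∣ A i) ∧ ((p : ℤ) ∣ A 0 ∨ (p : ℤ) ∣ A n) := by
  obtain ⟨h0, hN, h3, h4⟩ := h
  have hv0 := vp_nonneg p (A 0)
  have hvn := vp_nonneg p (A n)
  have hnn : (1 : ℤ) < (n : ℤ) := by exact_mod_cast lt_of_lt_of_le (by norm_num) hn
  have hone : 1 ≤ vp p (A 0) + vp p (A n) := by
    by_contra hc
    push_neg at hc
    have e0 : vp p (A 0) = 0 := by omega
    have en : vp p (A n) = 0 := by omega
    exact h4 ⟨1, 0, by norm_num, hnn, by rw [e0, en]; ring⟩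
  constructor
  · intro i hi hi'
    rcases eq_or_ne (A i) 0 with hz | hz
    · rw [hz]; exact dvd_zero _
    · have hb := h3 i hi hi' hz
      apply dvd_of_vp_pos
      by_contra hc
      push_neg at hc
      have : vp p (A i) = 0 := le_antisymm hc (vp_nonneg p (A i))
      rw [this, mul_zero] at hb
      have hi1 : (1 : ℤ) ≤ (i : ℤ) := by exact_mod_cast hi
      have hi2 : (i : ℤ) ≤ (n : ℤ) - 1 := by
        have : (i : ℤ) < (n : ℤ) := by exact_mod_cast hi'
        omega
      nlinarith [hb]
  · rcases (by omega : 1 ≤ vp p (A 0) ∨ 1 ≤ vp p (A n)) with hc | hc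
    · exact Or.inl (dvd_of_vp_pos (by omega))
    · exact Or.inr (dvd_of_vp_pos (by omega))



noncomputable def Mult (p H : ℕ) : Finset ℤ :=
  (Finset.Icc (-(H:ℤ)) H).filter (fun x => (p:ℤ) ∣ x)

lemma mem_Mult {p H : ℕ} {x : ℤ} :
    x ∈ Mult p H ↔ (-(H:ℤ) ≤ x ∧ x ≤ H) ∧ (p:ℤ) ∣ x := by
  simp [Mult]

lemma Mult_eq_image {p H : ℕ} (hp : 0 < p) :
    Mult p H = (Finset.Icc (-(H/p : ℕ) : ℤ) (H/p : ℕ)).image (fun y => (p:ℤ) * y) := by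
  have hpz : (0:ℤ) < (p:ℤ) := by exact_mod_cast hp
  have hk1 : ((H/p : ℕ) : ℤ) * p ≤ (H : ℤ) := by
    exact_mod_cast Nat.div_mul_le_self H p
  have hk2 : (H : ℤ) < (((H/p : ℕ) : ℤ) + 1) * p := by
    have h2 : (p:ℤ) * ((H/p : ℕ):ℤ) + ((H % p : ℕ):ℤ) = H := by
      exact_mod_cast Nat.div_add_mod H p
    have h3 : ((H % p : ℕ):ℤ) < p := by exact_mod_cast Nat.mod_lt H hp
    nlinarith
  ext x
  simp only [mem_Mult, Finset.mem_image, Finset.mem_Icc]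
  constructor
  · rintro ⟨⟨hl, hr⟩, ⟨y, rfl⟩⟩
    refine ⟨y, ⟨?_, ?_⟩, rfl⟩
    · by_contra hc; push_neg at hc; nlinarith
    · by_contra hc; push_neg at hc; nlinarith
  · rintro ⟨y, ⟨hl, hr⟩, rfl⟩
    exact ⟨⟨by nlinarith, by nlinarith⟩, ⟨y, rfl⟩⟩

lemma card_Mult {p H : ℕ} (hp : 0 < p) : (Mult p H).card = 2 * (H / p) + 1 := by
  rw [Mult_eq_image hp]
  rw [Finset.card_image_of_injective _
    (mul_right_injective₀ (by exact_mod_cast hp.ne' : ((p:ℤ)) ≠ 0))]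
  rw [Int.card_Icc]
  simp
  omega

lemma Mult_subset {p H : ℕ} : Mult p H ⊆ Finset.Icc (-(H:ℤ)) H := Finset.filter_subset _ _

lemma card_Icc_int (H : ℕ) : (Finset.Icc (-(H:ℤ)) H).card = 2 * H + 1 := by
  rw [Int.card_Icc]; simp; omega




/-- extension map -/
def extFun (n : ℕ) (v : Fin (n+1) → ℤ) : ℕ → ℤ := fun i => if h : i < n + 1 then v ⟨i, h⟩ else 0

noncomputable def FU (p n H : ℕ) : Fin (n+1) → Finset ℤ :=
  fun j => if (j : ℕ) = n then Finset.Icc (-(H:ℤ)) H else Mult p H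

noncomputable def FV (p n H : ℕ) : Fin (n+1) → Finset ℤ :=
  fun j => if (j : ℕ) = 0 then (Finset.Icc (-(H:ℤ)) H) \ Mult p H else Mult p H

lemma card_FU (p n H : ℕ) (hp : 0 < p) :
    (Fintype.piFinset (FU p n H)).card = (2*(H/p)+1)^n * (2*H+1) := by
  rw [Fintype.card_piFinset]
  rw [Fin.prod_univ_castSucc]
  have h1 : FU p n H (Fin.last n) = Finset.Icc (-(H:ℤ)) H := by
    simp [FU]
  have h2 : ∀ j : Fin n, FU p n H j.castSucc = Mult p H := by
    intro j
    have : ((j.castSucc : Fin (n+1)) : ℕ) ≠ n := by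
      simp [Fin.coe_castSucc]; omega
    simp only [FU, if_neg this]
  rw [h1, card_Icc_int]
  congr 1
  calc ∏ j : Fin n, (FU p n H j.castSucc).card
      = ∏ _j : Fin n, (2*(H/p)+1) := by
        apply Finset.prod_congr rfl; intro j _; rw [h2 j, card_Mult hp]
    _ = (2*(H/p)+1)^n := by simp

lemma card_FV (p n H : ℕ) (hp : 0 < p) (hn : 0 < n) :
    (Fintype.piFinset (FV p n H)).card = ((2*H+1) - (2*(H/p)+1)) * (2*(H/p)+1)^n := by
  rw [Fintype.card_piFinset]
  rw [Fin.prod_univ_succ]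
  have h1 : FV p n H 0 = (Finset.Icc (-(H:ℤ)) H) \ Mult p H := by simp [FV]
  have h2 : ∀ j : Fin n, FV p n H j.succ = Mult p H := by
    intro j
    have : ((j.succ : Fin (n+1)) : ℕ) ≠ 0 := by simp
    simp [FV, this]
  rw [h1, Finset.card_sdiff_of_subset Mult_subset, card_Icc_int, card_Mult hp]
  congr 1
  calc ∏ j : Fin n, (FV p n H j.succ).card
      = ∏ _j : Fin n, (2*(H/p)+1) := by
        apply Finset.prod_congr rfl; intro j _; rw [h2 j, card_Mult hp]
    _ = (2*(H/p)+1)^n := by simp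

/-- membership: if A has the right divisibility/support, it's in the image of ext -/
lemma mem_image_ext {n : ℕ} {A : ℕ → ℤ} {F : Fin (n+1) → Finset ℤ}
    (hF : ∀ j : Fin (n+1), A j ∈ F j) (hsupp : ∀ i, n < i → A i = 0) :
    A ∈ (Fintype.piFinset F).image (extFun n) := by
  rw [Finset.mem_image]
  refine ⟨fun j => A j, by simp [Fintype.mem_piFinset, hF], ?_⟩
  funext i
  by_cases h : i < n + 1
  · simp [extFun, h]
  · simp only [extFun, dif_neg h]
    exact (hsupp i (by omega)).symm


lemma summable_zetaR {k : ℕ} (hk : 2 ≤ k) :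
    Summable (fun m : ℕ => (1 : ℝ) / ((m : ℝ) + 1) ^ k) := by
  have h : Summable (fun m : ℕ => (1 : ℝ) / ((m : ℝ)) ^ k) :=
    (Real.summable_one_div_nat_pow).mpr hk
  have := (summable_nat_add_iff 1).mpr h
  apply this.congr
  intro m
  push_cast
  ring_nf

lemma zetaR_ge (k M : ℕ) (hk : 2 ≤ k) :
    ∑ m ∈ Finset.range M, (1 : ℝ) / ((m : ℝ) + 1) ^ k ≤ zetaR k := by
  exact Summable.sum_le_tsum _ (fun m _ => by positivity) (summable_zetaR hk)

lemma zetaR_pos {k : ℕ} (hk : 2 ≤ k) : 0 < zetaR k := by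
  have h := zetaR_ge k 1 hk
  simp at h
  calc (0:ℝ) < 1 := one_pos
    _ ≤ zetaR k := by simpa using h

-- telescoping: sum over Icc 2 H of 1/m^2 ≤ 1
lemma tele2_aux (K : ℕ) :
    ∑ m ∈ Finset.Icc 2 (1 + K), (1 : ℝ) / (m : ℝ) ^ 2 ≤ 1 - 1 / (1 + (K:ℝ)) := by
  induction K with
  | zero => simp
  | succ K ih =>
    have h7 : 1 + (K + 1) = (1 + K) + 1 := by omega
    rw [h7, Finset.sum_Icc_succ_top (by omega)]
    have hK : (0:ℝ) < 1 + (K:ℝ) := by positivity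
    have hstep : (1:ℝ) / ((1 + K : ℕ) + 1 : ℝ) ^ 2 ≤ 1 / (1 + (K:ℝ)) - 1 / (1 + ((K:ℝ)+1)) := by
      push_cast
      rw [div_sub_div _ _ (by positivity) (by positivity), div_le_div_iff₀ (by positivity) (by positivity)]
      ring_nf
      nlinarith [sq_nonneg ((K:ℝ))]
    push_cast at *
    linarith

lemma tele2 (H : ℕ) : ∑ m ∈ Finset.Icc 2 H, (1 : ℝ) / (m : ℝ) ^ 2 ≤ 1 := by
  rcases le_or_gt H 1 with h | h
  · rw [Finset.Icc_eq_empty (by omega)]; simp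
  · have := tele2_aux (H - 1)
    have he : 1 + (H - 1) = H := by omega
    rw [he] at this
    have : ∑ m ∈ Finset.Icc 2 H, (1 : ℝ) / (m : ℝ) ^ 2 ≤ 1 - 1 / (1 + ((H-1 : ℕ):ℝ)) := this
    have hp : (0:ℝ) < 1 + ((H-1 : ℕ):ℝ) := by positivity
    have : (0:ℝ) ≤ 1 / (1 + ((H-1 : ℕ):ℝ)) := by positivity
    linarith

-- telescoping: sum over Icc 7 H of 1/m^3 ≤ 1/84
lemma tele3_aux (K : ℕ) :
    ∑ m ∈ Finset.Icc 7 (6 + K), (1 : ℝ) / (m : ℝ) ^ 3 ≤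
      1 / 84 - 1 / (2 * (6 + (K:ℝ)) * (7 + (K:ℝ))) := by
  induction K with
  | zero => norm_num
  | succ K ih =>
    have h7 : 6 + (K + 1) = (6 + K) + 1 := by omega
    rw [h7, Finset.sum_Icc_succ_top (by omega)]
    have hstep : (1:ℝ) / ((6 + K : ℕ) + 1 : ℝ) ^ 3 ≤
        1 / (2 * (6 + (K:ℝ)) * (7 + (K:ℝ))) - 1 / (2 * (6 + ((K:ℝ)+1)) * (7 + ((K:ℝ)+1))) := by
      push_cast
      rw [div_sub_div _ _ (by positivity) (by positivity), div_le_div_iff₀ (by positivity) (by positivity)]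
      ring_nf
      nlinarith [sq_nonneg ((K:ℝ)), (by positivity : (0:ℝ) ≤ (K:ℝ))]
    push_cast at *
    linarith

lemma tele3 (H : ℕ) : ∑ m ∈ Finset.Icc 7 H, (1 : ℝ) / (m : ℝ) ^ 3 ≤ 1 / 84 := by
  rcases le_or_gt H 6 with h | h
  · rw [Finset.Icc_eq_empty (by omega)]; norm_num
  · have := tele3_aux (H - 6)
    have he : 6 + (H - 6) = H := by omega
    rw [he] at this
    have hp : (0:ℝ) < 2 * (6 + ((H-6 : ℕ):ℝ)) * (7 + ((H-6 : ℕ):ℝ)) := by positivity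
    have : (0:ℝ) ≤ 1 / (2 * (6 + ((H-6 : ℕ):ℝ)) * (7 + ((H-6 : ℕ):ℝ))) := by positivity
    linarith [tele3_aux (H - 6), this]


noncomputable def fb (n : ℕ) : ℕ → ℝ := fun m =>
  if m = 2 then 3 / 2 ^ (n+1) else if m = 3 then 5 / 3 ^ (n+1) else if m = 5 then 9 / 5 ^ (n+1)
  else if m ≤ 6 then 0 else 2 / (m : ℝ) ^ n

lemma fb_nonneg (n m : ℕ) : 0 ≤ fb n m := by
  unfold fb
  split_ifs <;> positivity

lemma aux_frac (c x : ℝ) (hx : 0 < x) (hc : 0 < c) : 2/x - 1/(x*c) = (2*c-1)/(x*c) := by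
  field_simp

lemma primesum_le (n H : ℕ) (hn : 3 ≤ n) :
    ∑ p ∈ Nat.primesBelow (H + 1), (2 / (p:ℝ) ^ n - 1 / (p:ℝ) ^ (n+1)) ≤
      3 / 2 ^ (n+1) + 5 / 3 ^ (n+1) + 9 / 5 ^ (n+1) + (343 / 42) / 7 ^ n := by
  have hsub : Nat.primesBelow (H + 1) ⊆ Finset.Icc 2 H := by
    intro p hp
    rw [Nat.mem_primesBelow] at hp
    rw [Finset.mem_Icc]
    exact ⟨hp.2.two_le, by omega⟩
  have step1 : ∑ p ∈ Nat.primesBelow (H + 1), (2 / (p:ℝ) ^ n - 1 / (p:ℝ) ^ (n+1)) ≤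
      ∑ p ∈ Nat.primesBelow (H + 1), fb n p := by
    apply Finset.sum_le_sum
    intro p hp
    have hprime := (Nat.mem_primesBelow.mp hp).2
    have h2 := hprime.two_le
    rcases eq_or_ne p 2 with rfl | hp2
    · have hfb : fb n 2 = 3 / 2 ^ (n+1) := by norm_num [fb]
      rw [hfb]
      have hc : ((2:ℕ):ℝ) = 2 := by norm_num
      rw [hc, pow_succ, aux_frac 2 _ (by positivity) (by norm_num)]
      norm_num
    rcases eq_or_ne p 3 with rfl | hp3
    · have hfb : fb n 3 = 5 / 3 ^ (n+1) := by norm_num [fb]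
      rw [hfb]
      have hc : ((3:ℕ):ℝ) = 3 := by norm_num
      rw [hc, pow_succ, aux_frac 3 _ (by positivity) (by norm_num)]
      norm_num
    rcases eq_or_ne p 5 with rfl | hp5
    · have hfb : fb n 5 = 9 / 5 ^ (n+1) := by norm_num [fb]
      rw [hfb]
      have hc : ((5:ℕ):ℝ) = 5 := by norm_num
      rw [hc, pow_succ, aux_frac 5 _ (by positivity) (by norm_num)]
      norm_num
    · have hp7 : ¬ p ≤ 6 := by
        rcases Nat.lt_or_ge p 7 with h | h
        · interval_cases p <;> first | (exfalso; revert hprime; decide) | simp_all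
        · omega
      simp only [fb, if_neg hp2, if_neg hp3, if_neg hp5, if_neg hp7]
      have : (0:ℝ) ≤ 1 / (p:ℝ) ^ (n+1) := by positivity
      linarith
  have step2 : ∑ p ∈ Nat.primesBelow (H + 1), fb n p ≤ ∑ m ∈ Finset.Icc 2 H, fb n m :=
    Finset.sum_le_sum_of_subset_of_nonneg hsub (fun m _ _ => fb_nonneg n m)
  -- split Icc 2 H
  have split : ∑ m ∈ Finset.Icc 2 H, fb n m =
      (∑ m ∈ (Finset.Icc 2 H).filter (· ≤ 6), fb n m) +
      (∑ m ∈ (Finset.Icc 2 H).filter (¬ · ≤ 6), fb n m) :=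
    (Finset.sum_filter_add_sum_filter_not _ _ _).symm
  have part1 : ∑ m ∈ (Finset.Icc 2 H).filter (· ≤ 6), fb n m ≤
      3 / 2 ^ (n+1) + 5 / 3 ^ (n+1) + 9 / 5 ^ (n+1) := by
    have hsub6 : (Finset.Icc 2 H).filter (· ≤ 6) ⊆ Finset.Icc 2 6 := by
      intro m hm
      simp only [Finset.mem_filter, Finset.mem_Icc] at hm ⊢
      omega
    calc ∑ m ∈ (Finset.Icc 2 H).filter (· ≤ 6), fb n m
        ≤ ∑ m ∈ Finset.Icc 2 6, fb n m :=
          Finset.sum_le_sum_of_subset_of_nonneg hsub6 (fun m _ _ => fb_nonneg n m)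
      _ = 3 / 2 ^ (n+1) + 5 / 3 ^ (n+1) + 9 / 5 ^ (n+1) := by
          rw [show Finset.Icc 2 6 = {2, 3, 4, 5, 6} from rfl]
          norm_num [fb]
          try ring
  have heq7 : (Finset.Icc 2 H).filter (¬ · ≤ 6) = Finset.Icc 7 H := by
    ext m
    simp only [Finset.mem_filter, Finset.mem_Icc]
    omega
  have part2 : ∑ m ∈ (Finset.Icc 2 H).filter (¬ · ≤ 6), fb n m ≤ (343 / 42) / 7 ^ n := by
    rw [heq7]
    have hterm : ∀ m ∈ Finset.Icc 7 H, fb n m ≤ (2 * 343 / 7 ^ n) * ((1:ℝ) / (m:ℝ) ^ 3) := by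
      intro m hm
      rw [Finset.mem_Icc] at hm
      have hm7 : (7:ℝ) ≤ (m:ℝ) := by exact_mod_cast hm.1
      have hmpos : (0:ℝ) < (m:ℝ) := by linarith
      have h1 : fb n m = 2 / (m:ℝ) ^ n := by
        simp only [fb]
        have : ¬ m ≤ 6 := by omega
        rw [if_neg (by omega), if_neg (by omega), if_neg (by omega), if_neg this]
      rw [h1]
      -- 2 / m^n ≤ (686/7^n) / m^3  ⟺  2 * 7^n * m^3 ≤ 686 * m^n
      have key : (7:ℝ) ^ n * (m:ℝ) ^ 3 ≤ 343 * (m:ℝ) ^ n := by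
        have hd : n = (n - 3) + 3 := by omega
        have hmn : (7:ℝ) ^ (n - 3) ≤ (m:ℝ) ^ (n - 3) :=
          pow_le_pow_left₀ (by norm_num) hm7 _
        calc (7:ℝ) ^ n * (m:ℝ) ^ 3 = 343 * ((7:ℝ) ^ (n-3) * (m:ℝ) ^ 3) := by
              rw [hd, pow_add]; norm_num; ring
          _ ≤ 343 * ((m:ℝ) ^ (n-3) * (m:ℝ) ^ 3) := by
              apply mul_le_mul_of_nonneg_left _ (by norm_num)
              exact mul_le_mul_of_nonneg_right hmn (by positivity)
          _ = 343 * (m:ℝ) ^ n := by rw [← pow_add, ← hd]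
      have h7 : (0:ℝ) < 7 ^ n := by positivity
      rw [mul_one_div, div_le_div_iff₀ (by positivity) (by positivity),
        div_mul_eq_mul_div, le_div_iff₀ h7]
      calc 2 * (m:ℝ)^3 * 7^n = 2 * (7^n * (m:ℝ)^3) := by ring
        _ ≤ 2 * (343 * (m:ℝ)^n) := by linarith
        _ = 2 * 343 * (m:ℝ)^n := by ring
    calc ∑ m ∈ Finset.Icc 7 H, fb n m
        ≤ ∑ m ∈ Finset.Icc 7 H, (2 * 343 / 7 ^ n) * ((1:ℝ) / (m:ℝ) ^ 3) :=
          Finset.sum_le_sum hterm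
      _ = (2 * 343 / 7 ^ n) * ∑ m ∈ Finset.Icc 7 H, (1:ℝ) / (m:ℝ) ^ 3 := by
          rw [Finset.mul_sum]
      _ ≤ (2 * 343 / 7 ^ n) * (1 / 84) := by
          apply mul_le_mul_of_nonneg_left (tele3 H) (by positivity)
      _ = (343 / 42) / 7 ^ n := by field_simp; ring
  linarith [step1, step2, split.le, part1, part2, split.ge]


set_option maxHeartbeats 2000000 in
lemma const_ineq (n : ℕ) (hn : 3 ≤ n) :
    3 / 2 ^ (n+1) + 5 / 3 ^ (n+1) + 9 / 5 ^ (n+1) + (343 / 42) / 7 ^ n ≤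
      1 - 1 / zetaR (n - 1) := by
  have hk2 : 2 ≤ n - 1 := by omega
  have hzpos := zetaR_pos hk2
  -- helper to convert a partial-sum lower bound into the goal
  have main : ∀ S : ℝ, 0 < S → S ≤ zetaR (n - 1) →
      3 / 2 ^ (n+1) + 5 / 3 ^ (n+1) + 9 / 5 ^ (n+1) + (343 / 42) / 7 ^ n ≤ 1 - 1 / S →
      3 / 2 ^ (n+1) + 5 / 3 ^ (n+1) + 9 / 5 ^ (n+1) + (343 / 42) / 7 ^ n ≤
        1 - 1 / zetaR (n - 1) := by
    intro S hS hle hgoal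
    have := one_div_le_one_div_of_le hS hle
    linarith
  rcases eq_or_ne n 3 with rfl | h3
  · apply main (∑ m ∈ Finset.range 6, (1 : ℝ) / ((m : ℝ) + 1) ^ (3 - 1))
      (by norm_num [Finset.sum_range_succ]) (zetaR_ge _ 6 hk2)
    norm_num [Finset.sum_range_succ]
  rcases eq_or_ne n 4 with rfl | h4
  · apply main (∑ m ∈ Finset.range 6, (1 : ℝ) / ((m : ℝ) + 1) ^ (4 - 1))
      (by norm_num [Finset.sum_range_succ]) (zetaR_ge _ 6 hk2)
    norm_num [Finset.sum_range_succ]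
  rcases eq_or_ne n 5 with rfl | h5
  · apply main (∑ m ∈ Finset.range 6, (1 : ℝ) / ((m : ℝ) + 1) ^ (5 - 1))
      (by norm_num [Finset.sum_range_succ]) (zetaR_ge _ 6 hk2)
    norm_num [Finset.sum_range_succ]
  -- now n ≥ 6
  have hn6 : 6 ≤ n := by omega
  set a : ℝ := 1 / 2 ^ n with ha_def
  have ha : (0:ℝ) < a := by positivity
  have hx : (1:ℝ) / 2 ^ (n - 1) = 2 * a := by
    have : n = (n - 1) + 1 := by omega
    rw [ha_def, this, pow_succ]
    field_simp
    rw [Nat.add_sub_cancel]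
  have hS : 1 + 2 * a ≤ zetaR (n - 1) := by
    have h := zetaR_ge (n - 1) 2 hk2
    rw [Finset.sum_range_succ, Finset.sum_range_one] at h
    norm_num at h
    rw [← hx, one_div]
    exact h
  have hSpos : (0:ℝ) < 1 + 2 * a := by positivity
  have hinv : 1 / zetaR (n - 1) ≤ 1 / (1 + 2 * a) := one_div_le_one_div_of_le hSpos hS
  have hinv2 : 1 / (1 + 2 * a) ≤ 1 - 2 * a + 4 * a ^ 2 := by
    rw [div_le_iff₀ hSpos]
    nlinarith [ha.le, sq_nonneg a]
  -- so 1 - 1/zeta ≥ 2a - 4a²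
  have hR : 2 * a - 4 * a ^ 2 ≤ 1 - 1 / zetaR (n - 1) := by linarith
  -- bound each LHS term by a multiple of a
  have hapow : ∀ c : ℝ, 0 < c → c ≤ 1 → c ^ n ≤ c ^ 6 :=
    fun c h0 h1 => pow_le_pow_of_le_one h0.le h1 hn6
  have f2 : (3:ℝ) / 2 ^ (n+1) = (3/2) * a := by
    rw [pow_succ, ha_def]; field_simp
  have e3 : (1:ℝ) / 3 ^ n = (2/3) ^ n * a := by
    rw [div_pow, ha_def]
    field_simp
  have f3 : (5:ℝ) / 3 ^ (n+1) ≤ 320 / 2187 * a := by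
    have h := hapow (2/3) (by norm_num) (by norm_num)
    have : (5:ℝ) / 3 ^ (n+1) = (5/3) * (1 / 3 ^ n) := by rw [pow_succ]; ring
    rw [this, e3]
    nlinarith [mul_le_mul_of_nonneg_right h ha.le]
  have e5 : (1:ℝ) / 5 ^ n = (2/5) ^ n * a := by
    rw [div_pow, ha_def]
    field_simp
  have f5 : (9:ℝ) / 5 ^ (n+1) ≤ 576 / 78125 * a := by
    have h := hapow (2/5) (by norm_num) (by norm_num)
    have : (9:ℝ) / 5 ^ (n+1) = (9/5) * (1 / 5 ^ n) := by rw [pow_succ]; ring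
    rw [this, e5]
    nlinarith [mul_le_mul_of_nonneg_right h ha.le]
  have e7 : (1:ℝ) / 7 ^ n = (2/7) ^ n * a := by
    rw [div_pow, ha_def]
    field_simp
  have f7 : (343:ℝ) / 42 / 7 ^ n ≤ 21952 / 4941258 * a := by
    have h := hapow (2/7) (by norm_num) (by norm_num)
    have : (343:ℝ) / 42 / 7 ^ n = (343/42) * (1 / 7 ^ n) := by ring
    rw [this, e7]
    nlinarith [mul_le_mul_of_nonneg_right h ha.le]
  have fa : a ≤ 1 / 64 := by
    have h := hapow (1/2) (by norm_num) (by norm_num)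
    have e2 : a = (1/2) ^ n := by rw [ha_def, div_pow, one_pow]
    rw [e2]
    calc ((1:ℝ)/2) ^ n ≤ (1/2) ^ 6 := h
      _ = 1 / 64 := by norm_num
  have hsq : 4 * a ^ 2 ≤ (1/16) * a := by nlinarith [mul_le_mul_of_nonneg_right fa ha.le]
  calc 3 / 2 ^ (n+1) + 5 / 3 ^ (n+1) + 9 / 5 ^ (n+1) + (343 / 42) / 7 ^ n
      ≤ (3/2) * a + 320 / 2187 * a + 576 / 78125 * a + 21952 / 4941258 * a := by
        rw [f2]; linarith
    _ ≤ 2 * a - 4 * a ^ 2 := by nlinarith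
    _ ≤ 1 - 1 / zetaR (n - 1) := hR


lemma pow_add_one_le (t : ℝ) (ht : 1 ≤ t) (n : ℕ) (hn : 1 ≤ n) :
    (t + 1) ^ n ≤ t ^ n + 2 ^ n * t ^ (n - 1) := by
  have h := add_pow t 1 n
  simp only [one_pow, mul_one] at h
  rw [h, Finset.sum_range_succ]
  simp only [Nat.choose_self, Nat.cast_one, mul_one]
  have hbound : ∑ k ∈ Finset.range n, t ^ k * (n.choose k : ℝ) ≤ 2 ^ n * t ^ (n - 1) := by
    calc ∑ k ∈ Finset.range n, t ^ k * (n.choose k : ℝ)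
        ≤ ∑ k ∈ Finset.range n, t ^ (n-1) * (n.choose k : ℝ) := by
          apply Finset.sum_le_sum
          intro k hk
          rw [Finset.mem_range] at hk
          have hk' : k ≤ n - 1 := by omega
          exact mul_le_mul_of_nonneg_right (pow_le_pow_right₀ ht hk') (by positivity)
      _ = t ^ (n-1) * ∑ k ∈ Finset.range n, (n.choose k : ℝ) := by rw [Finset.mul_sum]
      _ ≤ t ^ (n-1) * 2 ^ n := by
          apply mul_le_mul_of_nonneg_left _ (by positivity)
          have h1 : ∑ k ∈ Finset.range n, (n.choose k) ≤ 2 ^ n := by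
            calc ∑ k ∈ Finset.range n, (n.choose k)
                ≤ ∑ k ∈ Finset.range (n+1), (n.choose k) :=
                  Finset.sum_le_sum_of_subset (Finset.range_subset_range.mpr (by omega))
              _ = 2 ^ n := Nat.sum_range_choose n
          calc ∑ k ∈ Finset.range n, ((n.choose k : ℕ) : ℝ)
              = ((∑ k ∈ Finset.range n, n.choose k : ℕ) : ℝ) := by push_cast; ring
            _ ≤ ((2^n : ℕ) : ℝ) := by exact_mod_cast h1
            _ = 2 ^ n := by push_cast; ring
      _ = 2 ^ n * t ^ (n-1) := by ring
  linarith

lemma per_prime (n H p : ℕ) (hn : 3 ≤ n) (hH : 1 ≤ H) (hp2 : 2 ≤ p) (hpH : p ≤ H) :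
    (((2*(H/p)+1)^n * (2*H+1) + ((2*H+1) - (2*(H/p)+1)) * (2*(H/p)+1)^n : ℕ) : ℝ) ≤
      (2*(H:ℝ))^(n+1) * (2/(p:ℝ)^n - 1/(p:ℝ)^(n+1)) +
        (3*2^n + 7*2^n*2^n) * (H:ℝ)^n * (1/(p:ℝ)^2) := by
  have hp0 : 0 < p := by omega
  have hpr : (0:ℝ) < (p:ℝ) := by exact_mod_cast hp0
  have hHr : (1:ℝ) ≤ (H:ℝ) := by exact_mod_cast hH
  have hpHr : (p:ℝ) ≤ (H:ℝ) := by exact_mod_cast hpH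
  have hpr2 : (2:ℝ) ≤ (p:ℝ) := by exact_mod_cast hp2
  set t : ℝ := 2*(H:ℝ)/(p:ℝ) with ht_def
  set d : ℝ := ((2*(H/p)+1 : ℕ) : ℝ) with hd_def
  have hDB : 2*(H/p)+1 ≤ 2*H+1 := by
    have := Nat.div_le_self H p; omega
  have hcast : (((2*(H/p)+1)^n * (2*H+1) + ((2*H+1) - (2*(H/p)+1)) * (2*(H/p)+1)^n : ℕ) : ℝ)
      = d^n * (2*(2*(H:ℝ)+1) - d) := by
    have e : (2*H+1) - (2*(H/p)+1) = 2*(H - H/p) := by omega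
    rw [hd_def, e]
    push_cast [Nat.cast_sub (Nat.div_le_self H p)]
    ring
  rw [hcast]
  have hk1 : ((H/p : ℕ) : ℝ) ≤ (H:ℝ)/(p:ℝ) := Nat.cast_div_le
  have hk2 : (H:ℝ)/(p:ℝ) - 1 ≤ ((H/p : ℕ) : ℝ) := by
    have h2 : (p:ℝ) * ((H/p : ℕ):ℝ) + ((H % p : ℕ):ℝ) = H := by
      exact_mod_cast Nat.div_add_mod H p
    have h3 : ((H % p : ℕ):ℝ) < p := by exact_mod_cast Nat.mod_lt H hp0
    rw [div_sub_one hpr.ne', div_le_iff₀ hpr]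
    nlinarith
  have hd1 : d ≤ t + 1 := by
    rw [hd_def, ht_def]
    push_cast
    have : 2*(H:ℝ)/(p:ℝ) = 2*((H:ℝ)/(p:ℝ)) := by ring
    rw [this]
    linarith
  have hd2 : t - 1 ≤ d := by
    rw [hd_def, ht_def]
    push_cast
    have : 2*(H:ℝ)/(p:ℝ) = 2*((H:ℝ)/(p:ℝ)) := by ring
    rw [this]
    linarith
  have ht1 : 1 ≤ t := by
    rw [ht_def, le_div_iff₀ hpr]
    nlinarith
  have htH : t ≤ 2*(H:ℝ) := by
    rw [ht_def, div_le_iff₀ hpr]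
    nlinarith [mul_le_mul_of_nonneg_left hpr2 (by positivity : (0:ℝ) ≤ 2*(H:ℝ))]
  have hd0 : 0 ≤ d := by rw [hd_def]; positivity
  have step1 : d^n * (2*(2*(H:ℝ)+1) - d) ≤ (t+1)^n * ((4*(H:ℝ)+3) - t) := by
    apply mul_le_mul
    · exact pow_le_pow_left₀ hd0 hd1 n
    · linarith
    · linarith
    · positivity
  have step2 : (t+1)^n * ((4*(H:ℝ)+3) - t) ≤ (t^n + 2^n * t^(n-1)) * ((4*(H:ℝ)+3) - t) := by
    apply mul_le_mul_of_nonneg_right (pow_add_one_le t ht1 n (by omega))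
    linarith
  have step3 : (t^n + 2^n * t^(n-1)) * ((4*(H:ℝ)+3) - t)
      ≤ t^n*(4*(H:ℝ) - t) + 3*t^n + 2^n * t^(n-1) * (4*(H:ℝ)+3) := by
    have hpos : (0:ℝ) ≤ 2^n * t^(n-1) * t := by positivity
    have e : (t^n + 2^n * t^(n-1)) * ((4*(H:ℝ)+3) - t)
        = t^n*(4*(H:ℝ) - t) + 3*t^n + 2^n * t^(n-1) * (4*(H:ℝ)+3) - 2^n * t^(n-1) * t := by
      ring
    rw [e]
    linarith
  have hmain : t^n*(4*(H:ℝ) - t) = (2*(H:ℝ))^(n+1) * (2/(p:ℝ)^n - 1/(p:ℝ)^(n+1)) := by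
    rw [ht_def, div_pow]
    field_simp
    ring
  have hpn2 : (p:ℝ)^2 ≤ (p:ℝ)^n := pow_le_pow_right₀ (by linarith : (1:ℝ) ≤ (p:ℝ)) (by omega)
  have hpn2' : (p:ℝ)^2 ≤ (p:ℝ)^(n-1) := pow_le_pow_right₀ (by linarith : (1:ℝ) ≤ (p:ℝ)) (by omega)
  have hlow1 : 3*t^n ≤ 3*2^n * (H:ℝ)^n * (1/(p:ℝ)^2) := by
    rw [ht_def, div_pow, mul_pow]
    rw [div_eq_mul_one_div]
    have h1 : (1:ℝ)/(p:ℝ)^n ≤ 1/(p:ℝ)^2 := one_div_le_one_div_of_le (by positivity) hpn2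
    have h2 : (0:ℝ) ≤ (2:ℝ)^n * (H:ℝ)^n := by positivity
    calc 3*((2:ℝ)^n * (H:ℝ)^n * (1/(p:ℝ)^n)) ≤ 3*((2:ℝ)^n * (H:ℝ)^n * (1/(p:ℝ)^2)) := by
          apply mul_le_mul_of_nonneg_left _ (by norm_num)
          exact mul_le_mul_of_nonneg_left h1 h2
      _ = 3*2^n * (H:ℝ)^n * (1/(p:ℝ)^2) := by ring
  have hlow2 : 2^n * t^(n-1) * (4*(H:ℝ)+3) ≤ 7*2^n*2^n * (H:ℝ)^n * (1/(p:ℝ)^2) := by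
    have e1 : t^(n-1) = (2:ℝ)^(n-1) * (H:ℝ)^(n-1) * (1/(p:ℝ)^(n-1)) := by
      rw [ht_def, div_pow, mul_pow, div_eq_mul_one_div]
    have h1 : (1:ℝ)/(p:ℝ)^(n-1) ≤ 1/(p:ℝ)^2 := one_div_le_one_div_of_le (by positivity) hpn2'
    have h47 : 4*(H:ℝ)+3 ≤ 7*(H:ℝ) := by linarith
    have h2n : (2:ℝ)^(n-1) ≤ 2^n := pow_le_pow_right₀ (by norm_num) (by omega)
    have hHn : (H:ℝ)^(n-1) * (H:ℝ) = (H:ℝ)^n := by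
      rw [← pow_succ]
      congr 1
      omega
    calc 2^n * t^(n-1) * (4*(H:ℝ)+3)
        = 2^n * ((2:ℝ)^(n-1) * (H:ℝ)^(n-1) * (1/(p:ℝ)^(n-1))) * (4*(H:ℝ)+3) := by rw [e1]
      _ ≤ 2^n * ((2:ℝ)^n * (H:ℝ)^(n-1) * (1/(p:ℝ)^2)) * (7*(H:ℝ)) := by
          apply mul_le_mul
          · apply mul_le_mul_of_nonneg_left _ (by positivity)
            apply mul_le_mul
            · exact mul_le_mul h2n le_rfl (by positivity) (by positivity)
            · exact h1
            · positivity
            · positivity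
          · exact h47
          · positivity
          · positivity
      _ = 7*2^n*2^n * ((H:ℝ)^(n-1) * (H:ℝ)) * (1/(p:ℝ)^2) := by ring
      _ = 7*2^n*2^n * (H:ℝ)^n * (1/(p:ℝ)^2) := by rw [hHn]
  calc d^n * (2*(2*(H:ℝ)+1) - d)
      ≤ (t^n + 2^n * t^(n-1)) * ((4*(H:ℝ)+3) - t) := le_trans step1 step2
    _ ≤ t^n*(4*(H:ℝ) - t) + 3*t^n + 2^n * t^(n-1) * (4*(H:ℝ)+3) := step3
    _ ≤ (2*(H:ℝ))^(n+1) * (2/(p:ℝ)^n - 1/(p:ℝ)^(n+1))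
        + 3*2^n * (H:ℝ)^n * (1/(p:ℝ)^2) + 7*2^n*2^n * (H:ℝ)^n * (1/(p:ℝ)^2) := by
          rw [hmain]; linarith
    _ = (2*(H:ℝ))^(n+1) * (2/(p:ℝ)^n - 1/(p:ℝ)^(n+1))
        + (3*2^n + 7*2^n*2^n) * (H:ℝ)^n * (1/(p:ℝ)^2) := by ring

lemma dcount_le (n H : ℕ) (hn : 3 ≤ n) :
    Dcount n H ≤ ∑ p ∈ Nat.primesBelow (H+1),
      ((2*(H/p)+1)^n * (2*H+1) + ((2*H+1) - (2*(H/p)+1)) * (2*(H/p)+1)^n) := by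
  classical
  set T : Finset (ℕ → ℤ) := (Nat.primesBelow (H+1)).biUnion
    (fun p => ((Fintype.piFinset (FU p n H)).image (extFun n)) ∪
              ((Fintype.piFinset (FV p n H)).image (extFun n))) with hT
  have hsub : {A : ℕ → ℤ | A n ≠ 0 ∧ (∀ i, (A i).natAbs ≤ H) ∧ (∀ i, n < i → A i = 0) ∧
      ∃ p : ℕ, p.Prime ∧ DumasAt p n A} ⊆ (T : Set (ℕ → ℤ)) := by
    rintro A ⟨hAn, hht, hsupp, p, hp, hdum⟩
    obtain ⟨hmid, hor⟩ := dumas_dvd hn hdum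
    have hA0 : A 0 ≠ 0 := hdum.1
    have hbox : ∀ i, A i ∈ Finset.Icc (-(H:ℤ)) H := by
      intro i
      have := hht i
      rw [Finset.mem_Icc]
      omega
    have hpH : p ≤ H := by
      rcases hor with hd | hd
      · have h1 : p ∣ (A 0).natAbs := by
          have := Int.natAbs_dvd_natAbs.mpr hd
          simpa using this
        have h2 : 0 < (A 0).natAbs := by omega
        exact le_trans (Nat.le_of_dvd h2 h1) (hht 0)
      · have h1 : p ∣ (A n).natAbs := by
          have := Int.natAbs_dvd_natAbs.mpr hd
          simpa using this
        have h2 : 0 < (A n).natAbs := by omega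
        exact le_trans (Nat.le_of_dvd h2 h1) (hht n)
    show A ∈ T
    rw [hT, Finset.mem_biUnion]
    refine ⟨p, Nat.mem_primesBelow.mpr ⟨by omega, hp⟩, ?_⟩
    by_cases hd0 : (p:ℤ) ∣ A 0
    · apply Finset.mem_union_left
      apply mem_image_ext _ hsupp
      intro j
      simp only [FU]
      split_ifs with hj
      · exact hbox _
      · rw [mem_Mult]
        refine ⟨by rw [← Finset.mem_Icc]; exact hbox _, ?_⟩
        rcases Nat.eq_zero_or_pos (j : ℕ) with h0 | h0
        · rw [h0]; exact hd0
        · have hjn : (j : ℕ) < n := by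
            have := j.isLt
            omega
          exact hmid _ h0 hjn
    · have hdn : (p:ℤ) ∣ A n := hor.resolve_left hd0
      apply Finset.mem_union_right
      apply mem_image_ext _ hsupp
      intro j
      simp only [FV]
      split_ifs with hj
      · rw [Finset.mem_sdiff]
        refine ⟨by rw [hj]; exact hbox _, ?_⟩
        rw [hj]
        intro hmem
        exact hd0 (mem_Mult.mp hmem).2
      · rw [mem_Mult]
        refine ⟨by rw [← Finset.mem_Icc]; exact hbox _, ?_⟩
        rcases eq_or_ne (j : ℕ) n with hjn | hjn
        · rw [hjn]; exact hdn
        · have h0 : 0 < (j : ℕ) := by omega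
          have hlt : (j : ℕ) < n := by
            have := j.isLt
            omega
          exact hmid _ h0 hlt
  calc Dcount n H ≤ T.card := by
        rw [← Set.ncard_coe_finset]
        exact Set.ncard_le_ncard hsub T.finite_toSet
    _ ≤ ∑ p ∈ Nat.primesBelow (H+1),
          (((Fintype.piFinset (FU p n H)).image (extFun n)) ∪
           ((Fintype.piFinset (FV p n H)).image (extFun n))).card := Finset.card_biUnion_le
    _ ≤ ∑ p ∈ Nat.primesBelow (H+1),
          ((2*(H/p)+1)^n * (2*H+1) + ((2*H+1) - (2*(H/p)+1)) * (2*(H/p)+1)^n) := by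
        apply Finset.sum_le_sum
        intro p hp
        have hp0 : 0 < p := (Nat.mem_primesBelow.mp hp).2.pos
        calc (((Fintype.piFinset (FU p n H)).image (extFun n)) ∪
              ((Fintype.piFinset (FV p n H)).image (extFun n))).card
            ≤ ((Fintype.piFinset (FU p n H)).image (extFun n)).card +
              ((Fintype.piFinset (FV p n H)).image (extFun n)).card := Finset.card_union_le _ _
          _ ≤ (Fintype.piFinset (FU p n H)).card + (Fintype.piFinset (FV p n H)).card :=
              add_le_add Finset.card_image_le Finset.card_image_le
          _ = (2*(H/p)+1)^n * (2*H+1) + ((2*H+1) - (2*(H/p)+1)) * (2*(H/p)+1)^n := by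
              rw [card_FU p n H hp0, card_FV p n H hp0 (by omega)]

theorem stmt_6 (n : ℕ) (hn : 3 ≤ n) :
    ∃ C : ℝ, 0 < C ∧ ∀ H : ℕ, 1 ≤ H →
      (Dcount n H : ℝ) ≤ (2 * (H : ℝ)) ^ (n + 1) * (1 - 1 / zetaR (n - 1)) + C * (H : ℝ) ^ n := by
  refine ⟨3*2^n + 7*2^n*2^n, by positivity, ?_⟩
  intro H hH
  have hHr : (1:ℝ) ≤ (H:ℝ) := by exact_mod_cast hH
  have count := dcount_le n H hn
  have count' : (Dcount n H : ℝ) ≤ ∑ p ∈ Nat.primesBelow (H+1),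
      (((2*(H/p)+1)^n * (2*H+1) + ((2*H+1) - (2*(H/p)+1)) * (2*(H/p)+1)^n : ℕ) : ℝ) := by
    rw [← Nat.cast_sum]
    exact_mod_cast count
  have step : ∑ p ∈ Nat.primesBelow (H+1),
      (((2*(H/p)+1)^n * (2*H+1) + ((2*H+1) - (2*(H/p)+1)) * (2*(H/p)+1)^n : ℕ) : ℝ) ≤
      ∑ p ∈ Nat.primesBelow (H+1),
        ((2*(H:ℝ))^(n+1) * (2/(p:ℝ)^n - 1/(p:ℝ)^(n+1)) +
          (3*2^n + 7*2^n*2^n) * (H:ℝ)^n * (1/(p:ℝ)^2)) := by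
    apply Finset.sum_le_sum
    intro p hp
    have hp' := Nat.mem_primesBelow.mp hp
    exact per_prime n H p hn hH hp'.2.two_le (by omega)
  have split : ∑ p ∈ Nat.primesBelow (H+1),
      ((2*(H:ℝ))^(n+1) * (2/(p:ℝ)^n - 1/(p:ℝ)^(n+1)) +
        (3*2^n + 7*2^n*2^n) * (H:ℝ)^n * (1/(p:ℝ)^2))
      = (2*(H:ℝ))^(n+1) * (∑ p ∈ Nat.primesBelow (H+1), (2/(p:ℝ)^n - 1/(p:ℝ)^(n+1))) +
        (3*2^n + 7*2^n*2^n) * (H:ℝ)^n * (∑ p ∈ Nat.primesBelow (H+1), (1/(p:ℝ)^2)) := by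
    rw [Finset.sum_add_distrib, Finset.mul_sum, Finset.mul_sum]
  have hmainsum : (2*(H:ℝ))^(n+1) * (∑ p ∈ Nat.primesBelow (H+1), (2/(p:ℝ)^n - 1/(p:ℝ)^(n+1)))
      ≤ (2*(H:ℝ))^(n+1) * (1 - 1 / zetaR (n - 1)) := by
    apply mul_le_mul_of_nonneg_left _ (by positivity)
    exact le_trans (primesum_le n H hn) (const_ineq n hn)
  have hlowsum : (∑ p ∈ Nat.primesBelow (H+1), (1/(p:ℝ)^2)) ≤ 1 := by
    have hsub : Nat.primesBelow (H + 1) ⊆ Finset.Icc 2 H := by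
      intro p hp
      have hp' := Nat.mem_primesBelow.mp hp
      rw [Finset.mem_Icc]
      exact ⟨hp'.2.two_le, by omega⟩
    calc ∑ p ∈ Nat.primesBelow (H+1), (1/(p:ℝ)^2)
        ≤ ∑ m ∈ Finset.Icc 2 H, (1/(m:ℝ)^2) :=
          Finset.sum_le_sum_of_subset_of_nonneg hsub (fun m _ _ => by positivity)
      _ ≤ 1 := tele2 H
  have hlow : (3*2^n + 7*2^n*2^n) * (H:ℝ)^n * (∑ p ∈ Nat.primesBelow (H+1), (1/(p:ℝ)^2))
      ≤ (3*2^n + 7*2^n*2^n) * (H:ℝ)^n := by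
    have h1 : (0:ℝ) ≤ (3*2^n + 7*2^n*2^n) * (H:ℝ)^n := by positivity
    nlinarith [hlowsum]
  calc (Dcount n H : ℝ)
      ≤ ∑ p ∈ Nat.primesBelow (H+1),
        ((2*(H:ℝ))^(n+1) * (2/(p:ℝ)^n - 1/(p:ℝ)^(n+1)) +
          (3*2^n + 7*2^n*2^n) * (H:ℝ)^n * (1/(p:ℝ)^2)) := le_trans count' step
    _ = (2*(H:ℝ))^(n+1) * (∑ p ∈ Nat.primesBelow (H+1), (2/(p:ℝ)^n - 1/(p:ℝ)^(n+1))) +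
        (3*2^n + 7*2^n*2^n) * (H:ℝ)^n * (∑ p ∈ Nat.primesBelow (H+1), (1/(p:ℝ)^2)) := split
    _ ≤ (2*(H:ℝ))^(n+1) * (1 - 1 / zetaR (n - 1)) + (3*2^n + 7*2^n*2^n) * (H:ℝ)^n := by
        linarith
end

section
/- Let D_2(H) be the number of integer polynomials A_2 x^2 + A_1 x + A_0 with A_2 ≠ 0, max(|A_0|,|A_1|,|A_2|) ≤ H, satisfying Dumas's criterion with respect to some prime. Then D_2(H) ≤ (2H)^3 (1 − ∏_p (1 − 1/p)^2(1 + 2/p)) + O(H^2 (log H)^2) as H → ∞. -/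
open Filter Polynomial Topology

set_option maxHeartbeats 1000000
open Finset

namespace SievePf
noncomputable section
open scoped Classical

def box (H : ℕ) : Finset ℤ := Finset.Icc (-(H:ℤ)) (H:ℤ)

lemma mem_box {H : ℕ} {x : ℤ} : x ∈ box H ↔ |x| ≤ (H:ℤ) := by
  simp [box, abs_le]

lemma card_box (H : ℕ) : (box H).card = 2*H+1 := by
  rw [box, Int.card_Icc]
  have : (H:ℤ) + 1 - -(H:ℤ) = ((2*H+1 : ℕ) : ℤ) := by push_cast; ring
  rw [this, Int.toNat_natCast]

/-- nonzero multiples of d in the box -/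
def dSet (H d : ℕ) : Finset ℤ := (box H).filter (fun x => x ≠ 0 ∧ (d:ℤ) ∣ x)

/-- all multiples of d in the box -/
def bSet (H d : ℕ) : Finset ℤ := (box H).filter (fun x => (d:ℤ) ∣ x)

lemma card_dSet (H : ℕ) {d : ℕ} (hd : 0 < d) : (dSet H d).card = 2 * (H / d) := by
  have hdz : (d:ℤ) ≠ 0 := by exact_mod_cast hd.ne'
  have key : dSet H d = ((box (H/d)).erase 0).image (fun y => y * (d:ℤ)) := by
    ext x
    simp only [dSet, mem_filter, mem_image, mem_erase, mem_box]
    constructor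
    · rintro ⟨hx, hx0, e, rfl⟩
      refine ⟨e, ⟨?_, ?_⟩, mul_comm _ _⟩
      · rintro rfl; simp at hx0
      · have h1 : |e| * (d:ℤ) ≤ (H:ℤ) := by
          calc |e| * (d:ℤ) = |(d:ℤ) * e| := by
                rw [abs_mul, mul_comm]; congr 1; exact (abs_of_nonneg (by positivity)).symm
            _ ≤ H := hx
        have h2 : ((H/d : ℕ) : ℤ) = (H:ℤ) / (d:ℤ) := Int.natCast_div H d
        rw [h2, Int.le_ediv_iff_mul_le (by exact_mod_cast hd)]
        exact h1
    · rintro ⟨e, ⟨he0, he⟩, rfl⟩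
      have hmd : ((H/d : ℕ) : ℤ) * d ≤ (H : ℤ) := by
        exact_mod_cast Nat.div_mul_le_self H d
      refine ⟨?_, by simp [he0, hdz, hd.ne'], Dvd.intro_left e rfl⟩
      rw [abs_mul, abs_of_nonneg (show (0:ℤ) ≤ d by positivity)]
      calc |e| * (d:ℤ) ≤ ((H/d:ℕ):ℤ) * d := by
            apply mul_le_mul_of_nonneg_right he (by positivity)
        _ ≤ H := hmd
  rw [key, Finset.card_image_of_injective _ (fun a b hab => by
        exact mul_right_cancel₀ hdz hab),
    Finset.card_erase_of_mem (by rw [mem_box]; simp; positivity), card_box]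
  omega

lemma card_bSet (H : ℕ) {d : ℕ} (hd : 0 < d) : (bSet H d).card = 2 * (H / d) + 1 := by
  have : bSet H d = insert (0:ℤ) (dSet H d) := by
    ext x
    simp only [bSet, dSet, mem_insert, mem_filter, mem_box]
    constructor
    · rintro ⟨h1, h2⟩
      by_cases hx : x = 0
      · exact Or.inl hx
      · exact Or.inr ⟨h1, hx, h2⟩
    · rintro (rfl | ⟨h1, h2, h3⟩)
      · simp
      · exact ⟨h1, h3⟩
  rw [this, Finset.card_insert_of_notMem (by simp [dSet]), card_dSet H hd]

/-- integers in box with exact p-adic valuation i -/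
def Aset (p H i : ℕ) : Finset ℤ :=
  (box H).filter (fun x => x ≠ 0 ∧ padicValInt p x = i)

lemma Aset_subset {p H i : ℕ} (hp : p.Prime) :
    Aset p H i ⊆ dSet H (p^i) := by
  intro x hx
  simp only [Aset, dSet, mem_filter] at hx ⊢
  obtain ⟨hb, hx0, hv⟩ := hx
  refine ⟨hb, hx0, ?_⟩
  have h1 : p ^ i ∣ x.natAbs := hv ▸ pow_padicValNat_dvd
  exact_mod_cast Int.natCast_dvd.mpr h1

lemma Aset_not_mem {p H i : ℕ} (hp : p.Prime) {x : ℤ} (hx : x ∈ Aset p H i) :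
    x ∉ dSet H (p^(i+1)) := by
  haveI : Fact p.Prime := ⟨hp⟩
  simp only [Aset, dSet, mem_filter] at hx ⊢
  obtain ⟨hb, hx0, hv⟩ := hx
  rintro ⟨-, -, hdvd⟩
  have h1 : p ^ (i+1) ∣ x.natAbs := by
    rw [← Int.natCast_dvd]; exact_mod_cast hdvd
  rw [← hv] at h1
  exact pow_succ_padicValNat_not_dvd (Int.natAbs_ne_zero.mpr hx0) h1

lemma card_Aset_add {p H i : ℕ} (hp : p.Prime) :
    (Aset p H i).card + 2 * (H / p^(i+1)) ≤ 2 * (H / p^i) := by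
  have hd1 : 0 < p ^ i := pow_pos hp.pos i
  have hd2 : 0 < p ^ (i+1) := pow_pos hp.pos (i+1)
  rw [← card_dSet H hd1, ← card_dSet H hd2]
  rw [← Finset.card_union_of_disjoint (Finset.disjoint_left.mpr
    (fun x hx => Aset_not_mem hp hx))]
  apply Finset.card_le_card
  apply Finset.union_subset (Aset_subset hp)
  intro x hx
  simp only [dSet, mem_filter] at hx ⊢
  refine ⟨hx.1, hx.2.1, dvd_trans ?_ hx.2.2⟩
  exact_mod_cast pow_dvd_pow (p:ℤ) (Nat.le_succ i)

/-- the triple set at prime p with exact valuations (i, j) -/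
def Ep (p H i j : ℕ) : Finset (ℤ × ℤ × ℤ) :=
  (Aset p H i) ×ˢ ((bSet H (p^((i+j+1)/2))) ×ˢ (Aset p H j))

/-- triples satisfying the Dumas consequences at p -/
def Fp (p H : ℕ) : Finset (ℤ × ℤ × ℤ) :=
  ((box H) ×ˢ (box H) ×ˢ (box H)).filter (fun t =>
    t.1 ≠ 0 ∧ t.2.2 ≠ 0 ∧ Odd (padicValInt p t.1 + padicValInt p t.2.2) ∧
    (p:ℤ)^((padicValInt p t.1 + padicValInt p t.2.2 + 1)/2) ∣ t.2.1)

lemma val_le_log {p H : ℕ} (hp : p.Prime) {x : ℤ} (hx : x ≠ 0) (hb : x ∈ box H) :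
    padicValInt p x ≤ Nat.log 2 H := by
  apply Nat.le_log_of_pow_le one_lt_two
  calc 2 ^ padicValInt p x ≤ p ^ padicValInt p x :=
        Nat.pow_le_pow_left hp.two_le _
    _ ≤ x.natAbs := Nat.le_of_dvd (Int.natAbs_pos.mpr hx) pow_padicValNat_dvd
    _ ≤ H := by
        rw [mem_box] at hb
        have := Int.abs_eq_natAbs x ▸ hb
        exact_mod_cast this

def Sidx (L : ℕ) : Finset (ℕ × ℕ) :=
  ((Finset.range (L+1)) ×ˢ (Finset.range (L+1))).filter (fun ij => Odd (ij.1 + ij.2))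

lemma Fp_subset (p H : ℕ) (hp : p.Prime) :
    Fp p H ⊆ (Sidx (Nat.log 2 H)).biUnion (fun ij => Ep p H ij.1 ij.2) := by
  intro t ht
  simp only [Fp, mem_filter, Finset.mem_product] at ht
  obtain ⟨⟨hba, hbb, hbc⟩, ha0, hc0, hodd, hdvd⟩ := ht
  set i := padicValInt p t.1 with hi
  set j := padicValInt p t.2.2 with hj
  apply Finset.mem_biUnion.mpr
  refine ⟨(i, j), ?_, ?_⟩
  · simp only [Sidx, mem_filter, Finset.mem_product, Finset.mem_range]
    exact ⟨⟨Nat.lt_succ_of_le (val_le_log hp ha0 hba),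
      Nat.lt_succ_of_le (val_le_log hp hc0 hbc)⟩, hodd⟩
  · simp only [Ep, Finset.mem_product]
    refine ⟨?_, ?_, ?_⟩
    · simp only [Aset, mem_filter]; exact ⟨hba, ha0, hi.symm⟩
    · simp only [bSet, mem_filter]
      refine ⟨hbb, ?_⟩
      · push_cast
        exact hdvd
    · simp only [Aset, mem_filter]; exact ⟨hbc, hc0, hj.symm⟩

lemma card_Fp_le (p H : ℕ) (hp : p.Prime) :
    (Fp p H).card ≤ ∑ ij ∈ Sidx (Nat.log 2 H), (Ep p H ij.1 ij.2).card :=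
  le_trans (Finset.card_le_card (Fp_subset p H hp)) (Finset.card_biUnion_le)

lemma card_Ep (p H i j : ℕ) :
    (Ep p H i j).card = (Aset p H i).card * ((bSet H (p^((i+j+1)/2))).card * (Aset p H j).card) := by
  simp [Ep]

lemma nat_div_cast_le (n d : ℕ) : ((n/d : ℕ) : ℝ) ≤ (n:ℝ)/d := Nat.cast_div_le

lemma nat_div_cast_ge (n : ℕ) {d : ℕ} (hd : 0 < d) : (n:ℝ)/d - 1 ≤ ((n/d : ℕ) : ℝ) := by
  have h1 : n < d * (n/d) + d := by
    have := Nat.div_add_mod n d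
    have := Nat.mod_lt n hd
    omega
  have h2 : (n:ℝ) < d * ((n/d : ℕ):ℝ) + d := by exact_mod_cast h1
  have hd' : (0:ℝ) < d := by exact_mod_cast hd
  rw [div_sub_one hd'.ne', div_le_iff₀ hd']
  nlinarith

lemma card_Aset_real {p H : ℕ} (hp : p.Prime) (i : ℕ) :
    ((Aset p H i).card : ℝ) ≤ 2*H*(1-1/p)*(1/p)^i + 2 := by
  have hp0 : (0:ℝ) < p := by exact_mod_cast hp.pos
  have hpi : (0:ℝ) < (p:ℝ)^i := by positivity
  have h1 := card_Aset_add (H := H) hp (i := i)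
  have h2 : ((Aset p H i).card : ℝ) ≤ 2 * ((H / p^i : ℕ) : ℝ) - 2 * ((H / p^(i+1) : ℕ):ℝ) := by
    have := (Nat.cast_le (α := ℝ)).mpr h1
    push_cast at this ⊢
    linarith
  have h3 : ((H / p^i : ℕ) : ℝ) ≤ (H:ℝ)/(p:ℝ)^i := by
    have := nat_div_cast_le H (p^i); push_cast at this; exact this
  have h4 : (H:ℝ)/(p:ℝ)^(i+1) - 1 ≤ ((H / p^(i+1) : ℕ) : ℝ) := by
    have := nat_div_cast_ge H (pow_pos hp.pos (i+1)); push_cast at this; exact this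
  have key : ((Aset p H i).card : ℝ) ≤ 2*(H:ℝ)/(p:ℝ)^i - 2*(H:ℝ)/(p:ℝ)^(i+1) + 2 := by
    have e1 : 2*(H:ℝ)/(p:ℝ)^i = 2*((H:ℝ)/(p:ℝ)^i) := by ring
    have e2 : 2*(H:ℝ)/(p:ℝ)^(i+1) = 2*((H:ℝ)/(p:ℝ)^(i+1)) := by ring
    rw [e1, e2]; linarith
  calc ((Aset p H i).card : ℝ) ≤ 2*(H:ℝ)/(p:ℝ)^i - 2*(H:ℝ)/(p:ℝ)^(i+1) + 2 := key
    _ = 2*H*(1-1/p)*(1/p)^i + 2 := by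
        rw [one_div, inv_pow, pow_succ]
        field_simp

lemma card_bSet_real {p H : ℕ} (hp : p.Prime) (k : ℕ) :
    ((bSet H (p^k)).card : ℝ) ≤ 2*H*(1/p)^k + 1 := by
  have hp0 : (0:ℝ) < p := by exact_mod_cast hp.pos
  rw [card_bSet H (pow_pos hp.pos k)]
  have h3 : ((H / p^k : ℕ) : ℝ) ≤ (H:ℝ)/(p:ℝ)^k := by
    have := nat_div_cast_le H (p^k); push_cast at this; exact this
  push_cast
  have : 2*H*(1/p:ℝ)^k = 2*((H:ℝ)/(p:ℝ)^k) := by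
    rw [one_div, inv_pow]
    field_simp
  rw [this]
  linarith

/-- partial sums of (t+1) r^t -/
lemma geom_sq {r : ℝ} (h0 : 0 ≤ r) (h1 : r < 1) (n : ℕ) :
    ∑ t ∈ Finset.range n, ((t:ℝ)+1) * r^t ≤ 1/(1-r)^2 := by
  have hsum1 : Summable (fun t : ℕ => (t:ℝ) * r^t) := by
    have := summable_pow_mul_geometric_of_norm_lt_one (R := ℝ) 1
      (r := r) (by rwa [Real.norm_eq_abs, abs_of_nonneg h0])
    simpa using this
  have hsum2 : Summable (fun t : ℕ => r^t) := summable_geometric_of_lt_one h0 h1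
  have hsum : Summable (fun t : ℕ => ((t:ℝ)+1) * r^t) := by
    have := hsum1.add hsum2
    convert this using 2 with t
    ring
  have htsum : ∑' t : ℕ, ((t:ℝ)+1) * r^t = 1/(1-r)^2 := by
    have e : ∀ t : ℕ, ((t:ℝ)+1) * r^t = (t:ℝ)*r^t + r^t := fun t => by ring
    rw [tsum_congr e, Summable.tsum_add hsum1 hsum2,
      tsum_coe_mul_geometric_of_norm_lt_one (by rwa [Real.norm_eq_abs, abs_of_nonneg h0]),
      tsum_geometric_of_lt_one h0 h1]
    have h2 : (1:ℝ) - r > 0 := by linarith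
    field_simp
    ring
  rw [← htsum]
  exact hsum.sum_le_tsum _ (fun t _ => by positivity)

lemma fiber_card_le (L y : ℕ) :
    ((Sidx L).filter (fun ij => ij.1 + ij.2 = y)).card ≤ y + 1 := by
  have h := Finset.card_le_card_of_injOn (Prod.fst)
    (s := (Sidx L).filter (fun ij => ij.1 + ij.2 = y)) (t := Finset.range (y+1))
    (fun a ha => by
      simp only [Finset.mem_coe, mem_filter, Finset.mem_range] at ha ⊢
      omega)
    (fun a ha b hb hab => by
      simp only [Finset.coe_filter, Set.mem_setOf_eq] at ha hb
      exact Prod.ext hab (by omega))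
  simpa using h

lemma sum_S_le (L : ℕ) (f : ℕ → ℝ) (hf : ∀ s, 0 ≤ f s) :
    ∑ ij ∈ Sidx L, f (ij.1 + ij.2) ≤
      ∑ t ∈ Finset.range (L+1), (((2*t+1 : ℕ):ℝ)+1) * f (2*t+1) := by
  have hmaps : ∀ ij ∈ Sidx L, ij.1 + ij.2 ∈ (Finset.range (2*L+1)).filter (fun s => Odd s) := by
    intro ij hij
    simp only [Sidx, mem_filter, Finset.mem_product, Finset.mem_range] at hij ⊢
    exact ⟨by omega, hij.2⟩
  rw [← Finset.sum_fiberwise_of_maps_to hmaps (fun ij => f (ij.1 + ij.2))]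
  have step1 : ∀ y ∈ (Finset.range (2*L+1)).filter (fun s => Odd s),
      ∑ ij ∈ (Sidx L).filter (fun ij => ij.1 + ij.2 = y), f (ij.1 + ij.2)
        ≤ ((y:ℝ)+1) * f y := by
    intro y hy
    have h0 : ∑ ij ∈ (Sidx L).filter (fun ij => ij.1 + ij.2 = y), f (ij.1 + ij.2)
        = ∑ ij ∈ (Sidx L).filter (fun ij => ij.1 + ij.2 = y), f y := by
      apply Finset.sum_congr rfl
      intro x hx
      simp only [mem_filter] at hx
      rw [hx.2]
    rw [h0, Finset.sum_const, nsmul_eq_mul]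
    apply mul_le_mul_of_nonneg_right _ (hf y)
    exact_mod_cast fiber_card_le L y
  calc ∑ y ∈ (Finset.range (2*L+1)).filter (fun s => Odd s),
        ∑ ij ∈ (Sidx L).filter (fun ij => ij.1 + ij.2 = y), f (ij.1 + ij.2)
      ≤ ∑ y ∈ (Finset.range (2*L+1)).filter (fun s => Odd s), ((y:ℝ)+1) * f y :=
        Finset.sum_le_sum step1
    _ ≤ ∑ y ∈ (Finset.range (L+1)).image ((fun t => 2*t+1) : ℕ → ℕ), ((y:ℝ)+1) * f y := by
        apply Finset.sum_le_sum_of_subset_of_nonneg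
        · intro y hy
          simp only [mem_filter, Finset.mem_range, Finset.mem_image] at hy ⊢
          obtain ⟨hlt, hodd⟩ := hy
          obtain ⟨k, hk⟩ := hodd
          exact ⟨k, by omega, by omega⟩
        · intro y _ _
          have := hf y
          positivity
    _ = ∑ t ∈ Finset.range (L+1), (((2*t+1 : ℕ):ℝ)+1) * f (2*t+1) := by
        rw [Finset.sum_image (fun a _ b _ hab => by omega)]

lemma sum_G1 {q : ℝ} (h0 : 0 ≤ q) (h2 : q ≤ 1/2) (L : ℕ) :
    ∑ ij ∈ Sidx L, q^((ij.1 + ij.2) + (ij.1 + ij.2 + 1)/2) ≤ 2*q^2/(1-q^3)^2 := by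
  have h1 : q < 1 := by linarith
  have h3 : q^3 < 1 := by
    have := pow_lt_one₀ h0 h1 (n := 3) (by norm_num)
    exact this
  have h30 : 0 ≤ q^3 := by positivity
  calc ∑ ij ∈ Sidx L, q^((ij.1 + ij.2) + (ij.1 + ij.2 + 1)/2)
      ≤ ∑ t ∈ Finset.range (L+1), (((2*t+1 : ℕ):ℝ)+1) * q^((2*t+1) + (2*t+1+1)/2) :=
        sum_S_le L (fun s => q^(s + (s+1)/2)) (fun s => by positivity)
    _ = ∑ t ∈ Finset.range (L+1), 2*q^2 * (((t:ℝ)+1) * (q^3)^t) := by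
        apply Finset.sum_congr rfl
        intro t _
        have he : (2*t+1) + (2*t+1+1)/2 = 3*t+2 := by omega
        rw [he]
        rw [pow_add, pow_mul]
        push_cast
        ring
    _ = 2*q^2 * ∑ t ∈ Finset.range (L+1), ((t:ℝ)+1) * (q^3)^t := by
        rw [Finset.mul_sum]
    _ ≤ 2*q^2 * (1/(1-q^3)^2) := by
        apply mul_le_mul_of_nonneg_left (geom_sq h30 h3 (L+1)) (by positivity)
    _ = 2*q^2/(1-q^3)^2 := by ring

lemma sum_G2 {q : ℝ} (h0 : 0 ≤ q) (h2 : q ≤ 1/2) (L : ℕ) :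
    ∑ ij ∈ Sidx L, q^((ij.1 + ij.2 + 1)/2) ≤ 8*q := by
  have h1 : q < 1 := by linarith
  calc ∑ ij ∈ Sidx L, q^((ij.1 + ij.2 + 1)/2)
      ≤ ∑ t ∈ Finset.range (L+1), (((2*t+1 : ℕ):ℝ)+1) * q^((2*t+1+1)/2) :=
        sum_S_le L (fun s => q^((s+1)/2)) (fun s => by positivity)
    _ = ∑ t ∈ Finset.range (L+1), 2*q * (((t:ℝ)+1) * q^t) := by
        apply Finset.sum_congr rfl
        intro t _
        have he : (2*t+1+1)/2 = t+1 := by omega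
        rw [he, pow_succ]
        push_cast
        ring
    _ = 2*q * ∑ t ∈ Finset.range (L+1), ((t:ℝ)+1) * q^t := by
        rw [Finset.mul_sum]
    _ ≤ 2*q * (1/(1-q)^2) := by
        apply mul_le_mul_of_nonneg_left (geom_sq h0 h1 (L+1)) (by positivity)
    _ ≤ 8*q := by
        have hq : (1/2:ℝ) ≤ 1 - q := by linarith
        have h4 : (1/4:ℝ) ≤ (1-q)^2 := by nlinarith
        have : 1/(1-q)^2 ≤ 4 := by
          rw [div_le_iff₀ (by nlinarith)]
          linarith
        nlinarith

lemma card_Sidx (L : ℕ) : (Sidx L).card ≤ (L+1)^2 := by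
  calc (Sidx L).card ≤ ((Finset.range (L+1)) ×ˢ (Finset.range (L+1))).card :=
        Finset.card_filter_le _ _
    _ = (L+1)^2 := by simp [sq]

lemma pointwise_bound {H : ℕ} (hH : 2 ≤ H) {q : ℝ} (h0 : 0 ≤ q) (h2 : q ≤ 1/2)
    {i j : ℕ} (hij : 1 ≤ i + j) :
    (2*(H:ℝ)*(1-q)*q^i + 2) * ((2*(H:ℝ)*q^((i+j+1)/2) + 1) * (2*(H:ℝ)*(1-q)*q^j + 2)) ≤
      8*(H:ℝ)^3*(1-q)^2 * q^((i+j) + (i+j+1)/2) + 24*(H:ℝ)^2 * q^((i+j+1)/2) + 20*(H:ℝ) := by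
  have hq1 : q ≤ 1 := by linarith
  have hmq0 : 0 ≤ 1 - q := by linarith
  have hmq1 : 1 - q ≤ 1 := by linarith
  have hHr : (2:ℝ) ≤ (H:ℝ) := by exact_mod_cast hH
  have hH0 : (0:ℝ) ≤ (H:ℝ) := by linarith
  set k := (i+j+1)/2 with hk
  set u := 2*(H:ℝ)*(1-q)*q^i with hu
  set v := 2*(H:ℝ)*(1-q)*q^j with hv
  set w := 2*(H:ℝ)*q^k with hw
  have hqi0 : 0 ≤ q^i := pow_nonneg h0 i
  have hqj0 : 0 ≤ q^j := pow_nonneg h0 j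
  have hqk0 : 0 ≤ q^k := pow_nonneg h0 k
  have hqi : q^i ≤ 1 := pow_le_one₀ h0 hq1
  have hqj : q^j ≤ 1 := pow_le_one₀ h0 hq1
  have hu0 : 0 ≤ u := by rw [hu]; have : (0:ℝ) ≤ 2*(H:ℝ)*(1-q) := by nlinarith
                         exact mul_nonneg this hqi0
  have hv0 : 0 ≤ v := by rw [hv]; have : (0:ℝ) ≤ 2*(H:ℝ)*(1-q) := by nlinarith
                         exact mul_nonneg this hqj0
  have hw0 : 0 ≤ w := by rw [hw]; exact mul_nonneg (by nlinarith) hqk0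
  have hui : u ≤ 2*(H:ℝ)*q^i := by rw [hu]; nlinarith
  have hvj : v ≤ 2*(H:ℝ)*q^j := by rw [hv]; nlinarith
  have hu2 : u ≤ 2*(H:ℝ) := hui.trans (by nlinarith)
  have hv2 : v ≤ 2*(H:ℝ) := hvj.trans (by nlinarith)
  have hple : ∀ m n : ℕ, n ≤ m → q^m ≤ q^n := fun m n h => pow_le_pow_of_le_one h0 hq1 h
  have hkij : k ≤ i + j := by omega
  have hik : k ≤ i + k := by omega
  have hjk : k ≤ j + k := by omega
  -- main term
  have hmain : u*v*w = 8*(H:ℝ)^3*(1-q)^2 * q^((i+j) + k) := by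
    rw [hu, hv, hw, pow_add, pow_add]
    ring
  have huv : u*v ≤ 4*(H:ℝ)^2 * q^k := by
    calc u*v ≤ (2*(H:ℝ)*q^i) * (2*(H:ℝ)*q^j) :=
          mul_le_mul hui hvj hv0 (by positivity)
      _ = 4*(H:ℝ)^2 * q^(i+j) := by rw [pow_add]; ring
      _ ≤ 4*(H:ℝ)^2 * q^k := by
          have := hple (i+j) k hkij
          nlinarith
  have huw : u*w ≤ 4*(H:ℝ)^2 * q^k := by
    calc u*w ≤ (2*(H:ℝ)*q^i) * (2*(H:ℝ)*q^k) :=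
          mul_le_mul hui le_rfl (by positivity) (by positivity)
      _ = 4*(H:ℝ)^2 * q^(i+k) := by rw [pow_add]; ring
      _ ≤ 4*(H:ℝ)^2 * q^k := by
          have := hple (i+k) k hik
          nlinarith
  have hvw : v*w ≤ 4*(H:ℝ)^2 * q^k := by
    calc v*w ≤ (2*(H:ℝ)*q^j) * (2*(H:ℝ)*q^k) :=
          mul_le_mul hvj le_rfl (by positivity) (by positivity)
      _ = 4*(H:ℝ)^2 * q^(j+k) := by rw [pow_add]; ring
      _ ≤ 4*(H:ℝ)^2 * q^k := by
          have := hple (j+k) k hjk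
          nlinarith
  have hw4 : 4*w ≤ 4*(H:ℝ)^2*q^k := by
    rw [hw]
    nlinarith
  have hconst : 2*u + 2*v + 4 ≤ 20*(H:ℝ) := by nlinarith
  have expand : (u+2)*((w+1)*(v+2)) =
      u*v*w + (u*v + 2*(u*w) + 2*(v*w) + 4*w) + (2*u + 2*v + 4) := by ring
  rw [expand, hmain]
  have hmid : u*v + 2*(u*w) + 2*(v*w) + 4*w ≤ 24*(H:ℝ)^2 * q^k := by linarith
  linarith

lemma halg_lemma {p : ℕ} (hp : p.Prime) :
    (1-(1/(p:ℝ)))^2 * (2*(1/(p:ℝ))^2/(1-(1/(p:ℝ))^3)^2) = 2*(p:ℝ)^2/((p:ℝ)^2+(p:ℝ)+1)^2 := by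
  have hp2 : (2:ℝ) ≤ (p:ℝ) := by exact_mod_cast hp.two_le
  have hp0 : (0:ℝ) < (p:ℝ) := by linarith
  set q : ℝ := 1/(p:ℝ) with hq
  have h2 : q ≤ 1/2 := by
    rw [hq, div_le_div_iff₀ hp0 (by norm_num)]
    linarith
  have h0 : 0 < q := by rw [hq]; positivity
  have h1q : (1:ℝ) - q ≠ 0 := by intro h; rw [sub_eq_zero] at h; rw [← h] at h2; norm_num at h2
  have hs : (0:ℝ) < 1 + q + q^2 := by positivity
  have step1 : (1-q)^2 * (2*q^2/(1-q^3)^2) = 2*q^2/(1+q+q^2)^2 := by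
    rw [show (1:ℝ) - q^3 = (1-q)*(1+q+q^2) by ring, mul_pow]
    rw [eq_div_iff (pow_ne_zero 2 hs.ne')]
    field_simp
  rw [step1, hq]
  have hps : (0:ℝ) < (p:ℝ)^2+(p:ℝ)+1 := by positivity
  field_simp

lemma master {p H : ℕ} (hp : p.Prime) (hH : 2 ≤ H) :
    ((Fp p H).card : ℝ) ≤ 8*(H:ℝ)^3 * (2*(p:ℝ)^2/((p:ℝ)^2+(p:ℝ)+1)^2)
      + 192*(H:ℝ)^2/(p:ℝ) + 20*(H:ℝ)*((Nat.log 2 H : ℝ)+1)^2 := by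
  have hp2 : (2:ℝ) ≤ (p:ℝ) := by exact_mod_cast hp.two_le
  have hp0 : (0:ℝ) < (p:ℝ) := by linarith
  set q : ℝ := 1/(p:ℝ) with hqdef
  have h0 : 0 ≤ q := by positivity
  have h2 : q ≤ 1/2 := by
    rw [hqdef, div_le_div_iff₀ hp0 (by norm_num)]
    linarith
  have hmq0 : (0:ℝ) ≤ 1 - q := by linarith
  set L := Nat.log 2 H with hL
  have step1 : ((Fp p H).card : ℝ) ≤ ∑ ij ∈ Sidx L, ((Ep p H ij.1 ij.2).card : ℝ) := by
    have := card_Fp_le p H hp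
    exact_mod_cast this
  have step2 : ∀ ij ∈ Sidx L, ((Ep p H ij.1 ij.2).card : ℝ) ≤
      8*(H:ℝ)^3*(1-q)^2 * q^((ij.1+ij.2) + (ij.1+ij.2+1)/2)
        + 24*(H:ℝ)^2 * q^((ij.1+ij.2+1)/2) + 20*(H:ℝ) := by
    rintro ⟨i, j⟩ hij
    have hij1 : 1 ≤ i + j := by
      simp only [Sidx, mem_filter] at hij
      rcases hij.2 with ⟨m, hm⟩
      omega
    have e1 : ((Ep p H i j).card : ℝ) =
        ((Aset p H i).card : ℝ) * (((bSet H (p^((i+j+1)/2))).card : ℝ) * ((Aset p H j).card : ℝ)) := by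
      rw [card_Ep]
      push_cast
      ring
    rw [e1]
    have hb1 : ((Aset p H i).card : ℝ) ≤ 2*(H:ℝ)*(1-q)*q^i + 2 := by
      rw [hqdef]; exact_mod_cast card_Aset_real (H := H) hp i
    have hb2 : ((Aset p H j).card : ℝ) ≤ 2*(H:ℝ)*(1-q)*q^j + 2 := by
      rw [hqdef]; exact_mod_cast card_Aset_real (H := H) hp j
    have hb3 : ((bSet H (p^((i+j+1)/2))).card : ℝ) ≤ 2*(H:ℝ)*q^((i+j+1)/2) + 1 := by
      rw [hqdef]; exact_mod_cast card_bSet_real (H := H) hp ((i+j+1)/2)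
    have hqi0 : (0:ℝ) ≤ q^i := pow_nonneg h0 i
    have hqj0 : (0:ℝ) ≤ q^j := pow_nonneg h0 j
    have hqk0 : (0:ℝ) ≤ q^((i+j+1)/2) := pow_nonneg h0 _
    have hH0 : (0:ℝ) ≤ (H:ℝ) := by positivity
    have hx2 : (0:ℝ) ≤ 2*(H:ℝ)*(1-q)*q^j + 2 := by
      have : (0:ℝ) ≤ 2*(H:ℝ)*(1-q)*q^j := mul_nonneg (by nlinarith) hqj0
      linarith
    have hz : (0:ℝ) ≤ 2*(H:ℝ)*q^((i+j+1)/2) + 1 := by positivity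
    have hprod : ((Aset p H i).card : ℝ) * (((bSet H (p^((i+j+1)/2))).card : ℝ) * ((Aset p H j).card : ℝ))
        ≤ (2*(H:ℝ)*(1-q)*q^i + 2) * ((2*(H:ℝ)*q^((i+j+1)/2) + 1) * (2*(H:ℝ)*(1-q)*q^j + 2)) := by
      apply mul_le_mul hb1 _ (by positivity) _
      · apply mul_le_mul hb3 hb2 (by positivity) hz
      · have : (0:ℝ) ≤ 2*(H:ℝ)*(1-q)*q^i := mul_nonneg (by nlinarith) hqi0
        linarith
    exact hprod.trans (pointwise_bound hH h0 h2 hij1)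
  have step3 : ((Fp p H).card : ℝ) ≤
      8*(H:ℝ)^3*(1-q)^2 * (∑ ij ∈ Sidx L, q^((ij.1+ij.2) + (ij.1+ij.2+1)/2))
        + 24*(H:ℝ)^2 * (∑ ij ∈ Sidx L, q^((ij.1+ij.2+1)/2)) + 20*(H:ℝ)*(Sidx L).card := by
    calc ((Fp p H).card : ℝ) ≤ ∑ ij ∈ Sidx L, ((Ep p H ij.1 ij.2).card : ℝ) := step1
      _ ≤ ∑ ij ∈ Sidx L, (8*(H:ℝ)^3*(1-q)^2 * q^((ij.1+ij.2) + (ij.1+ij.2+1)/2)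
            + 24*(H:ℝ)^2 * q^((ij.1+ij.2+1)/2) + 20*(H:ℝ)) := Finset.sum_le_sum step2
      _ = _ := by
          rw [Finset.sum_add_distrib, Finset.sum_add_distrib, ← Finset.mul_sum,
            ← Finset.mul_sum, Finset.sum_const, nsmul_eq_mul]
          ring
  have hG1 := sum_G1 h0 h2 L
  have hG2 := sum_G2 h0 h2 L
  have hcS : ((Sidx L).card : ℝ) ≤ ((L:ℝ)+1)^2 := by
    exact_mod_cast card_Sidx L
  have hmain : 8*(H:ℝ)^3*(1-q)^2 * (∑ ij ∈ Sidx L, q^((ij.1+ij.2) + (ij.1+ij.2+1)/2))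
      ≤ 8*(H:ℝ)^3 * (2*(p:ℝ)^2/((p:ℝ)^2+(p:ℝ)+1)^2) := by
    have h8 : (0:ℝ) ≤ 8*(H:ℝ)^3*(1-q)^2 := by positivity
    calc 8*(H:ℝ)^3*(1-q)^2 * (∑ ij ∈ Sidx L, q^((ij.1+ij.2) + (ij.1+ij.2+1)/2))
        ≤ 8*(H:ℝ)^3*(1-q)^2 * (2*q^2/(1-q^3)^2) := mul_le_mul_of_nonneg_left hG1 h8
      _ = 8*(H:ℝ)^3 * ((1-q)^2 * (2*q^2/(1-q^3)^2)) := by ring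
      _ = 8*(H:ℝ)^3 * (2*(p:ℝ)^2/((p:ℝ)^2+(p:ℝ)+1)^2) := by
          rw [hqdef, halg_lemma hp]
  have hsec : 24*(H:ℝ)^2 * (∑ ij ∈ Sidx L, q^((ij.1+ij.2+1)/2)) ≤ 192*(H:ℝ)^2/(p:ℝ) := by
    calc 24*(H:ℝ)^2 * (∑ ij ∈ Sidx L, q^((ij.1+ij.2+1)/2)) ≤ 24*(H:ℝ)^2 * (8*q) :=
          mul_le_mul_of_nonneg_left hG2 (by positivity)
      _ = 192*(H:ℝ)^2/(p:ℝ) := by rw [hqdef]; ring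
  have hthird : 20*(H:ℝ)*((Sidx L).card : ℝ) ≤ 20*(H:ℝ)*((L:ℝ)+1)^2 :=
    mul_le_mul_of_nonneg_left hcS (by positivity)
  calc ((Fp p H).card : ℝ) ≤ _ := step3
    _ ≤ 8*(H:ℝ)^3 * (2*(p:ℝ)^2/((p:ℝ)^2+(p:ℝ)+1)^2) + 192*(H:ℝ)^2/(p:ℝ)
        + 20*(H:ℝ)*((L:ℝ)+1)^2 := by linarith
    _ = _ := by rw [hL]

lemma abs_le_of_natAbs_le {H : ℕ} {x : ℤ} (h : x.natAbs ≤ H) : x ∈ box H := by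
  rw [mem_box]
  rw [Int.abs_eq_natAbs]
  exact_mod_cast h

lemma dumas_mem_Fp {p H : ℕ} (hp : p.Prime) {A : ℕ → ℤ}
    (hht : ∀ i, (A i).natAbs ≤ H) (hd : DumasAt p 2 A) :
    (A 0, A 1, A 2) ∈ Fp p H ∧ p ≤ H := by
  obtain ⟨h0, h2, hmid, hseg⟩ := hd
  set v0 := padicValInt p (A 0) with hv0
  set v2 := padicValInt p (A 2) with hv2
  have hodd : Odd (v0 + v2) := by
    rcases Nat.even_or_odd (v0 + v2) with he | ho
    · exfalso
      obtain ⟨m, hm⟩ := he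
      apply hseg
      refine ⟨1, (m:ℤ), by norm_num, by norm_num, ?_⟩
      simp only [vp]
      push_cast
      have : (v0:ℤ) + v2 = 2*m := by exact_mod_cast hm.symm ▸ (by push_cast; ring : ((m+m:ℕ):ℤ) = 2*m)
      linarith
    · exact ho
  have hdvd : (p:ℤ)^((v0 + v2 + 1)/2) ∣ A 1 := by
    by_cases h1 : A 1 = 0
    · rw [h1]; exact dvd_zero _
    · have hm := hmid 1 (by norm_num) (by norm_num) h1
      simp only [vp] at hm
      have hge : v0 + v2 ≤ 2 * padicValInt p (A 1) := by
        have : ((v0:ℤ) + v2 : ℤ) ≤ 2 * (padicValInt p (A 1) : ℤ) := by push_cast at hm ⊢; linarith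
        exact_mod_cast this
      have hk : (v0 + v2 + 1)/2 ≤ padicValInt p (A 1) := by omega
      calc (p:ℤ)^((v0 + v2 + 1)/2) ∣ (p:ℤ)^(padicValInt p (A 1)) := pow_dvd_pow _ hk
        _ ∣ A 1 := by
            rw [show ((p:ℤ))^(padicValInt p (A 1)) = ((p^(padicValInt p (A 1)) : ℕ) : ℤ) by push_cast; ring]
            rw [Int.natCast_dvd]
            exact pow_padicValNat_dvd
  have hple : p ≤ H := by
    have hpos : 0 < v0 + v2 := by
      rcases hodd with ⟨m, hm⟩; omega
    have key : ∀ x : ℤ, x ≠ 0 → 0 < padicValInt p x → p ≤ H → True := fun _ _ _ _ => trivial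
    rcases Nat.eq_zero_or_pos v0 with hv | hv
    · have hv2pos : 0 < v2 := by omega
      have : p ∣ (A 2).natAbs := by
        calc p = p^1 := (pow_one p).symm
          _ ∣ p^v2 := pow_dvd_pow p hv2pos
          _ ∣ (A 2).natAbs := pow_padicValNat_dvd
      exact le_trans (Nat.le_of_dvd (Int.natAbs_pos.mpr h2) this) (hht 2)
    · have : p ∣ (A 0).natAbs := by
        calc p = p^1 := (pow_one p).symm
          _ ∣ p^v0 := pow_dvd_pow p hv
          _ ∣ (A 0).natAbs := pow_padicValNat_dvd
      exact le_trans (Nat.le_of_dvd (Int.natAbs_pos.mpr h0) this) (hht 0)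
  refine ⟨?_, hple⟩
  simp only [Fp, mem_filter, Finset.mem_product]
  exact ⟨⟨abs_le_of_natAbs_le (hht 0), abs_le_of_natAbs_le (hht 1), abs_le_of_natAbs_le (hht 2)⟩,
    h0, h2, hodd, hdvd⟩

lemma Dcount_le (H : ℕ) :
    Dcount 2 H ≤ ∑ p ∈ Nat.primesBelow (H+1), (Fp p H).card := by
  classical
  set U := (Nat.primesBelow (H+1)).biUnion (fun p => Fp p H) with hU
  set S := {A : ℕ → ℤ | A 2 ≠ 0 ∧ (∀ i, (A i).natAbs ≤ H) ∧ (∀ i, 2 < i → A i = 0) ∧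
    ∃ p : ℕ, p.Prime ∧ DumasAt p 2 A} with hS
  have himg : (fun A : ℕ → ℤ => (A 0, A 1, A 2)) '' S ⊆ ↑U := by
    rintro t ⟨A, hA, rfl⟩
    obtain ⟨hA2, hht, hhigh, p, hp, hd⟩ := hA
    obtain ⟨hmem, hple⟩ := dumas_mem_Fp hp hht hd
    simp only [hU, Finset.coe_biUnion, Set.mem_iUnion]
    exact ⟨p, by simpa using Nat.mem_primesBelow.mpr ⟨Nat.lt_succ_of_le hple, hp⟩, hmem⟩
  have hinj : Set.InjOn (fun A : ℕ → ℤ => (A 0, A 1, A 2)) S := by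
    rintro A hA B hB hAB
    simp only [Prod.mk.injEq] at hAB
    funext i
    match i with
    | 0 => exact hAB.1
    | 1 => exact hAB.2.1
    | 2 => exact hAB.2.2
    | (n+3) => rw [hA.2.2.1 (n+3) (by omega), hB.2.2.1 (n+3) (by omega)]
  calc Dcount 2 H = S.ncard := rfl
    _ = ((fun A : ℕ → ℤ => (A 0, A 1, A 2)) '' S).ncard := (Set.ncard_image_of_injOn hinj).symm
    _ ≤ (↑U : Set (ℤ × ℤ × ℤ)).ncard := Set.ncard_le_ncard himg U.finite_toSet
    _ = U.card := Set.ncard_coe_finset U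
    _ ≤ ∑ p ∈ Nat.primesBelow (H+1), (Fp p H).card := Finset.card_biUnion_le

/-! ### The prime product bound -/

lemma primeProd_le : primeProd ≤ 10/27 := by
  set f : Nat.Primes → ℝ := fun p => (1 - 1 / ((p : ℕ) : ℝ)) ^ 2 * (1 + 2 / ((p : ℕ) : ℝ)) with hf
  have hp2 : ∀ p : Nat.Primes, (2:ℝ) ≤ ((p:ℕ):ℝ) := fun p => by exact_mod_cast p.2.two_le
  have hf0 : ∀ p : Nat.Primes, 0 ≤ f p := by
    intro p
    have := hp2 p
    have h1 : (0:ℝ) ≤ 1 + 2/((p:ℕ):ℝ) := by positivity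
    positivity
  have hf1 : ∀ p : Nat.Primes, f p ≤ 1 := by
    intro p
    have h2 := hp2 p
    have hq0 : (0:ℝ) < 1/((p:ℕ):ℝ) := by positivity
    have hq2 : 1/((p:ℕ):ℝ) ≤ 1/2 := by
      rw [div_le_div_iff₀ (by linarith) (by norm_num)]
      linarith
    have e2 : f p = (1 - 1/((p:ℕ):ℝ))^2 * (1 + 2/((p:ℕ):ℝ)) := rfl
    have h2q : (2:ℝ)/((p:ℕ):ℝ) = 2*(1/((p:ℕ):ℝ)) := by ring
    rw [e2, h2q]
    nlinarith [sq_nonneg (1/((p:ℕ):ℝ))]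
  set g : Finset Nat.Primes → ℝ := fun s => ∏ p ∈ s, f p with hg
  have hant : Antitone g := by
    intro s t hst
    rw [hg]
    simp only
    rw [← Finset.prod_sdiff hst]
    apply mul_le_of_le_one_left (Finset.prod_nonneg (fun p _ => hf0 p))
    exact Finset.prod_le_one (fun p _ => hf0 p) (fun p _ => hf1 p)
  have hbdd : BddBelow (Set.range g) := by
    refine ⟨0, ?_⟩
    rintro x ⟨s, rfl⟩
    exact Finset.prod_nonneg (fun p _ => hf0 p)
  have hhp : HasProd f (⨅ s, g s) := tendsto_atTop_ciInf hant hbdd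
  have he : primeProd = ⨅ s, g s := hhp.tprod_eq
  rw [he]
  have p2 : Nat.Primes := ⟨2, Nat.prime_two⟩
  have p3 : Nat.Primes := ⟨3, Nat.prime_three⟩
  calc ⨅ s, g s ≤ g {⟨2, Nat.prime_two⟩, ⟨3, Nat.prime_three⟩} := ciInf_le hbdd _
    _ = f ⟨2, Nat.prime_two⟩ * f ⟨3, Nat.prime_three⟩ := by
        rw [hg]
        simp only
        exact Finset.prod_pair (fun h => absurd (congrArg Subtype.val h) (by norm_num))
    _ = 10/27 := by
        rw [hf]
        norm_num

/-! ### Numeric sums over primes -/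

lemma tail_sum (H : ℕ) : ∑ n ∈ Finset.Icc 11 H, 2/((n:ℝ))^2 ≤ 1/5 := by
  rcases le_or_gt H 10 with h | h
  · rw [Finset.Icc_eq_empty (by omega)]
    norm_num
  · have key : ∀ m : ℕ, 10 ≤ m → ∑ n ∈ Finset.Icc 11 m, 2/((n:ℝ))^2 ≤ 1/5 - 2/(m:ℝ) := by
      intro m hm
      induction m, hm using Nat.le_induction with
      | base =>
          rw [Finset.Icc_eq_empty (by omega)]
          norm_num
      | succ m hm ih =>
          rw [Finset.sum_Icc_succ_top (by omega)]
          have hm0 : (10:ℝ) ≤ (m:ℝ) := by exact_mod_cast hm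
          have h1 : 2/((m:ℝ)+1)^2 ≤ 2/(m:ℝ) - 2/((m:ℝ)+1) := by
            rw [div_sub_div _ _ (by nlinarith) (by nlinarith), div_le_div_iff₀ (by nlinarith) (by nlinarith)]
            ring_nf
            nlinarith
          have : ((m+1 : ℕ):ℝ) = (m:ℝ)+1 := by push_cast; ring
          rw [this]
          linarith
    have h10 : (10:ℝ) ≤ (H:ℝ) := by exact_mod_cast (by omega : 10 ≤ H)
    have := key H (by omega)
    have hH0 : (0:ℝ) < (H:ℝ) := by linarith
    have : 2/(H:ℝ) > 0 := by positivity
    linarith [key H (by omega)]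

lemma harmonic_le (H : ℕ) (hH : 1 ≤ H) :
    ∑ n ∈ Finset.Icc 1 H, 1/((n:ℝ)) ≤ 1 + Real.log H := by
  induction H, hH using Nat.le_induction with
  | base => simp
  | succ m hm ih =>
      rw [Finset.sum_Icc_succ_top (by omega)]
      have hm0 : (1:ℝ) ≤ (m:ℝ) := by exact_mod_cast hm
      have hm1 : (0:ℝ) < (m:ℝ)+1 := by linarith
      have hlog : Real.log ((m:ℝ)/((m:ℝ)+1)) ≤ (m:ℝ)/((m:ℝ)+1) - 1 :=
        Real.log_le_sub_one_of_pos (by positivity)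
      rw [Real.log_div (by linarith) (by linarith)] at hlog
      have he : (m:ℝ)/((m:ℝ)+1) - 1 = -(1/((m:ℝ)+1)) := by
        field_simp
        ring
      rw [he] at hlog
      have : ((m+1 : ℕ):ℝ) = (m:ℝ)+1 := by push_cast; ring
      rw [this]
      linarith

lemma prime_reciprocal_sum (H : ℕ) (hH : 1 ≤ H) :
    ∑ p ∈ Nat.primesBelow (H+1), 1/((p:ℝ)) ≤ 1 + Real.log H := by
  refine le_trans ?_ (harmonic_le H hH)
  apply Finset.sum_le_sum_of_subset_of_nonneg
  · intro p hp
    rw [Nat.mem_primesBelow] at hp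
    rw [Finset.mem_Icc]
    exact ⟨hp.2.one_lt.le.trans' (by omega), by omega⟩
  · intro n _ _
    positivity

lemma sum_Cp (H : ℕ) :
    ∑ p ∈ Nat.primesBelow (H+1), 2*(p:ℝ)^2/((p:ℝ)^2+(p:ℝ)+1)^2 ≤ 17/27 := by
  classical
  set Cf : ℕ → ℝ := fun p => 2*(p:ℝ)^2/((p:ℝ)^2+(p:ℝ)+1)^2 with hCf
  have hC0 : ∀ p : ℕ, 0 ≤ Cf p := fun p => by rw [hCf]; positivity
  rw [← Finset.sum_filter_add_sum_filter_not (Nat.primesBelow (H+1)) (fun p => p < 11)]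
  have h1 : ∑ p ∈ (Nat.primesBelow (H+1)).filter (fun p => p < 11), Cf p ≤
      ∑ p ∈ Nat.primesBelow 11, Cf p := by
    apply Finset.sum_le_sum_of_subset_of_nonneg
    · intro p hp
      simp only [Finset.mem_filter, Nat.mem_primesBelow] at hp ⊢
      exact ⟨hp.2, hp.1.2⟩
    · intro p _ _; exact hC0 p
  have h2 : Nat.primesBelow 11 = {2, 3, 5, 7} := by decide
  have h3 : ∑ p ∈ Nat.primesBelow 11, Cf p = 8/49 + 18/169 + 50/961 + 98/3249 := by
    rw [h2, hCf]
    norm_num [Finset.sum_insert, Finset.mem_insert]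
  have h4 : ∑ p ∈ (Nat.primesBelow (H+1)).filter (fun p => ¬ p < 11), Cf p ≤
      ∑ n ∈ Finset.Icc 11 H, 2/((n:ℝ))^2 := by
    calc ∑ p ∈ (Nat.primesBelow (H+1)).filter (fun p => ¬ p < 11), Cf p
        ≤ ∑ p ∈ (Nat.primesBelow (H+1)).filter (fun p => ¬ p < 11), 2/((p:ℝ))^2 := by
          apply Finset.sum_le_sum
          intro p hp
          simp only [Finset.mem_filter, Nat.mem_primesBelow] at hp
          have hp2 : (2:ℝ) ≤ (p:ℝ) := by exact_mod_cast hp.1.2.two_le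
          rw [hCf]
          rw [div_le_div_iff₀ (by positivity) (by positivity)]
          nlinarith
      _ ≤ ∑ n ∈ Finset.Icc 11 H, 2/((n:ℝ))^2 := by
          apply Finset.sum_le_sum_of_subset_of_nonneg
          · intro p hp
            simp only [Finset.mem_filter, Nat.mem_primesBelow] at hp
            rw [Finset.mem_Icc]
            omega
          · intro n _ _; positivity
  have h5 := tail_sum H
  have := h1.trans (le_of_eq h3)
  have final := add_le_add this (h4.trans h5)
  calc ∑ p ∈ (Nat.primesBelow (H+1)).filter (fun p => p < 11), Cf p +
        ∑ p ∈ (Nat.primesBelow (H+1)).filter (fun p => ¬ p < 11), Cf p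
      ≤ (8/49 + 18/169 + 50/961 + 98/3249) + 1/5 := final
    _ ≤ 17/27 := by norm_num

lemma Lbound {H : ℕ} (hH : 2 ≤ H) : ((Nat.log 2 H : ℝ) + 1) ≤ 3 * Real.log H := by
  have h2H : (2:ℝ) ≤ (H:ℝ) := by exact_mod_cast hH
  have hpow : (2:ℝ)^(Nat.log 2 H) ≤ (H:ℝ) := by
    exact_mod_cast Nat.pow_log_le_self 2 (by omega)
  have hlogpow : (Nat.log 2 H : ℝ) * Real.log 2 ≤ Real.log H := by
    rw [← Real.log_pow]
    exact Real.log_le_log (by positivity) hpow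
  have hl2 : (0.6931471803:ℝ) < Real.log 2 := Real.log_two_gt_d9
  have hmono : Real.log 2 ≤ Real.log H := Real.log_le_log (by norm_num) h2H
  have hL0 : (0:ℝ) ≤ (Nat.log 2 H : ℝ) := Nat.cast_nonneg _
  have hlogH0 : (0:ℝ) ≤ Real.log H := by linarith
  have hkey : (0:ℝ) ≤ (3*Real.log 2 - 2) * Real.log H :=
    mul_nonneg (by nlinarith) hlogH0
  nlinarith

lemma card_primesBelow (n : ℕ) : (Nat.primesBelow n).card ≤ n := by
  calc (Nat.primesBelow n).card ≤ (Finset.range n).card := by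
        apply Finset.card_le_card
        intro p hp
        exact Finset.mem_range.mpr (Nat.lt_of_mem_primesBelow hp)
    _ = n := Finset.card_range n

lemma grand (H : ℕ) (hH : 2 ≤ H) :
    (Dcount 2 H : ℝ) ≤ 8*(H:ℝ)^3 * (17/27)
      + 192*(H:ℝ)^2*(1 + Real.log H) + 20*(H:ℝ)*(3*Real.log H)^2*((H:ℝ)+1) := by
  have hstep1 : (Dcount 2 H : ℝ) ≤ ∑ p ∈ Nat.primesBelow (H+1), ((Fp p H).card : ℝ) := by
    exact_mod_cast Dcount_le H
  have hstep2 : ∑ p ∈ Nat.primesBelow (H+1), ((Fp p H).card : ℝ) ≤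
      ∑ p ∈ Nat.primesBelow (H+1), (8*(H:ℝ)^3 * (2*(p:ℝ)^2/((p:ℝ)^2+(p:ℝ)+1)^2)
        + 192*(H:ℝ)^2*(1/(p:ℝ)) + 20*(H:ℝ)*((Nat.log 2 H : ℝ)+1)^2) := by
    apply Finset.sum_le_sum
    intro p hp
    have hpp := Nat.prime_of_mem_primesBelow hp
    have := master hpp hH
    have e : 192*(H:ℝ)^2/(p:ℝ) = 192*(H:ℝ)^2*(1/(p:ℝ)) := by ring
    rw [e] at this
    exact this
  have hsplit : ∑ p ∈ Nat.primesBelow (H+1), (8*(H:ℝ)^3 * (2*(p:ℝ)^2/((p:ℝ)^2+(p:ℝ)+1)^2)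
        + 192*(H:ℝ)^2*(1/(p:ℝ)) + 20*(H:ℝ)*((Nat.log 2 H : ℝ)+1)^2)
      = 8*(H:ℝ)^3 * (∑ p ∈ Nat.primesBelow (H+1), 2*(p:ℝ)^2/((p:ℝ)^2+(p:ℝ)+1)^2)
        + 192*(H:ℝ)^2 * (∑ p ∈ Nat.primesBelow (H+1), 1/(p:ℝ))
        + 20*(H:ℝ)*((Nat.log 2 H : ℝ)+1)^2 * (Nat.primesBelow (H+1)).card := by
    rw [Finset.sum_add_distrib, Finset.sum_add_distrib, ← Finset.mul_sum, ← Finset.mul_sum,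
      Finset.sum_const, nsmul_eq_mul]
    ring
  have hCp := sum_Cp H
  have hrecip := prime_reciprocal_sum H (by omega)
  have hcard : ((Nat.primesBelow (H+1)).card : ℝ) ≤ (H:ℝ)+1 := by
    exact_mod_cast card_primesBelow (H+1)
  have hLb := Lbound hH
  have hL1 : (0:ℝ) ≤ (Nat.log 2 H : ℝ)+1 := by positivity
  have hlogH0 : (0:ℝ) ≤ Real.log H := by
    apply Real.log_nonneg
    exact_mod_cast (by omega : 1 ≤ H)
  have hsq : ((Nat.log 2 H : ℝ)+1)^2 ≤ (3*Real.log H)^2 := by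
    apply pow_le_pow_left₀ hL1 hLb
  have h1 : 8*(H:ℝ)^3 * (∑ p ∈ Nat.primesBelow (H+1), 2*(p:ℝ)^2/((p:ℝ)^2+(p:ℝ)+1)^2)
      ≤ 8*(H:ℝ)^3 * (17/27) := by
    apply mul_le_mul_of_nonneg_left hCp (by positivity)
  have h2 : 192*(H:ℝ)^2 * (∑ p ∈ Nat.primesBelow (H+1), 1/(p:ℝ))
      ≤ 192*(H:ℝ)^2*(1 + Real.log H) := by
    apply mul_le_mul_of_nonneg_left hrecip (by positivity)
  have h3 : 20*(H:ℝ)*((Nat.log 2 H : ℝ)+1)^2 * ((Nat.primesBelow (H+1)).card : ℝ)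
      ≤ 20*(H:ℝ)*(3*Real.log H)^2*((H:ℝ)+1) := by
    apply mul_le_mul (by nlinarith [sq_nonneg ((Nat.log 2 H : ℝ)+1)]) hcard (by positivity) (by positivity)
  calc (Dcount 2 H : ℝ) ≤ _ := hstep1
    _ ≤ _ := hstep2
    _ = _ := hsplit
    _ ≤ _ := by
        have := add_le_add (add_le_add h1 h2) h3
        linarith

end
end SievePf

theorem stmt_7 :
    ∃ C : ℝ, 0 < C ∧ ∀ H : ℕ, 2 ≤ H →
      (Dcount 2 H : ℝ) ≤ (2 * (H : ℝ)) ^ 3 * (1 - primeProd)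
        + C * (H : ℝ) ^ 2 * (Real.log H) ^ 2 := by
  refine ⟨3000, by norm_num, ?_⟩
  intro H hH
  have hgrand := SievePf.grand H hH
  have hpp := SievePf.primeProd_le
  have h2H : (2:ℝ) ≤ (H:ℝ) := by exact_mod_cast hH
  have hlogH : (0.6931471803:ℝ) < Real.log H :=
    lt_of_lt_of_le Real.log_two_gt_d9 (Real.log_le_log (by norm_num) h2H)
  set lg := Real.log H with hlg
  have hlg0 : (0:ℝ) < lg := by linarith
  have hmain : 8*(H:ℝ)^3 * (17/27) ≤ (2 * (H : ℝ)) ^ 3 * (1 - primeProd) := by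
    have he : (2 * (H : ℝ)) ^ 3 = 8*(H:ℝ)^3 := by ring
    rw [he]
    apply mul_le_mul_of_nonneg_left (by linarith) (by positivity)
  have herr : 192*(H:ℝ)^2*(1 + lg) + 20*(H:ℝ)*(3*lg)^2*((H:ℝ)+1)
      ≤ 3000 * (H:ℝ)^2 * lg^2 := by
    have hH1 : (H:ℝ)+1 ≤ 2*(H:ℝ) := by linarith
    have hA : 20*(H:ℝ)*(3*lg)^2*((H:ℝ)+1) ≤ 360*(H:ℝ)^2*lg^2 := by
      nlinarith [mul_nonneg (mul_nonneg (show (0:ℝ) ≤ 2*(H:ℝ) - ((H:ℝ)+1) by linarith)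
        (sq_nonneg lg)) (show (0:ℝ) ≤ (H:ℝ) by linarith)]
    have hsq48 : (0.48:ℝ) ≤ lg*lg := by nlinarith
    have hB : 192*(H:ℝ)^2*1 ≤ 400*(H:ℝ)^2*(lg*lg) := by nlinarith [sq_nonneg (H:ℝ)]
    have hC : 192*(H:ℝ)^2*lg ≤ 280*(H:ℝ)^2*(lg*lg) := by
      nlinarith [mul_nonneg (mul_nonneg (show (0:ℝ) ≤ 280*lg - 192 by nlinarith) hlg0.le) (sq_nonneg (H:ℝ))]
    nlinarith [sq_nonneg (H:ℝ)]
  linarith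
end

section
/- Let f = Σ_{i=0}^n A_i x^i ∈ ℤ[x] with A_0 A_n ≠ 0 and n ≥ 1. If the Newton diagram of f with respect to some prime p consists of precisely one segment containing no lattice points other than its endpoints, then f is irreducible over ℚ. -/
open Filter Polynomial Topology

lemma vp_eq_of_dvd_not_dvd {p : ℕ} [Fact p.Prime] {a : ℤ} {w : ℕ}
    (h1 : (p : ℤ) ^ w ∣ a) (h2 : ¬ (p : ℤ) ^ (w + 1) ∣ a) : padicValInt p a = w := by
  have ha : a ≠ 0 := by rintro rfl; exact h2 (dvd_zero _)
  have hle : w ≤ padicValInt p a := ((padicValInt_dvd_iff w a).mp h1).resolve_left ha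
  have hlt : ¬ (w + 1 ≤ padicValInt p a) := fun hc =>
    h2 ((padicValInt_dvd_iff (w + 1) a).mpr (Or.inr hc))
  omega

lemma exists_argmin_maxidx (S : Finset ℕ) (hS : S.Nonempty) (U : ℕ → ℤ) :
    ∃ j₀ ∈ S, (∀ j ∈ S, U j₀ ≤ U j) ∧ (∀ j ∈ S, j₀ < j → U j₀ < U j) := by
  classical
  set μ : ℤ := (S.image U).min' (hS.image U) with hμ
  have hμmin : ∀ j ∈ S, μ ≤ U j := fun j hj =>
    Finset.min'_le _ _ (Finset.mem_image_of_mem U hj)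
  have hT : (S.filter (fun j => U j = μ)).Nonempty := by
    obtain ⟨j, hj, hUj⟩ := Finset.mem_image.mp ((S.image U).min'_mem (hS.image U))
    exact ⟨j, Finset.mem_filter.mpr ⟨hj, hUj⟩⟩
  obtain ⟨hmem, hval⟩ := Finset.mem_filter.mp ((S.filter (fun j => U j = μ)).max'_mem hT)
  refine ⟨(S.filter (fun j => U j = μ)).max' hT, hmem, ?_, ?_⟩
  · intro j hj; rw [hval]; exact hμmin j hj
  · intro j hj hlt
    rw [hval]
    rcases lt_or_eq_of_le (hμmin j hj) with h' | h'
    · exact h'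
    · have : j ≤ (S.filter (fun j => U j = μ)).max' hT :=
        Finset.le_max' _ j (Finset.mem_filter.mpr ⟨hj, h'.symm⟩)
      omega

lemma int_div_of_mul_lt {n X Y : ℤ} (hn : 1 ≤ n) (h : n * Y + 1 ≤ n * X) : Y + 1 ≤ X := by
  by_contra hc
  push_neg at hc
  have : n * X ≤ n * Y := mul_le_mul_of_nonneg_left (by omega) (by omega)
  omega

lemma dumas_no_int_factor (n p : ℕ) (hp : p.Prime) (hn : 1 ≤ n) (A : ℕ → ℤ)
    (hd : DumasAt p n A) (g h : Polynomial ℤ)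
    (hf : (∑ i ∈ Finset.range (n + 1), C (A i) * X ^ i) = g * h)
    (hg : 1 ≤ g.natDegree) (hh : 1 ≤ h.natDegree) : False := by
  have : Fact p.Prime := ⟨hp⟩
  obtain ⟨h0, hn0, hmid, hnolat⟩ := hd
  simp only [vp] at hmid hnolat
  set f : Polynomial ℤ := ∑ i ∈ Finset.range (n + 1), C (A i) * X ^ i with hfdef
  have hfc : ∀ k, f.coeff k = if k ≤ n then A k else 0 := by
    intro k
    simp only [hfdef, finset_sum_coeff, coeff_C_mul, coeff_X_pow, mul_ite, mul_one, mul_zero,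
      Finset.sum_ite_eq, Finset.mem_range, Nat.lt_succ_iff]
  have hfn : f.coeff n = A n := by rw [hfc]; simp
  have hf0 : f.coeff 0 = A 0 := by rw [hfc]; simp
  have hfne : f ≠ 0 := fun hz => hn0 (by rw [← hfn, hz, coeff_zero])
  have hgne : g ≠ 0 := fun hz => hfne (by rw [hf, hz, zero_mul])
  have hhne : h ≠ 0 := fun hz => hfne (by rw [hf, hz, mul_zero])
  set r := g.natDegree with hr
  set m := h.natDegree with hm
  have hdegle : f.natDegree ≤ n := by
    apply natDegree_le_iff_coeff_eq_zero.mpr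
    intro k hk
    rw [hfc]; simp [Nat.not_le.mpr hk]
  have hdeg : f.natDegree = n :=
    le_antisymm hdegle (le_natDegree_of_ne_zero (by rw [hfn]; exact hn0))
  have hrm : r + m = n := by
    rw [hr, hm, ← natDegree_mul hgne hhne, ← hf, hdeg]
  have hB0C0 : g.coeff 0 * h.coeff 0 = A 0 := by
    rw [← hf0, hf, mul_coeff_zero]
  have hBrCm : g.coeff r * h.coeff m = A n := by
    rw [← hfn, hf, ← hrm, coeff_mul_degree_add_degree]; rfl
  have hg0 : g.coeff 0 ≠ 0 := fun hz => h0 (by rw [← hB0C0, hz, zero_mul])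
  have hh0 : h.coeff 0 ≠ 0 := fun hz => h0 (by rw [← hB0C0, hz, mul_zero])
  have hgr : g.coeff r ≠ 0 := fun hz => hn0 (by rw [← hBrCm, hz, zero_mul])
  have hhm : h.coeff m ≠ 0 := fun hz => hn0 (by rw [← hBrCm, hz, mul_zero])
  -- notation
  set v0 : ℤ := (padicValInt p (A 0) : ℤ) with hv0def
  set vn : ℤ := (padicValInt p (A n) : ℤ) with hvndef
  set s : ℤ := vn - v0 with hs
  have hSg : g.support.Nonempty := nonempty_support_iff.mpr hgne
  have hSh : h.support.Nonempty := nonempty_support_iff.mpr hhne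
  obtain ⟨j₀, hj₀S, hj₀min, hj₀str⟩ := exists_argmin_maxidx g.support hSg
    (fun j => (n : ℤ) * (padicValInt p (g.coeff j) : ℤ) - (j : ℤ) * s)
  obtain ⟨k₀, hk₀S, hk₀min, hk₀str⟩ := exists_argmin_maxidx h.support hSh
    (fun k => (n : ℤ) * (padicValInt p (h.coeff k) : ℤ) - (k : ℤ) * s)
  have hj₀r : j₀ ≤ r := le_natDegree_of_mem_supp _ hj₀S
  have hk₀m : k₀ ≤ m := le_natDegree_of_mem_supp _ hk₀S
  have hιn : j₀ + k₀ ≤ n := by omega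
  set w : ℕ := padicValInt p (g.coeff j₀) + padicValInt p (h.coeff k₀) with hwdef
  -- coefficient of f at j₀ + k₀
  have hcoeffι : f.coeff (j₀ + k₀) = g.coeff j₀ * h.coeff k₀ +
      ∑ x ∈ ((Finset.HasAntidiagonal.antidiagonal (j₀ + k₀) : Finset (ℕ × ℕ))).erase (j₀, k₀), g.coeff x.1 * h.coeff x.2 := by
    rw [hf, coeff_mul]
    exact (Finset.add_sum_erase (Finset.HasAntidiagonal.antidiagonal (j₀ + k₀))
      (fun x => g.coeff x.1 * h.coeff x.2)
      (Finset.HasAntidiagonal.mem_antidiagonal.mpr (rfl : (j₀, k₀).1 + (j₀, k₀).2 = j₀ + k₀))).symm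
  have hrestdvd : ∀ x ∈ ((Finset.HasAntidiagonal.antidiagonal (j₀ + k₀) : Finset (ℕ × ℕ))).erase (j₀, k₀),
      (p : ℤ) ^ (w + 1) ∣ g.coeff x.1 * h.coeff x.2 := by
    rintro ⟨a, b⟩ hx
    obtain ⟨hne, hab⟩ := Finset.mem_erase.mp hx
    have hab' : a + b = j₀ + k₀ := Finset.HasAntidiagonal.mem_antidiagonal.mp hab
    by_cases hga : g.coeff a = 0
    · rw [hga, zero_mul]; exact dvd_zero _
    by_cases hhb : h.coeff b = 0
    · rw [hhb, mul_zero]; exact dvd_zero _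
    have haSg : a ∈ g.support := mem_support_iff.mpr hga
    have hbSh : b ∈ h.support := mem_support_iff.mpr hhb
    have hane : a ≠ j₀ := by
      intro heq
      apply hne
      have hbe : b = k₀ := by omega
      rw [heq, hbe]
    have habs : (a : ℤ) * s + (b : ℤ) * s = (j₀ : ℤ) * s + (k₀ : ℤ) * s := by
      rw [← add_mul, ← add_mul]
      congr 1
      exact_mod_cast congrArg (fun t : ℕ => (t : ℤ)) hab'
    have hn' : (1 : ℤ) ≤ (n : ℤ) := by exact_mod_cast hn
    have key : w + 1 ≤ padicValInt p (g.coeff a) + padicValInt p (h.coeff b) := by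
      have hsum : (n : ℤ) * ((padicValInt p (g.coeff j₀) : ℤ) + (padicValInt p (h.coeff k₀) : ℤ))
          + 1 ≤ (n : ℤ) * ((padicValInt p (g.coeff a) : ℤ) + (padicValInt p (h.coeff b) : ℤ)) := by
        rcases lt_or_gt_of_ne hane with hlt | hgt
        · have hbk : k₀ < b := by omega
          have h1 := hk₀str b hbSh hbk
          have h2 := hj₀min a haSg
          have h3 := Int.add_one_le_iff.mpr h1
          linarith only [h2, h3, habs]
        · have h1 := hj₀str a haSg hgt
          have h2 := hk₀min b hbSh
          have h3 := Int.add_one_le_iff.mpr h1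
          linarith only [h2, h3, habs]
      have := int_div_of_mul_lt hn' hsum
      rw [hwdef]
      push_cast
      push_cast at this
      omega
    calc (p : ℤ) ^ (w + 1) ∣
        (p : ℤ) ^ (padicValInt p (g.coeff a) + padicValInt p (h.coeff b)) :=
          pow_dvd_pow _ key
      _ ∣ g.coeff a * h.coeff b := by
          rw [pow_add]
          exact mul_dvd_mul (padicValInt_dvd _) (padicValInt_dvd _)
  have hmainw : (p : ℤ) ^ w ∣ g.coeff j₀ * h.coeff k₀ := by
    rw [hwdef, pow_add]
    exact mul_dvd_mul (padicValInt_dvd _) (padicValInt_dvd _)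
  have hj₀ne : g.coeff j₀ ≠ 0 := mem_support_iff.mp hj₀S
  have hk₀ne : h.coeff k₀ ≠ 0 := mem_support_iff.mp hk₀S
  have hmainnot : ¬ (p : ℤ) ^ (w + 1) ∣ g.coeff j₀ * h.coeff k₀ := by
    intro hdvd
    rcases (padicValInt_dvd_iff (w + 1) _).mp hdvd with h' | h'
    · exact mul_ne_zero hj₀ne hk₀ne h'
    · rw [padicValInt.mul hj₀ne hk₀ne] at h'; omega
  have hrest : (p : ℤ) ^ (w + 1) ∣
      ∑ x ∈ ((Finset.HasAntidiagonal.antidiagonal (j₀ + k₀) : Finset (ℕ × ℕ))).erase (j₀, k₀),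
        g.coeff x.1 * h.coeff x.2 :=
    Finset.dvd_sum hrestdvd
  have hcw : (p : ℤ) ^ w ∣ f.coeff (j₀ + k₀) := by
    rw [hcoeffι]
    exact dvd_add hmainw ((pow_dvd_pow _ (Nat.le_succ w)).trans hrest)
  have hcnot : ¬ (p : ℤ) ^ (w + 1) ∣ f.coeff (j₀ + k₀) := by
    rw [hcoeffι]
    intro hdvd
    have hsub := dvd_sub hdvd hrest
    simp only [add_sub_cancel_right] at hsub
    exact hmainnot hsub
  have hcval : padicValInt p (f.coeff (j₀ + k₀)) = w := vp_eq_of_dvd_not_dvd hcw hcnot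
  have hcne : f.coeff (j₀ + k₀) ≠ 0 := fun hz => hcnot (by rw [hz]; exact dvd_zero _)
  have hAι : A (j₀ + k₀) = f.coeff (j₀ + k₀) := by rw [hfc]; simp [hιn]
  -- supports
  have hg0S : (0 : ℕ) ∈ g.support := mem_support_iff.mpr hg0
  have hh0S : (0 : ℕ) ∈ h.support := mem_support_iff.mpr hh0
  have hrS : r ∈ g.support := mem_support_iff.mpr hgr
  have hmS : m ∈ h.support := mem_support_iff.mpr hhm
  -- valuation identities at 0 and n
  have hvmul0 : (padicValInt p (g.coeff 0) : ℤ) + (padicValInt p (h.coeff 0) : ℤ) = v0 := by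
    rw [hv0def, ← hB0C0, padicValInt.mul hg0 hh0]; push_cast; ring
  have hvmuln : (padicValInt p (g.coeff r) : ℤ) + (padicValInt p (h.coeff m) : ℤ) = vn := by
    rw [hvndef, ← hBrCm, padicValInt.mul hgr hhm]; push_cast; ring
  have hub1 := hj₀min 0 hg0S
  have hub2 := hk₀min 0 hh0S
  have hsplitw : (n : ℤ) * (w : ℤ) = (n : ℤ) * (padicValInt p (g.coeff j₀) : ℤ)
      + (n : ℤ) * (padicValInt p (h.coeff k₀) : ℤ) := by
    rw [hwdef]; push_cast; ring
  have hsplit0 : (n : ℤ) * v0 = (n : ℤ) * (padicValInt p (g.coeff 0) : ℤ)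
      + (n : ℤ) * (padicValInt p (h.coeff 0) : ℤ) := by
    rw [← hvmul0]; ring
  have hsplitn : (n : ℤ) * vn = (n : ℤ) * (padicValInt p (g.coeff r) : ℤ)
      + (n : ℤ) * (padicValInt p (h.coeff m) : ℤ) := by
    rw [← hvmuln]; ring
  have hιs : ((j₀ + k₀ : ℕ) : ℤ) * s = (j₀ : ℤ) * s + (k₀ : ℤ) * s := by push_cast; ring
  have hcast0 : ((0 : ℕ) : ℤ) * s = 0 := by push_cast; ring
  -- case split
  have hcase : j₀ + k₀ = 0 ∨ j₀ + k₀ = n := by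
    by_contra hc
    push_neg at hc
    have hι1 : 0 < j₀ + k₀ := Nat.pos_of_ne_zero hc.1
    have hι2 : j₀ + k₀ < n := lt_of_le_of_ne hιn hc.2
    have hmi := hmid (j₀ + k₀) hι1 hι2 (hAι ▸ hcne)
    have hAval : (padicValInt p (A (j₀ + k₀)) : ℤ) = (w : ℤ) := by
      rw [hAι, hcval]
    rw [hAval] at hmi
    have hι1' : (0 : ℤ) < ((j₀ + k₀ : ℕ) : ℤ) := by exact_mod_cast hι1
    have hι2' : ((j₀ + k₀ : ℕ) : ℤ) < (n : ℤ) := by exact_mod_cast hι2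
    have hstrict : (n : ℤ) * (w : ℤ) ≠
        ((n : ℤ) - ((j₀ + k₀ : ℕ) : ℤ)) * v0 + ((j₀ + k₀ : ℕ) : ℤ) * vn := fun heq =>
      hnolat ⟨((j₀ + k₀ : ℕ) : ℤ), (w : ℤ), hι1', hι2', heq⟩
    have hline : ((n : ℤ) - ((j₀ + k₀ : ℕ) : ℤ)) * v0 + ((j₀ + k₀ : ℕ) : ℤ) * vn
        = (n : ℤ) * v0 + ((j₀ + k₀ : ℕ) : ℤ) * s := by rw [hs]; ring
    have hge : (n : ℤ) * v0 + ((j₀ + k₀ : ℕ) : ℤ) * s + 1 ≤ (n : ℤ) * (w : ℤ) := by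
      have h1 : (n : ℤ) * v0 + ((j₀ + k₀ : ℕ) : ℤ) * s ≤ (n : ℤ) * (w : ℤ) := by
        rw [← hline]; exact hmi
      have h2 : (n : ℤ) * v0 + ((j₀ + k₀ : ℕ) : ℤ) * s ≠ (n : ℤ) * (w : ℤ) := by
        rw [← hline]; exact fun he => hstrict he.symm
      omega
    linarith only [hge, hub1, hub2, hsplitw, hsplit0, hιs, hcast0, hj₀min j₀ hj₀S]
  rcases hcase with hι0 | hιn'
  · -- ι = 0
    have hj0 : j₀ = 0 := by omega
    have hk0 : k₀ = 0 := by omega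
    subst hj0; subst hk0
    simp only [Nat.add_zero] at hcval
    rw [hf0] at hcval
    have hw0 : (w : ℤ) = v0 := by rw [hv0def, ← hcval]
    have hstr1 := hj₀str r hrS (by omega)
    have hstr2 := hk₀str m hmS (by omega)
    have hrmz : (r : ℤ) + (m : ℤ) = (n : ℤ) := by exact_mod_cast hrm
    have hrms : (r : ℤ) * s + (m : ℤ) * s = (n : ℤ) * s := by linear_combination s * hrmz
    have hns : (n : ℤ) * s = (n : ℤ) * vn - (n : ℤ) * v0 := by rw [hs]; ring
    have hnw0 : (n : ℤ) * (w : ℤ) = (n : ℤ) * v0 := by rw [hw0]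
    linarith only [hstr1, hstr2, hrms, hns, hsplitw, hsplitn, hnw0, hcast0]
  · -- ι = n
    have hjr : j₀ = r := by omega
    have hkm : k₀ = m := by omega
    subst hjr; subst hkm
    rw [hιn', hfn] at hcval
    have hwn : (w : ℤ) = vn := by rw [hvndef, ← hcval]
    have hrmz : (r : ℤ) + (m : ℤ) = (n : ℤ) := by exact_mod_cast hrm
    have hrms : (r : ℤ) * s + (m : ℤ) * s = (n : ℤ) * s := by linear_combination s * hrmz
    have hns : (n : ℤ) * s = (n : ℤ) * vn - (n : ℤ) * v0 := by rw [hs]; ring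
    have hnwn : (n : ℤ) * (w : ℤ) = (n : ℤ) * vn := by rw [hwn]
    have heqg : (n : ℤ) * (padicValInt p (g.coeff r) : ℤ) - (r : ℤ) * s
        = (n : ℤ) * (padicValInt p (g.coeff 0) : ℤ) := by
      linarith only [hub1, hub2, hsplitw, hsplit0, hnwn, hrms, hns, hcast0]
    apply hnolat
    refine ⟨(r : ℤ), (padicValInt p (g.coeff r) : ℤ) - (padicValInt p (g.coeff 0) : ℤ) + v0,
      ?_, ?_, ?_⟩
    · exact_mod_cast hg
    · have hrn : r < n := by omega
      exact_mod_cast hrn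
    · rw [hs] at heqg
      linear_combination heqg

theorem stmt_17 (n : ℕ) (hn : 1 ≤ n) (A : ℕ → ℤ) (h0 : A 0 ≠ 0) (hn0 : A n ≠ 0)
    (p : ℕ) (hp : p.Prime) (hd : DumasAt p n A) :
    Irreducible (∑ i ∈ Finset.range (n + 1), Polynomial.C ((A i : ℚ)) * Polynomial.X ^ i) := by
  classical
  set fZ : Polynomial ℤ := ∑ i ∈ Finset.range (n + 1), C (A i) * X ^ i with hfZ
  have hmap : (∑ i ∈ Finset.range (n + 1), Polynomial.C ((A i : ℚ)) * Polynomial.X ^ i)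
      = fZ.map (Int.castRingHom ℚ) := by
    rw [hfZ, Polynomial.map_sum]
    refine Finset.sum_congr rfl fun i _ => ?_
    rw [Polynomial.map_mul, Polynomial.map_pow, map_C, map_X]
    rfl
  rw [hmap]
  -- basic facts about fZ
  have hfn : fZ.coeff n = A n := by
    rw [hfZ]
    simp only [finset_sum_coeff, coeff_C_mul, coeff_X_pow, mul_ite, mul_one, mul_zero,
      Finset.sum_ite_eq, Finset.mem_range, Nat.lt_succ_iff]
    simp
  have hfne : fZ ≠ 0 := fun hz => hn0 (by rw [← hfn, hz, coeff_zero])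
  have hdegle : fZ.natDegree ≤ n := by
    apply natDegree_le_iff_coeff_eq_zero.mpr
    intro k hk
    rw [hfZ]
    simp only [finset_sum_coeff, coeff_C_mul, coeff_X_pow, mul_ite, mul_one, mul_zero,
      Finset.sum_ite_eq, Finset.mem_range, Nat.lt_succ_iff]
    simp [Nat.not_le.mpr hk]
  have hdeg : fZ.natDegree = n :=
    le_antisymm hdegle (le_natDegree_of_ne_zero (by rw [hfn]; exact hn0))
  -- content decomposition
  have hc0 : fZ.content ≠ 0 := fun hz => hfne (content_eq_zero_iff.mp hz)
  have h1 : fZ = C fZ.content * fZ.primPart := fZ.eq_C_content_mul_primPart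
  have hprim : fZ.primPart.IsPrimitive := fZ.isPrimitive_primPart
  have hdegfp : fZ.primPart.natDegree = n := by rw [natDegree_primPart, hdeg]
  have hfpne : fZ.primPart ≠ 0 := fZ.primPart_ne_zero
  -- irreducibility of the primitive part over ℤ
  have hirr : Irreducible fZ.primPart := by
    constructor
    · intro hu
      have := natDegree_eq_zero_of_isUnit hu
      omega
    · intro a b hab
      by_contra hc
      push_neg at hc
      obtain ⟨ha, hb⟩ := hc
      have hane : a ≠ 0 := fun hz => hfpne (by rw [hab, hz, zero_mul])
      have hbne : b ≠ 0 := fun hz => hfpne (by rw [hab, hz, mul_zero])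
      have hdega : 1 ≤ a.natDegree := by
        rcases Nat.eq_zero_or_pos a.natDegree with hz | hpos
        · exfalso
          have haC : a = C (a.coeff 0) := eq_C_of_natDegree_eq_zero hz
          have : IsUnit (a.coeff 0) := hprim (a.coeff 0) ⟨b, by rw [← haC, hab]⟩
          exact ha (haC ▸ isUnit_C.mpr this)
        · exact hpos
      have hdegb : 1 ≤ b.natDegree := by
        rcases Nat.eq_zero_or_pos b.natDegree with hz | hpos
        · exfalso
          have hbC : b = C (b.coeff 0) := eq_C_of_natDegree_eq_zero hz
          have : IsUnit (b.coeff 0) := hprim (b.coeff 0) ⟨a, by rw [← hbC, hab, mul_comm]⟩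
          exact hb (hbC ▸ isUnit_C.mpr this)
        · exact hpos
      refine dumas_no_int_factor n p hp hn A hd (C fZ.content * a) b ?_ ?_ hdegb
      · rw [← hfZ]
        conv_lhs => rw [h1, hab]
        exact (mul_assoc _ _ _).symm
      · rw [natDegree_C_mul hc0]; exact hdega
  -- transfer to ℚ
  have hirrQ : Irreducible (fZ.primPart.map (Int.castRingHom ℚ)) :=
    (Polynomial.IsPrimitive.Int.irreducible_iff_irreducible_map_cast hprim).mp hirr
  have hmap2 : fZ.map (Int.castRingHom ℚ)
      = C ((fZ.content : ℚ)) * fZ.primPart.map (Int.castRingHom ℚ) := by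
    conv_lhs => rw [h1]
    rw [Polynomial.map_mul, map_C]
    rfl
  rw [hmap2]
  have hu : IsUnit (C ((fZ.content : ℚ))) :=
    isUnit_C.mpr (isUnit_iff_ne_zero.mpr (by exact_mod_cast hc0))
  exact (irreducible_isUnit_mul hu).mpr hirrQ
end
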